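/- arXiv:2410.07729 — 7 statements merged into one kernel-verified Lean document; each statement's English description precedes it below -/
import Mathlib

section
/- Let n ≥ 2 be an even integer, c > 0 a real number, and let k be an integer with 1 ≤ k ≤ n/2 - 1. Then for every x ∈ ℂ, ∫₀^∞ e^{-c^{n-1} w^n/n} ( e^{iπ/n} e^{-c w x e^{iπ/n}} - e^{-c w x a_k} cos(c w x b_k - (2k+1)π/n) ) dw = Σ_{j=0}^∞ (-x)^j / j! · ( e^{iπ(j+1)/n} - cos((j+1)(2k+1)π/n) ) · Γ((j+1)/n) · (nc)^{(j+1)/n - 1}, and the series converges for all x ∈ ℂ. -/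
open MeasureTheory Real Set

lemma gamma_step {t : ℝ} (ht0 : 0 ≤ t) (ht1 : t ≤ 1) {y : ℝ} (hy : 0 < y) :
    Real.Gamma (y + t) ≤ Real.Gamma y * y ^ t := by
  have h := Real.convexOn_log_Gamma.2 (Set.mem_Ioi.2 hy)
    (Set.mem_Ioi.2 (by linarith : (0:ℝ) < y + 1)) (by linarith : (0:ℝ) ≤ 1 - t) ht0 (by ring)
  have harg : (1 - t) • y + t • (y + 1) = y + t := by simp only [smul_eq_mul]; ring
  rw [harg] at h
  simp only [Function.comp_apply] at h
  have hΓy : 0 < Real.Gamma y := Real.Gamma_pos_of_pos hy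
  have hΓyt : 0 < Real.Gamma (y + t) := Real.Gamma_pos_of_pos (by linarith)
  have h1 : Real.log (Real.Gamma (y+1)) = Real.log y + Real.log (Real.Gamma y) := by
    rw [Real.Gamma_add_one hy.ne', Real.log_mul hy.ne' hΓy.ne']
  rw [h1] at h
  calc Real.Gamma (y+t) = Real.exp (Real.log (Real.Gamma (y+t))) := (Real.exp_log hΓyt).symm
    _ ≤ Real.exp ((1-t) * Real.log (Real.Gamma y) + t * (Real.log y + Real.log (Real.Gamma y))) :=
        Real.exp_le_exp.2 h
    _ = Real.Gamma y * y ^ t := by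
        rw [show (1-t) * Real.log (Real.Gamma y) + t * (Real.log y + Real.log (Real.Gamma y))
            = Real.log (Real.Gamma y) + Real.log y * t by ring,
          Real.exp_add, Real.exp_log hΓy, Real.rpow_def_of_pos hy]

lemma summable_aux (n : ℕ) (hn : 2 ≤ n) {r M : ℝ} (hr : 0 ≤ r) (hM : 0 < M) :
    Summable (fun j : ℕ => r ^ j / (Nat.factorial j) * Real.Gamma (((j:ℝ)+1)/n)
      * M ^ (((j:ℝ)+1)/(n:ℝ))) := by
  have hn0 : (0:ℝ) < n := by exact_mod_cast (by omega : 0 < n)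
  set m : ℝ := M ^ ((1:ℝ)/n) with hm
  have hmpos : 0 < m := Real.rpow_pos_of_pos hM _
  set A : ℝ := r * m with hA
  have hA0 : 0 ≤ A := mul_nonneg hr hmpos.le
  apply summable_of_ratio_norm_eventually_le (r := 1/2) (by norm_num)
  filter_upwards [Filter.eventually_ge_atTop ⌈(2*A)^2⌉₊] with j hj
  have hj1 : (0:ℝ) < (j:ℝ) + 1 := by positivity
  have hsq : (2*A)^2 ≤ (j:ℝ) + 1 := by
    have : ((2*A)^2 : ℝ) ≤ (j:ℝ) := le_trans (Nat.le_ceil _) (by exact_mod_cast hj)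
    linarith
  have hsqrt : 2*A ≤ Real.sqrt ((j:ℝ)+1) := Real.le_sqrt_of_sq_le hsq
  have hΓpos : 0 < Real.Gamma (((j:ℝ)+1)/n) := Real.Gamma_pos_of_pos (by positivity)
  have hΓpos2 : 0 < Real.Gamma (((j:ℝ)+1+1)/n) := Real.Gamma_pos_of_pos (by positivity)
  -- key gamma bound
  have hkey : Real.Gamma (((j:ℝ)+1+1)/n) ≤ Real.Gamma (((j:ℝ)+1)/n) * (((j:ℝ)+1)/n) ^ ((1:ℝ)/n) := by
    have := gamma_step (t := 1/(n:ℝ)) (by positivity)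
      (by rw [div_le_one hn0]; exact_mod_cast (by omega : 1 ≤ n)) (y := ((j:ℝ)+1)/n) (by positivity)
    rwa [← add_div] at this
  -- ratio bound :  r * (((j+1)/n)^(1/n) * m) ≤ 1/2 * (j+1)
  have hratio : r * ((((j:ℝ)+1)/n) ^ ((1:ℝ)/n) * m) ≤ 1/2 * ((j:ℝ)+1) := by
    have h1 : (((j:ℝ)+1)/n) ^ ((1:ℝ)/n) ≤ ((j:ℝ)+1) ^ ((1:ℝ)/n) :=
      Real.rpow_le_rpow (by positivity) (div_le_self (by positivity) (by exact_mod_cast (by omega : 1 ≤ n))) (by positivity)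
    have h2 : ((j:ℝ)+1) ^ ((1:ℝ)/n) ≤ ((j:ℝ)+1) ^ ((1:ℝ)/2) := by
      apply Real.rpow_le_rpow_of_exponent_le (by linarith [Nat.cast_nonneg (α := ℝ) j])
      have : (2:ℝ) ≤ n := by exact_mod_cast hn
      rw [div_le_div_iff₀ hn0 (by norm_num)]; linarith
    have h3 : ((j:ℝ)+1) ^ ((1:ℝ)/2) = Real.sqrt ((j:ℝ)+1) := (Real.sqrt_eq_rpow _).symm
    have h4 : A * Real.sqrt ((j:ℝ)+1) ≤ 1/2 * ((j:ℝ)+1) := by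
      have hs := Real.sq_sqrt hj1.le
      nlinarith [Real.sqrt_nonneg ((j:ℝ)+1)]
    calc r * ((((j:ℝ)+1)/n) ^ ((1:ℝ)/n) * m) ≤ r * (((j:ℝ)+1) ^ ((1:ℝ)/2) * m) := by
          apply mul_le_mul_of_nonneg_left _ hr
          exact mul_le_mul_of_nonneg_right (h1.trans h2) hmpos.le
      _ = A * Real.sqrt ((j:ℝ)+1) := by rw [h3]; ring
      _ ≤ 1/2 * ((j:ℝ)+1) := h4
  -- now the norm ratio bound
  have hgpos : ∀ i : ℕ, 0 ≤ r ^ i / (Nat.factorial i) * Real.Gamma (((i:ℝ)+1)/n) * M ^ (((i:ℝ)+1)/(n:ℝ)) := by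
    intro i
    have := Real.Gamma_pos_of_pos (show (0:ℝ) < ((i:ℝ)+1)/n by positivity)
    positivity
  rw [Real.norm_of_nonneg (hgpos _), Real.norm_of_nonneg (hgpos _)]
  have hfact : ((Nat.factorial (j+1)):ℝ) = ((j:ℝ)+1) * (Nat.factorial j) := by
    push_cast [Nat.factorial_succ]; ring
  push_cast
  have hMsp : M ^ (((j:ℝ)+1+1)/(n:ℝ)) = M ^ (((j:ℝ)+1)/(n:ℝ)) * m := by
    rw [hm, ← Real.rpow_add hM]; congr 1; field_simp
  calc r ^ (j+1) / (Nat.factorial (j+1) : ℝ) * Real.Gamma (((j:ℝ)+1+1)/n) * M ^ (((j:ℝ)+1+1)/(n:ℝ))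
      ≤ r ^ (j+1) / (Nat.factorial (j+1) : ℝ) *
        (Real.Gamma (((j:ℝ)+1)/n) * (((j:ℝ)+1)/n) ^ ((1:ℝ)/n)) * M ^ (((j:ℝ)+1+1)/(n:ℝ)) := by
        have h0 : (0:ℝ) ≤ r ^ (j+1) / (Nat.factorial (j+1) : ℝ) := by positivity
        have h1 : (0:ℝ) ≤ M ^ (((j:ℝ)+1+1)/(n:ℝ)) := by positivity
        exact mul_le_mul_of_nonneg_right (mul_le_mul_of_nonneg_left hkey h0) h1
    _ = (r ^ j / (Nat.factorial j : ℝ) * Real.Gamma (((j:ℝ)+1)/n) * M ^ (((j:ℝ)+1)/(n:ℝ)))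
        * ((r * ((((j:ℝ)+1)/n) ^ ((1:ℝ)/n) * m)) / (((j:ℝ)+1))) := by
        rw [hMsp, pow_succ, hfact]
        field_simp
    _ ≤ (r ^ j / (Nat.factorial j : ℝ) * Real.Gamma (((j:ℝ)+1)/n) * M ^ (((j:ℝ)+1)/(n:ℝ)))
        * (1/2) := by
        apply mul_le_mul_of_nonneg_left _ (hgpos j)
        rw [div_le_iff₀ hj1]
        calc r * ((((j:ℝ)+1)/n) ^ ((1:ℝ)/n) * m) ≤ 1/2*((j:ℝ)+1) := hratio
          _ = 1/2 * ((j:ℝ)+1) := by ring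
    _ = 1/2 * (r ^ j / (Nat.factorial j : ℝ) * Real.Gamma (((j:ℝ)+1)/n) * M ^ (((j:ℝ)+1)/(n:ℝ))) := by ring

lemma real_int (n : ℕ) (hn : 2 ≤ n) {c : ℝ} (hc : 0 < c) (j : ℕ) :
    ∫ w in Ioi (0:ℝ), w^j * Real.exp (-(c^(n-1)/n * w^n)) =
      Real.Gamma (((j:ℝ)+1)/n) * ((n:ℝ)*c) ^ (((j:ℝ)+1)/(n:ℝ) - 1) / c^j := by
  have hn0 : (0:ℝ) < n := by exact_mod_cast (by omega : 0 < n)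
  have hb : 0 < c^(n-1)/n := div_pos (pow_pos hc _) hn0
  rw [setIntegral_congr_fun measurableSet_Ioi
    (g := fun w : ℝ => w ^ (j:ℝ) * Real.exp (-(c^(n-1)/n) * w ^ (n:ℝ)))
    (fun w hw => by simp only [← Real.rpow_natCast, neg_mul]),
    integral_rpow_mul_exp_neg_mul_rpow hn0
      (by linarith [Nat.cast_nonneg (α := ℝ) j] : (-1:ℝ) < j) hb]
  have h : (c^(n-1)/n) ^ (-((j:ℝ)+1)/(n:ℝ)) * (1/(n:ℝ))
      = ((n:ℝ)*c) ^ (((j:ℝ)+1)/(n:ℝ) - 1) / c^j := by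
    have hpos1 : 0 < (c^(n-1)/n) ^ (-((j:ℝ)+1)/(n:ℝ)) * (1/(n:ℝ)) := by positivity
    have hpos2 : 0 < ((n:ℝ)*c) ^ (((j:ℝ)+1)/(n:ℝ) - 1) / c^j := by positivity
    have hlog : Real.log ((c^(n-1)/n) ^ (-((j:ℝ)+1)/(n:ℝ)) * (1/(n:ℝ)))
        = Real.log (((n:ℝ)*c) ^ (((j:ℝ)+1)/(n:ℝ) - 1) / c^j) := by
      rw [Real.log_mul (by positivity) (by positivity), Real.log_rpow hb,
        Real.log_div (by positivity) hn0.ne', Real.log_pow, one_div, Real.log_inv,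
        Real.log_div (by positivity) (by positivity), Real.log_rpow (by positivity),
        Real.log_mul hn0.ne' hc.ne', Real.log_pow]
      push_cast [Nat.cast_sub (by omega : 1 ≤ n)]
      field_simp
      ring
    have := congrArg Real.exp hlog
    rwa [Real.exp_log hpos1, Real.exp_log hpos2] at this
  rw [h]; ring

lemma cast_exp_arg (n : ℕ) (c : ℝ) (w : ℝ) :
    -(c:ℂ)^(n-1) * (w:ℂ)^n / n = ((-(c^(n-1)/n * w^n) : ℝ) : ℂ) := by
  push_cast
  ring

lemma integrable_core (n : ℕ) (hn : 2 ≤ n) {c : ℝ} (hc : 0 < c) (x C : ℂ) :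
    IntegrableOn (fun w : ℝ => Complex.exp (-(c:ℂ)^(n-1) * (w:ℂ)^n / n)
      * (C * Complex.exp (-(c:ℂ) * (w:ℂ) * x * C))) (Ioi 0) := by
  have hn0 : (0:ℝ) < n := by exact_mod_cast (by omega : 0 < n)
  set b : ℝ := c^(n-1)/n with hbdef
  have hb : 0 < b := div_pos (pow_pos hc _) hn0
  set a : ℝ := c * ‖x * C‖ with hadef
  have ha : 0 ≤ a := by positivity
  set W : ℝ := max 1 (2*a/b) with hW
  set K : ℝ := ‖C‖ * Real.exp (a * W) with hK
  have hdom : IntegrableOn (fun w : ℝ => K * Real.exp (-(b/2) * w ^ ((n:ℝ)))) (Ioi 0) := by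
    have h0 := integrableOn_rpow_mul_exp_neg_mul_rpow (s := 0) (p := (n:ℝ))
      (by norm_num) (by exact_mod_cast (by omega : 1 ≤ n)) (half_pos hb)
    have h1 : IntegrableOn (fun w : ℝ => Real.exp (-(b/2) * w ^ ((n:ℝ)))) (Ioi 0) :=
      h0.congr_fun (fun w hw => by simp only [Real.rpow_zero, one_mul]) measurableSet_Ioi
    exact h1.const_mul K
  apply Integrable.mono' hdom
  · apply Continuous.aestronglyMeasurable
    fun_prop
  · rw [ae_restrict_iff' measurableSet_Ioi]
    refine Filter.Eventually.of_forall (fun w hw => ?_)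
    rw [mem_Ioi] at hw
    have hkey : a * w ≤ (b/2) * w^n + a * W := by
      rcases le_total w W with h | h
      · have : a * w ≤ a * W := mul_le_mul_of_nonneg_left h ha
        nlinarith [pow_nonneg hw.le n, half_pos hb]
      · have hw1 : (1:ℝ) ≤ w := le_trans (le_max_left _ _) h
        have hab : 2*a/b ≤ w := le_trans (le_max_right _ _) h
        have hpow : w^2 ≤ w^n := pow_le_pow_right₀ hw1 hn
        have h2 : a * w ≤ (b/2) * w^2 := by
          rw [div_le_iff₀ hb] at hab
          nlinarith
        nlinarith [mul_nonneg ha (le_trans zero_le_one (le_max_left 1 (2*a/b)))]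
    have hnorm : ‖Complex.exp (-(c:ℂ)^(n-1) * (w:ℂ)^n / n)
        * (C * Complex.exp (-(c:ℂ) * (w:ℂ) * x * C))‖
        = Real.exp (-(b * w^n)) * (‖C‖ * Real.exp ((-(c:ℂ) * (w:ℂ) * x * C).re)) := by
      simp only [norm_mul, Complex.norm_exp, cast_exp_arg n c w,
        Complex.ofReal_re, hbdef]
    rw [hnorm]
    have hre : (-(c:ℂ) * (w:ℂ) * x * C).re ≤ a * w := by
      have : -(c:ℂ) * (w:ℂ) * x * C = ((-(c*w) : ℝ) : ℂ) * (x * C) := by push_cast; ring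
      rw [this, Complex.re_ofReal_mul]
      calc -(c*w) * (x*C).re ≤ |(-(c*w)) * (x*C).re| := le_abs_self _
        _ = (c*w) * |(x*C).re| := by rw [abs_mul, abs_neg, abs_of_nonneg (by positivity)]
        _ ≤ (c*w) * ‖x*C‖ := by
            apply mul_le_mul_of_nonneg_left (Complex.abs_re_le_norm _) (by positivity)
        _ = a * w := by rw [hadef]; ring
    calc Real.exp (-(b * w^n)) * (‖C‖ * Real.exp ((-(c:ℂ) * (w:ℂ) * x * C).re))
        ≤ Real.exp (-(b * w^n)) * (‖C‖ * Real.exp (a * w)) := by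
          apply mul_le_mul_of_nonneg_left _ (Real.exp_nonneg _)
          exact mul_le_mul_of_nonneg_left (Real.exp_le_exp.2 hre) (norm_nonneg _)
      _ ≤ K * Real.exp (-(b/2) * w ^ ((n:ℝ))) := by
          rw [Real.rpow_natCast, hK]
          rw [show ‖C‖ * Real.exp (a*W) * Real.exp (-(b/2) * w^n)
            = ‖C‖ * Real.exp (a*W + -(b/2) * w^n) from by rw [Real.exp_add]; ring]
          rw [show Real.exp (-(b*w^n)) * (‖C‖ * Real.exp (a*w))
            = ‖C‖ * Real.exp (-(b*w^n) + a*w) from by rw [Real.exp_add]; ring]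
          apply mul_le_mul_of_nonneg_left _ (norm_nonneg _)
          apply Real.exp_le_exp.2
          linarith

lemma core (n : ℕ) (hn : 2 ≤ n) {c : ℝ} (hc : 0 < c) (x C : ℂ) :
    HasSum (fun j : ℕ => (-x) ^ j / (Nat.factorial j) * C ^ (j+1) *
        ((Real.Gamma (((j:ℝ)+1)/n) : ℝ) : ℂ) * ((((n:ℝ)*c) ^ (((j:ℝ)+1)/(n:ℝ) - 1) : ℝ) : ℂ))
      (∫ w in Ioi (0:ℝ), Complex.exp (-(c:ℂ)^(n-1) * (w:ℂ)^n / n)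
        * (C * Complex.exp (-(c:ℂ) * (w:ℂ) * x * C))) := by
  have hn0 : (0:ℝ) < n := by exact_mod_cast (by omega : 0 < n)
  set b : ℝ := c^(n-1)/n with hbdef
  have hb : 0 < b := div_pos (pow_pos hc _) hn0
  set F : ℕ → ℝ → ℂ := fun j w => ((w^j * Real.exp (-(b * w^n)) : ℝ) : ℂ)
    * ((-(c:ℂ) * x * C)^j / (Nat.factorial j) * C) with hF
  have hIreal : ∀ j : ℕ, IntegrableOn (fun w : ℝ => w^j * Real.exp (-(b * w^n))) (Ioi 0) := by
    intro j
    have h0 := integrableOn_rpow_mul_exp_neg_mul_rpow (s := (j:ℝ)) (p := (n:ℝ))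
      (by linarith [Nat.cast_nonneg (α := ℝ) j]) (by exact_mod_cast (by omega : 1 ≤ n)) hb
    exact h0.congr_fun (fun w hw => by simp only [Real.rpow_natCast, neg_mul]) measurableSet_Ioi
  have hFint : ∀ j, Integrable (F j) (volume.restrict (Ioi 0)) := fun j =>
    ((hIreal j).ofReal (𝕜 := ℂ)).mul_const _
  have hKnorm : ∀ j : ℕ, ‖(-(c:ℂ) * x * C)^j / ((Nat.factorial j : ℕ) : ℂ) * C‖
      = (c * ‖x*C‖)^j / (Nat.factorial j) * ‖C‖ := by
    intro j
    rw [norm_mul, norm_div, norm_pow,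
      show -(c:ℂ)*x*C = ((c:ℝ):ℂ) * -(x*C) from by push_cast; ring,
      norm_mul, Complex.norm_real, norm_neg, Real.norm_of_nonneg hc.le]
    norm_num [Complex.norm_natCast]
  have hnormint : ∀ j : ℕ, ∫ w in Ioi 0, ‖F j w‖ =
      (Real.Gamma (((j:ℝ)+1)/n) * ((n:ℝ)*c) ^ (((j:ℝ)+1)/(n:ℝ) - 1) / c^j)
      * ((c * ‖x*C‖)^j / (Nat.factorial j) * ‖C‖) := by
    intro j
    rw [← real_int n hn hc j, ← integral_mul_const]
    refine setIntegral_congr_fun measurableSet_Ioi (fun w hw => ?_)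
    rw [mem_Ioi] at hw
    simp only [hF]
    rw [norm_mul, Complex.norm_real, Real.norm_of_nonneg (by positivity), hKnorm j]
  have hsummable : Summable (fun j => ∫ w in Ioi 0, ‖F j w‖) := by
    simp only [hnormint]
    have base := (summable_aux n hn (r := ‖x*C‖) (M := (n:ℝ)*c) (norm_nonneg _)
      (by positivity)).mul_left (‖C‖ / ((n:ℝ)*c))
    refine base.congr (fun j => ?_)
    rw [Real.rpow_sub (by positivity), Real.rpow_one, mul_pow]
    have hfac : ((Nat.factorial j : ℕ):ℝ) ≠ 0 := Nat.cast_ne_zero.2 (Nat.factorial_ne_zero j)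
    field_simp
  have key := hasSum_integral_of_summable_integral_norm hFint hsummable
  have hterm : (fun j => ∫ w in Ioi 0, F j w) = (fun j : ℕ => (-x) ^ j / (Nat.factorial j) * C ^ (j+1) *
      ((Real.Gamma (((j:ℝ)+1)/n) : ℝ) : ℂ) * ((((n:ℝ)*c) ^ (((j:ℝ)+1)/(n:ℝ) - 1) : ℝ) : ℂ)) := by
    funext j
    simp only [hF]
    have hcast : (∫ a in Ioi (0:ℝ), ((a^j * Real.exp (-(b*a^n)) : ℝ) : ℂ))
        = ((∫ a in Ioi (0:ℝ), a^j * Real.exp (-(b*a^n)) : ℝ) : ℂ) := integral_ofReal (𝕜 := ℂ)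
    rw [integral_mul_const, hcast, real_int n hn hc j]
    have hfac : ((Nat.factorial j : ℕ):ℂ) ≠ 0 := Nat.cast_ne_zero.2 (Nat.factorial_ne_zero j)
    have hcne : ((c:ℝ):ℂ) ≠ 0 := Complex.ofReal_ne_zero.2 hc.ne'
    rw [show -(c:ℂ)*x*C = ((c:ℝ):ℂ) * ((-x)*C) from by push_cast; ring, mul_pow]
    push_cast
    rw [pow_succ]
    field_simp
    ring
  have hint : (∫ w in Ioi 0, ∑' j, F j w) = ∫ w in Ioi (0:ℝ),
      Complex.exp (-(c:ℂ)^(n-1) * (w:ℂ)^n / n) * (C * Complex.exp (-(c:ℂ) * (w:ℂ) * x * C)) := by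
    refine integral_congr_ae (Filter.Eventually.of_forall (fun w => ?_))
    have hexp := NormedSpace.expSeries_div_hasSum_exp (-(c:ℂ) * (w:ℂ) * x * C)
    rw [← Complex.exp_eq_exp_ℂ] at hexp
    have h2 := hexp.mul_left (Complex.exp (-(c:ℂ)^(n-1) * (w:ℂ)^n / n) * C)
    calc ∑' j, F j w
        = ∑' j, Complex.exp (-(c:ℂ)^(n-1) * (w:ℂ)^n / n) * C
            * ((-(c:ℂ) * (w:ℂ) * x * C)^j / (Nat.factorial j)) := by
          refine tsum_congr (fun j => ?_)
          simp only [hF]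
          have hE : Complex.exp (-(c:ℂ)^(n-1) * (w:ℂ)^n / n)
              = ((Real.exp (-(b*w^n)) : ℝ) : ℂ) := by
            rw [cast_exp_arg n c w, Complex.ofReal_exp, hbdef]
          rw [hE, show -(c:ℂ)*(w:ℂ)*x*C = (-(c:ℂ)*x*C)*(w:ℂ) from by ring, mul_pow,
            Complex.ofReal_mul, Complex.ofReal_pow]
          ring
      _ = _ := by rw [h2.tsum_eq]; ring
  rw [hint] at key
  rw [hterm] at key
  exact key

theorem airy_type_power_series_y_plus_even
    (n : ℕ) (hn : 2 ≤ n) (hne : Even n) (c : ℝ) (hc : 0 < c)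
    (k : ℕ) (hk1 : 1 ≤ k) (hk2 : k ≤ n / 2 - 1) (x : ℂ) :
    HasSum
      (fun j : ℕ =>
        (-x) ^ j / (Nat.factorial j) *
          (Complex.exp (Complex.I * π * ((j : ℂ) + 1) / n)
            - (Real.cos (((j : ℝ) + 1) * ((2 * k + 1) * π / n)) : ℝ)) *
          (Real.Gamma (((j : ℝ) + 1) / n) : ℝ) *
          ((((n : ℝ) * c) ^ (((j : ℝ) + 1) / n - 1) : ℝ) : ℂ))
      (∫ w in Ioi (0 : ℝ),
        Complex.exp (-(c : ℂ) ^ (n - 1) * (w : ℂ) ^ n / n) *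
          (Complex.exp (Complex.I * π / n) *
              Complex.exp (-(c : ℂ) * w * x * Complex.exp (Complex.I * π / n))
            - Complex.exp (-(c : ℂ) * w * x * (Real.cos ((2 * k + 1) * π / n) : ℝ)) *
              Complex.cos ((c : ℂ) * w * x * (Real.sin ((2 * k + 1) * π / n) : ℝ)
                - ((2 * k + 1) * π / n : ℝ)))) := by
  set θ : ℝ := (2 * (k:ℝ) + 1) * π / n with hθ
  set A : ℂ := Complex.exp (Complex.I * ↑π / ↑n) with hAdef
  have hA := core n hn hc x A
  have h2 := core n hn hc x (Complex.exp (↑(-θ) * Complex.I))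
  have h3 := core n hn hc x (Complex.exp (↑θ * Complex.I))
  have hiA := integrable_core n hn hc x A
  have hi2 := integrable_core n hn hc x (Complex.exp (↑(-θ) * Complex.I))
  have hi3 := integrable_core n hn hc x (Complex.exp (↑θ * Complex.I))
  have combined := hA.sub ((h2.add h3).div_const 2)
  have hcos : ∀ z : ℂ, Complex.cos z = (Complex.exp (z * Complex.I)
      + Complex.exp (-z * Complex.I))/2 := fun z => rfl
  -- function identification
  have hfun : (fun j : ℕ =>
        (-x) ^ j / (Nat.factorial j) *
          (Complex.exp (Complex.I * π * ((j : ℂ) + 1) / n)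
            - (Real.cos (((j : ℝ) + 1) * ((2 * k + 1) * π / n)) : ℝ)) *
          (Real.Gamma (((j : ℝ) + 1) / n) : ℝ) *
          ((((n : ℝ) * c) ^ (((j : ℝ) + 1) / n - 1) : ℝ) : ℂ))
      = (fun j : ℕ =>
        ((-x) ^ j / (Nat.factorial j) * A ^ (j+1) *
          ((Real.Gamma (((j:ℝ)+1)/n) : ℝ) : ℂ) * ((((n:ℝ)*c) ^ (((j:ℝ)+1)/(n:ℝ) - 1) : ℝ) : ℂ))
        - ((((-x) ^ j / (Nat.factorial j) * (Complex.exp (↑(-θ) * Complex.I)) ^ (j+1) *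
          ((Real.Gamma (((j:ℝ)+1)/n) : ℝ) : ℂ) * ((((n:ℝ)*c) ^ (((j:ℝ)+1)/(n:ℝ) - 1) : ℝ) : ℂ))
          + (((-x) ^ j / (Nat.factorial j) * (Complex.exp (↑θ * Complex.I)) ^ (j+1) *
          ((Real.Gamma (((j:ℝ)+1)/n) : ℝ) : ℂ) * ((((n:ℝ)*c) ^ (((j:ℝ)+1)/(n:ℝ) - 1) : ℝ) : ℂ)))) / 2)) := by
    funext j
    have eA : A ^ (j+1) = Complex.exp (Complex.I * ↑π * ((j:ℂ)+1) / ↑n) := by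
      rw [hAdef, ← Complex.exp_nat_mul]; congr 1; push_cast; ring
    have e2 : (Complex.exp (↑(-θ) * Complex.I)) ^ (j+1)
        = Complex.exp (-↑(((j:ℝ)+1)*θ) * Complex.I) := by
      rw [← Complex.exp_nat_mul]; congr 1; push_cast; ring
    have e3 : (Complex.exp (↑θ * Complex.I)) ^ (j+1)
        = Complex.exp (↑(((j:ℝ)+1)*θ) * Complex.I) := by
      rw [← Complex.exp_nat_mul]; congr 1; push_cast; ring
    have ecos : ((Real.cos (((j:ℝ)+1)*θ) : ℝ) : ℂ)
        = (Complex.exp (↑(((j:ℝ)+1)*θ) * Complex.I)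
          + Complex.exp (-↑(((j:ℝ)+1)*θ) * Complex.I))/2 := by
      rw [Complex.ofReal_cos, hcos]
    rw [eA, e2, e3, ← hθ, ecos]
    ring
  -- integral identification
  have hint : (∫ w in Ioi (0 : ℝ),
        Complex.exp (-(c : ℂ) ^ (n - 1) * (w : ℂ) ^ n / n) *
          (Complex.exp (Complex.I * π / n) *
              Complex.exp (-(c : ℂ) * w * x * Complex.exp (Complex.I * π / n))
            - Complex.exp (-(c : ℂ) * w * x * (Real.cos ((2 * k + 1) * π / n) : ℝ)) *
              Complex.cos ((c : ℂ) * w * x * (Real.sin ((2 * k + 1) * π / n) : ℝ)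
                - ((2 * k + 1) * π / n : ℝ))))
      = (∫ w in Ioi (0:ℝ), Complex.exp (-(c:ℂ)^(n-1) * (w:ℂ)^n / n)
          * (A * Complex.exp (-(c:ℂ) * (w:ℂ) * x * A)))
        - ((∫ w in Ioi (0:ℝ), Complex.exp (-(c:ℂ)^(n-1) * (w:ℂ)^n / n)
          * (Complex.exp (↑(-θ) * Complex.I)
            * Complex.exp (-(c:ℂ) * (w:ℂ) * x * Complex.exp (↑(-θ) * Complex.I))))
          + (∫ w in Ioi (0:ℝ), Complex.exp (-(c:ℂ)^(n-1) * (w:ℂ)^n / n)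
          * (Complex.exp (↑θ * Complex.I)
            * Complex.exp (-(c:ℂ) * (w:ℂ) * x * Complex.exp (↑θ * Complex.I))))) / 2 := by
    have hpt : ∀ w : ℝ, Complex.exp (-(c : ℂ) ^ (n - 1) * (w : ℂ) ^ n / n) *
          (Complex.exp (Complex.I * π / n) *
              Complex.exp (-(c : ℂ) * w * x * Complex.exp (Complex.I * π / n))
            - Complex.exp (-(c : ℂ) * w * x * (Real.cos ((2 * k + 1) * π / n) : ℝ)) *
              Complex.cos ((c : ℂ) * w * x * (Real.sin ((2 * k + 1) * π / n) : ℝ)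
                - ((2 * k + 1) * π / n : ℝ)))
        = Complex.exp (-(c:ℂ)^(n-1) * (w:ℂ)^n / n) * (A * Complex.exp (-(c:ℂ) * (w:ℂ) * x * A))
          - (Complex.exp (-(c:ℂ)^(n-1) * (w:ℂ)^n / n)
              * (Complex.exp (↑(-θ) * Complex.I)
                * Complex.exp (-(c:ℂ) * (w:ℂ) * x * Complex.exp (↑(-θ) * Complex.I)))
            + Complex.exp (-(c:ℂ)^(n-1) * (w:ℂ)^n / n)
              * (Complex.exp (↑θ * Complex.I)
                * Complex.exp (-(c:ℂ) * (w:ℂ) * x * Complex.exp (↑θ * Complex.I)))) / 2 := by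
      intro w
      have hexpand : ∀ s : ℝ,
          Complex.exp (↑s * Complex.I) * Complex.exp (-(c:ℂ) * (w:ℂ) * x * Complex.exp (↑s * Complex.I))
          = Complex.exp (↑s * Complex.I
              - (c:ℂ) * (w:ℂ) * x * (↑(Real.cos s) + ↑(Real.sin s) * Complex.I)) := by
        intro s
        rw [← Complex.exp_add]
        congr 1
        rw [Complex.exp_mul_I, ← Complex.ofReal_cos, ← Complex.ofReal_sin]
        ring
      have hcc : Complex.exp (-(c : ℂ) * w * x * ((Real.cos θ : ℝ) : ℂ)) *
            Complex.cos ((c : ℂ) * w * x * ((Real.sin θ : ℝ) : ℂ) - (θ : ℂ))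
          = (Complex.exp (↑(-θ) * Complex.I)
              * Complex.exp (-(c:ℂ) * (w:ℂ) * x * Complex.exp (↑(-θ) * Complex.I))
            + Complex.exp (↑θ * Complex.I)
              * Complex.exp (-(c:ℂ) * (w:ℂ) * x * Complex.exp (↑θ * Complex.I))) / 2 := by
        rw [hexpand (-θ), hexpand θ, hcos]
        simp only [Real.cos_neg, Real.sin_neg, Complex.ofReal_neg]
        rw [← mul_div_assoc]
        congr 1
        rw [mul_add, ← Complex.exp_add, ← Complex.exp_add]
        congr 1
        · congr 1; ring
        · congr 1; ring
      rw [← hθ] at *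
      rw [hcc, hAdef]
      ring
    calc ∫ w in Ioi (0 : ℝ),
        Complex.exp (-(c : ℂ) ^ (n - 1) * (w : ℂ) ^ n / n) *
          (Complex.exp (Complex.I * π / n) *
              Complex.exp (-(c : ℂ) * w * x * Complex.exp (Complex.I * π / n))
            - Complex.exp (-(c : ℂ) * w * x * (Real.cos ((2 * k + 1) * π / n) : ℝ)) *
              Complex.cos ((c : ℂ) * w * x * (Real.sin ((2 * k + 1) * π / n) : ℝ)
                - ((2 * k + 1) * π / n : ℝ)))
        = ∫ w in Ioi (0:ℝ),
            (Complex.exp (-(c:ℂ)^(n-1) * (w:ℂ)^n / n) * (A * Complex.exp (-(c:ℂ) * (w:ℂ) * x * A))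
            - (Complex.exp (-(c:ℂ)^(n-1) * (w:ℂ)^n / n)
                * (Complex.exp (↑(-θ) * Complex.I)
                  * Complex.exp (-(c:ℂ) * (w:ℂ) * x * Complex.exp (↑(-θ) * Complex.I)))
              + Complex.exp (-(c:ℂ)^(n-1) * (w:ℂ)^n / n)
                * (Complex.exp (↑θ * Complex.I)
                  * Complex.exp (-(c:ℂ) * (w:ℂ) * x * Complex.exp (↑θ * Complex.I)))) / 2) :=
          integral_congr_ae (Filter.Eventually.of_forall (fun w => hpt w))
      _ = (∫ w in Ioi (0:ℝ), Complex.exp (-(c:ℂ)^(n-1) * (w:ℂ)^n / n)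
              * (A * Complex.exp (-(c:ℂ) * (w:ℂ) * x * A)))
          - ∫ w in Ioi (0:ℝ),
            (Complex.exp (-(c:ℂ)^(n-1) * (w:ℂ)^n / n)
                * (Complex.exp (↑(-θ) * Complex.I)
                  * Complex.exp (-(c:ℂ) * (w:ℂ) * x * Complex.exp (↑(-θ) * Complex.I)))
              + Complex.exp (-(c:ℂ)^(n-1) * (w:ℂ)^n / n)
                * (Complex.exp (↑θ * Complex.I)
                  * Complex.exp (-(c:ℂ) * (w:ℂ) * x * Complex.exp (↑θ * Complex.I)))) / 2 :=
          integral_sub hiA ((hi2.add hi3).div_const 2)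
      _ = (∫ w in Ioi (0:ℝ), Complex.exp (-(c:ℂ)^(n-1) * (w:ℂ)^n / n)
              * (A * Complex.exp (-(c:ℂ) * (w:ℂ) * x * A)))
          - (∫ w in Ioi (0:ℝ),
            (Complex.exp (-(c:ℂ)^(n-1) * (w:ℂ)^n / n)
                * (Complex.exp (↑(-θ) * Complex.I)
                  * Complex.exp (-(c:ℂ) * (w:ℂ) * x * Complex.exp (↑(-θ) * Complex.I)))
              + Complex.exp (-(c:ℂ)^(n-1) * (w:ℂ)^n / n)
                * (Complex.exp (↑θ * Complex.I)
                  * Complex.exp (-(c:ℂ) * (w:ℂ) * x * Complex.exp (↑θ * Complex.I))))) / 2 := by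
          rw [integral_div]
      _ = _ := by rw [integral_add hi2 hi3]
  rw [hfun, hint]
  exact combined
end

section
/- Let n ≥ 2 be an even integer, c > 0 a real number, and let k be an integer with 0 ≤ k ≤ n/2 - 1. Then for every x ∈ ℂ, -∫₀^∞ e^{-c^{n-1} w^n/n - c w x a_k} sin(c w x b_k - (2k+1)π/n) dw = Σ_{j=0}^∞ (-x)^j / j! · sin((j+1)(2k+1)π/n) · Γ((j+1)/n) · (nc)^{(j+1)/n - 1}, and the series converges for all x ∈ ℂ. -/
open MeasureTheory Real Set

private lemma sinDef (z : ℂ) : Complex.sin z =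
    (Complex.exp (-z * Complex.I) - Complex.exp (z * Complex.I)) * Complex.I / 2 := rfl

private lemma aux1 (θ : ℝ) (A z : ℂ) :
    HasSum (fun j : ℕ => Complex.exp A * ((-z) ^ j / (Nat.factorial j)) *
        ((Real.sin (((j : ℝ) + 1) * θ) : ℝ) : ℂ))
      (-(Complex.exp (A - z * (Real.cos θ : ℝ)) *
          Complex.sin (z * (Real.sin θ : ℝ) - (θ : ℝ)))) := by
  have hexp : ∀ y : ℂ, HasSum (fun j : ℕ => y ^ j / (Nat.factorial j)) (Complex.exp y) := by
    intro y
    rw [Complex.exp_eq_exp_ℂ]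
    exact NormedSpace.expSeries_div_hasSum_exp y
  set u := Complex.exp ((θ : ℂ) * Complex.I) with hu_def
  set v := Complex.exp (-(θ : ℂ) * Complex.I) with hv_def
  have hu : u = Complex.cos θ + Complex.sin θ * Complex.I := by rw [hu_def, Complex.exp_mul_I]
  have hv : v = Complex.cos θ - Complex.sin θ * Complex.I := by
    rw [hv_def, Complex.exp_mul_I, Complex.cos_neg, Complex.sin_neg]; ring
  have H := ((hexp (-z * v)).mul_left (Complex.exp A * v * Complex.I / 2)).sub
    ((hexp (-z * u)).mul_left (Complex.exp A * u * Complex.I / 2))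
  have hfun : (fun j : ℕ => Complex.exp A * v * Complex.I / 2 * ((-z * v) ^ j / (Nat.factorial j))
      - Complex.exp A * u * Complex.I / 2 * ((-z * u) ^ j / (Nat.factorial j)))
      = (fun j : ℕ => Complex.exp A * ((-z) ^ j / (Nat.factorial j)) *
        ((Real.sin (((j : ℝ) + 1) * θ) : ℝ) : ℂ)) := by
    funext j
    have h1 : ((Real.sin (((j : ℝ) + 1) * θ) : ℝ) : ℂ)
        = Complex.sin ((((j : ℕ) + 1 : ℕ) : ℂ) * (θ : ℂ)) := by
      rw [Complex.ofReal_sin]; push_cast; ring_nf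
    rw [h1, sinDef]
    have h2 : Complex.exp (-((((j : ℕ) + 1 : ℕ) : ℂ) * (θ : ℂ)) * Complex.I) = v ^ (j + 1) := by
      rw [hv_def, ← Complex.exp_nat_mul]; ring_nf
    have h3 : Complex.exp (((((j : ℕ) + 1 : ℕ) : ℂ) * (θ : ℂ)) * Complex.I) = u ^ (j + 1) := by
      rw [hu_def, ← Complex.exp_nat_mul]; ring_nf
    rw [h2, h3, mul_pow, mul_pow]
    ring
  have hval : Complex.exp A * v * Complex.I / 2 * Complex.exp (-z * v)
      - Complex.exp A * u * Complex.I / 2 * Complex.exp (-z * u)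
      = -(Complex.exp (A - z * (Real.cos θ : ℝ)) *
          Complex.sin (z * (Real.sin θ : ℝ) - (θ : ℝ))) := by
    rw [Complex.ofReal_cos, Complex.ofReal_sin, sinDef,
      show A - z * Complex.cos θ = A + -(z * Complex.cos θ) by ring, Complex.exp_add,
      show -(z * Complex.sin (θ:ℂ) - (θ:ℂ)) * Complex.I
        = -(z * Complex.sin (θ:ℂ) * Complex.I) + (θ:ℂ) * Complex.I by ring, Complex.exp_add,
      show (z * Complex.sin (θ:ℂ) - (θ:ℂ)) * Complex.I
        = z * Complex.sin (θ:ℂ) * Complex.I + -(θ:ℂ) * Complex.I by ring, Complex.exp_add,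
      show -z * v = -(z * Complex.cos (θ:ℂ)) + z * Complex.sin (θ:ℂ) * Complex.I by
        rw [hv]; ring, Complex.exp_add,
      show -z * u = -(z * Complex.cos (θ:ℂ)) + -(z * Complex.sin (θ:ℂ) * Complex.I) by
        rw [hu]; ring, Complex.exp_add]
    ring
  rw [← hval]
  exact hfun ▸ H

private lemma aux_alg (n j : ℕ) (hn : 2 ≤ n) (c : ℝ) (hc : 0 < c) :
    c ^ j * ((c ^ (n-1) / (n:ℝ)) ^ (-((j:ℝ) + 1) / (n:ℝ)) * (1 / (n:ℝ)))
      = ((n:ℝ) * c) ^ (((j:ℝ) + 1) / (n:ℝ) - 1) := by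
  have hn0 : (0:ℝ) < n := by exact_mod_cast (by omega : 0 < n)
  have hb : (0:ℝ) < c ^ (n-1) / n := by positivity
  have hL : (0:ℝ) < c ^ j * ((c ^ (n-1) / (n:ℝ)) ^ (-((j:ℝ) + 1) / (n:ℝ)) * (1 / (n:ℝ))) := by
    positivity
  have hR : (0:ℝ) < ((n:ℝ) * c) ^ (((j:ℝ) + 1) / (n:ℝ) - 1) := by positivity
  apply Real.log_injOn_pos (mem_Ioi.2 hL) (mem_Ioi.2 hR)
  rw [Real.log_mul (by positivity) (by positivity),
    Real.log_mul (by positivity) (by positivity),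
    Real.log_rpow hb, Real.log_rpow (by positivity),
    Real.log_div (by positivity) (by positivity), Real.log_pow, Real.log_pow,
    Real.log_mul (by positivity) (by positivity), one_div, Real.log_inv]
  have hcast : ((n - 1 : ℕ) : ℝ) = (n:ℝ) - 1 := by
    rw [Nat.cast_sub (by omega)]; norm_num
  rw [hcast]
  field_simp
  ring

private lemma aux3 (n j : ℕ) (hn : 2 ≤ n) (c : ℝ) (hc : 0 < c) :
    IntegrableOn (fun w : ℝ => (c * w) ^ j * Real.exp (-(c ^ (n-1) / n) * w ^ n)) (Ioi 0) := by
  have hb : (0:ℝ) < c ^ (n-1) / n := by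
    have hn0 : (0:ℝ) < n := by exact_mod_cast (by omega : 0 < n)
    positivity
  have h := integrableOn_rpow_mul_exp_neg_mul_rpow
    (s := (j:ℝ)) (p := (n:ℝ)) (b := c ^ (n-1) / n)
    (by linarith [Nat.cast_nonneg (α := ℝ) j]) (by exact_mod_cast (by omega : 1 ≤ n)) hb
  have h' : IntegrableOn (fun w : ℝ => c ^ j * (w ^ ((j:ℝ)) * Real.exp (-(c ^ (n-1) / n) * w ^ ((n:ℝ))))) (Ioi 0) := h.const_mul _
  refine h'.congr_fun (fun w hw => ?_) measurableSet_Ioi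
  simp only [Real.rpow_natCast]
  rw [mul_pow]; ring

private lemma aux2 (n j : ℕ) (hn : 2 ≤ n) (c : ℝ) (hc : 0 < c) :
    ∫ w in Ioi (0:ℝ), (c * w) ^ j * Real.exp (-(c ^ (n-1) / n) * w ^ n)
      = Real.Gamma (((j:ℝ) + 1) / n) * ((n:ℝ) * c) ^ (((j:ℝ) + 1) / (n:ℝ) - 1) := by
  have hn0 : (0:ℝ) < n := by exact_mod_cast (by omega : 0 < n)
  have hb : (0:ℝ) < c ^ (n-1) / n := by positivity
  have h := integral_rpow_mul_exp_neg_mul_rpow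
    (p := (n:ℝ)) (q := (j:ℝ)) (b := c ^ (n-1) / n) hn0 (by linarith [Nat.cast_nonneg (α := ℝ) j]) hb
  have h2 : ∫ w in Ioi (0:ℝ), (c * w) ^ j * Real.exp (-(c ^ (n-1) / n) * w ^ n)
      = c ^ j * ∫ w in Ioi (0:ℝ), w ^ ((j:ℝ)) * Real.exp (-(c ^ (n-1) / n) * w ^ ((n:ℝ))) := by
    rw [← integral_const_mul]
    refine setIntegral_congr_fun measurableSet_Ioi (fun w hw => ?_)
    simp only [Real.rpow_natCast]
    rw [mul_pow]; ring
  rw [h2, h]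
  have := aux_alg n j hn c hc
  linear_combination Real.Gamma (((j:ℝ) + 1) / n) * this

private lemma sum_pair (g : ℕ → ℝ) (N : ℕ) :
    ∑ j ∈ Finset.range (2 * N), g (j / 2) = 2 * ∑ m ∈ Finset.range N, g m := by
  induction N with
  | zero => simp
  | succ N ih =>
    rw [show 2 * (N + 1) = (2 * N + 1) + 1 by omega, Finset.sum_range_succ,
      Finset.sum_range_succ, ih, Finset.sum_range_succ,
      show (2 * N + 1) / 2 = N by omega, show (2 * N) / 2 = N by omega]
    ring

private lemma sumcomp (g : ℕ → ℝ) (hg : Summable g) (h0 : ∀ m, 0 ≤ g m) :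
    Summable (fun j : ℕ => g (j / 2)) := by
  apply summable_of_sum_range_le (c := 2 * ∑' m, g m) (fun j => h0 _)
  intro N
  calc ∑ j ∈ Finset.range N, g (j / 2)
      ≤ ∑ j ∈ Finset.range (2 * N), g (j / 2) :=
        Finset.sum_le_sum_of_subset_of_nonneg
          (Finset.range_subset_range.2 (by omega)) (fun j _ _ => h0 _)
    _ = 2 * ∑ m ∈ Finset.range N, g m := sum_pair g N
    _ ≤ 2 * ∑' m, g m := by
        have := hg.sum_le_tsum (Finset.range N) (fun i _ => h0 i)
        linarith

private lemma natbound (m : ℕ) : (m + 1) * (m + 2) ≤ 2 * 4 ^ m := by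
  induction m with
  | zero => norm_num
  | succ m ih =>
    have : (m + 2) * (m + 3) ≤ 4 * ((m + 1) * (m + 2)) := by nlinarith
    calc (m + 1 + 1) * (m + 1 + 2) = (m + 2) * (m + 3) := by ring
      _ ≤ 4 * ((m + 1) * (m + 2)) := this
      _ ≤ 4 * (2 * 4 ^ m) := by omega
      _ = 2 * 4 ^ (m + 1) := by ring

private lemma gbound (n j : ℕ) (hn : 2 ≤ n) :
    Real.Gamma (((j:ℝ) + 1) / n) ≤ (n:ℝ) * (Nat.factorial (j / 2 + 2)) := by
  have hn0 : (0:ℝ) < n := by exact_mod_cast (by omega : 0 < n)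
  set s : ℝ := ((j:ℝ) + 1) / n with hs_def
  have hs : 0 < s := by positivity
  have hΓ : 0 < Real.Gamma s := Real.Gamma_pos_of_pos hs
  have heq : Real.Gamma (s + 2) = (s + 1) * s * Real.Gamma s := by
    rw [show s + 2 = (s + 1) + 1 by ring, Real.Gamma_add_one (by positivity),
      Real.Gamma_add_one hs.ne']
    ring
  have hmono : Real.Gamma (s + 2) ≤ Real.Gamma (((j / 2 + 2 : ℕ) : ℝ) + 1) := by
    apply Real.Gamma_strictMonoOn_Ici.monotoneOn (by simp [mem_Ici]; linarith)
      (by simp [mem_Ici]; push_cast; linarith [Nat.cast_nonneg (α := ℝ) (j/2)])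
    have h1 : s ≤ ((j:ℝ) + 1) / 2 := by
      apply div_le_div_of_nonneg_left (by positivity) (by norm_num)
      exact_mod_cast hn
    have h2 : ((j:ℝ) + 1) / 2 ≤ ((j / 2 : ℕ) : ℝ) + 1 := by
      have : (j:ℝ) + 1 ≤ 2 * ((j / 2 : ℕ) : ℝ) + 2 := by exact_mod_cast (by omega : j + 1 ≤ 2 * (j/2) + 2)
      linarith
    push_cast
    linarith
  have hfact : Real.Gamma (((j / 2 + 2 : ℕ) : ℝ) + 1) = (Nat.factorial (j / 2 + 2) : ℝ) :=
    Real.Gamma_nat_eq_factorial _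
  have hns : 1 ≤ (n:ℝ) * s := by
    have : (n:ℝ) * s = (j:ℝ) + 1 := by rw [hs_def]; field_simp
    rw [this]; linarith [Nat.cast_nonneg (α := ℝ) j]
  have h6 : Real.Gamma s ≤ (n:ℝ) * Real.Gamma (s + 2) := by
    have h7 : Real.Gamma s * 1 ≤ Real.Gamma s * ((n:ℝ) * (s * (s + 1))) := by
      apply mul_le_mul_of_nonneg_left _ hΓ.le
      nlinarith
    calc Real.Gamma s = Real.Gamma s * 1 := by ring
      _ ≤ Real.Gamma s * ((n:ℝ) * (s * (s + 1))) := h7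
      _ = (n:ℝ) * ((s + 1) * s * Real.Gamma s) := by ring
      _ = (n:ℝ) * Real.Gamma (s + 2) := by rw [heq]
  calc Real.Gamma s ≤ (n:ℝ) * Real.Gamma (s + 2) := h6
    _ ≤ (n:ℝ) * (Nat.factorial (j / 2 + 2) : ℝ) := by
        apply mul_le_mul_of_nonneg_left _ hn0.le
        rw [← hfact]; exact hmono

private lemma aux4 (n : ℕ) (hn : 2 ≤ n) (r : ℝ) (hr : 0 ≤ r) :
    Summable (fun j : ℕ => r ^ j / (Nat.factorial j) * Real.Gamma (((j:ℝ) + 1) / n)) := by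
  have hn0 : (0:ℝ) < n := by exact_mod_cast (by omega : 0 < n)
  set R : ℝ := max r 1 with hR_def
  have hR1 : 1 ≤ R := le_max_right _ _
  have hRr : r ≤ R := le_max_left _ _
  have hR0 : 0 < R := lt_of_lt_of_le one_pos hR1
  set g : ℕ → ℝ := fun m => (4 * R ^ 2) ^ m / (Nat.factorial m) with hg_def
  have hg0 : ∀ m, 0 ≤ g m := fun m => by positivity
  have hgsum : Summable g := Real.summable_pow_div_factorial _
  have hcomp : Summable (fun j : ℕ => (2 * (n:ℝ) * R) * g (j / 2)) :=
    (sumcomp g hgsum hg0).mul_left _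
  apply Summable.of_nonneg_of_le _ _ hcomp
  · intro j
    have := Real.Gamma_pos_of_pos (show (0:ℝ) < ((j:ℝ)+1)/n by positivity)
    positivity
  · intro j
    set m := j / 2 with hm_def
    have hfacs : (Nat.factorial (m + 2)) * (Nat.factorial m) ≤ 2 * 4 ^ m * (Nat.factorial j) := by
      have h1 : Nat.factorial m * Nat.factorial m ≤ Nat.factorial j :=
        le_trans (Nat.le_of_dvd (Nat.factorial_pos _)
          (Nat.factorial_mul_factorial_dvd_factorial_add m m))
          (Nat.factorial_le (by omega : m + m ≤ j))
      calc Nat.factorial (m + 2) * Nat.factorial m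
          = ((m + 1) * (m + 2)) * (Nat.factorial m * Nat.factorial m) := by
            rw [Nat.factorial_succ, Nat.factorial_succ]; ring
        _ ≤ (2 * 4 ^ m) * Nat.factorial j :=
            Nat.mul_le_mul (natbound m) h1
    have hrj : r ^ j ≤ R * (R ^ 2) ^ m := by
      calc r ^ j ≤ R ^ j := pow_le_pow_left₀ hr hRr j
        _ ≤ R ^ (2 * m + 1) := pow_le_pow_right₀ hR1 (by omega)
        _ = R * (R ^ 2) ^ m := by rw [← pow_mul]; ring
    have hΓb := gbound n j hn
    have hj0 : (0:ℝ) < (Nat.factorial j : ℝ) := by exact_mod_cast Nat.factorial_pos j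
    have hm0 : (0:ℝ) < (Nat.factorial m : ℝ) := by exact_mod_cast Nat.factorial_pos m
    calc r ^ j / (Nat.factorial j) * Real.Gamma (((j:ℝ) + 1) / n)
        ≤ r ^ j / (Nat.factorial j) * ((n:ℝ) * (Nat.factorial (m + 2))) := by
          apply mul_le_mul_of_nonneg_left hΓb (by positivity)
      _ ≤ 2 * (n:ℝ) * R * ((4 * R ^ 2) ^ m / (Nat.factorial m)) := by
          rw [div_mul_eq_mul_div, ← mul_div_assoc, div_le_div_iff₀ hj0 hm0]
          have hcast : ((Nat.factorial (m + 2) : ℝ)) * (Nat.factorial m)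
              ≤ 2 * 4 ^ m * (Nat.factorial j) := by exact_mod_cast hfacs
          calc r ^ j * ((n:ℝ) * (Nat.factorial (m + 2))) * (Nat.factorial m)
              = (n:ℝ) * (r ^ j * ((Nat.factorial (m + 2) : ℝ) * (Nat.factorial m))) := by ring
            _ ≤ (n:ℝ) * ((R * (R ^ 2) ^ m) * (2 * 4 ^ m * (Nat.factorial j))) := by
                apply mul_le_mul_of_nonneg_left _ hn0.le
                apply mul_le_mul hrj hcast (by positivity) (by positivity)
            _ = 2 * (n:ℝ) * R * (4 * R ^ 2) ^ m * (Nat.factorial j) := by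
                rw [mul_pow]; ring
      _ = 2 * (n:ℝ) * R * g m := by rw [hg_def]

theorem airy_type_power_series_y_minus_even
    (n : ℕ) (hn : 2 ≤ n) (hne : Even n) (c : ℝ) (hc : 0 < c)
    (k : ℕ) (hk2 : k ≤ n / 2 - 1) (x : ℂ) :
    HasSum
      (fun j : ℕ =>
        (-x) ^ j / (Nat.factorial j) *
          (Real.sin (((j : ℝ) + 1) * ((2 * k + 1) * π / n)) : ℝ) *
          (Real.Gamma (((j : ℝ) + 1) / n) : ℝ) *
          ((((n : ℝ) * c) ^ (((j : ℝ) + 1) / n - 1) : ℝ) : ℂ))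
      (-∫ w in Ioi (0 : ℝ),
        Complex.exp (-(c : ℂ) ^ (n - 1) * (w : ℂ) ^ n / n
            - (c : ℂ) * w * x * (Real.cos ((2 * k + 1) * π / n) : ℝ)) *
          Complex.sin ((c : ℂ) * w * x * (Real.sin ((2 * k + 1) * π / n) : ℝ)
            - ((2 * k + 1) * π / n : ℝ))) := by
  have hn0 : (0:ℝ) < n := by exact_mod_cast (by omega : 0 < n)
  set θ : ℝ := (2 * (k:ℝ) + 1) * π / (n:ℝ) with hθ_def
  set F : ℕ → ℝ → ℂ := fun j w =>
    Complex.exp (-(c : ℂ) ^ (n - 1) * (w : ℂ) ^ n / n) *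
      ((-((c : ℂ) * w * x)) ^ j / (Nat.factorial j)) *
      ((Real.sin (((j : ℝ) + 1) * θ) : ℝ) : ℂ) with hF_def
  have hsum_pt : ∀ w : ℝ, HasSum (fun j => F j w)
      (-(Complex.exp (-(c : ℂ) ^ (n - 1) * (w : ℂ) ^ n / n
            - (c : ℂ) * w * x * (Real.cos θ : ℝ)) *
          Complex.sin ((c : ℂ) * w * x * (Real.sin θ : ℝ) - (θ : ℝ)))) := by
    intro w
    exact aux1 θ (-(c : ℂ) ^ (n - 1) * (w : ℂ) ^ n / n) ((c : ℂ) * w * x)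
  have hA : ∀ w : ℝ, (-(c : ℂ) ^ (n - 1) * (w : ℂ) ^ n / (n:ℂ))
      = (((-(c ^ (n-1) / (n:ℝ)) * w ^ n) : ℝ) : ℂ) := by
    intro w; push_cast; ring
  have hF_form : ∀ (j : ℕ) (w : ℝ), F j w =
      ((((c * w) ^ j * Real.exp (-(c ^ (n-1) / (n:ℝ)) * w ^ n)) : ℝ) : ℂ) *
        ((-x) ^ j / (Nat.factorial j) * ((Real.sin (((j : ℝ) + 1) * θ) : ℝ) : ℂ)) := by
    intro j w
    simp only [hF_def]
    rw [hA w, ← Complex.ofReal_exp]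
    push_cast
    ring
  have hInt : ∀ j : ℕ, Integrable (F j) (volume.restrict (Ioi 0)) := by
    intro j
    have base : IntegrableOn
        (fun w : ℝ => ((((c * w) ^ j * Real.exp (-(c ^ (n-1) / (n:ℝ)) * w ^ n)) : ℝ) : ℂ))
        (Ioi 0) := (aux3 n j hn c hc).ofReal
    have h2 : IntegrableOn (fun w : ℝ =>
        ((((c * w) ^ j * Real.exp (-(c ^ (n-1) / (n:ℝ)) * w ^ n)) : ℝ) : ℂ) *
        ((-x) ^ j / (Nat.factorial j) * ((Real.sin (((j : ℝ) + 1) * θ) : ℝ) : ℂ))) (Ioi 0) :=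
      base.mul_const _
    exact h2.congr_fun (fun w _ => (hF_form j w).symm) measurableSet_Ioi
  have hnorm : ∀ j : ℕ, ∀ w ∈ Ioi (0:ℝ), ‖F j w‖ ≤
      ‖x‖ ^ j / (Nat.factorial j) * ((c * w) ^ j * Real.exp (-(c ^ (n-1) / (n:ℝ)) * w ^ n)) := by
    intro j w hw
    have hw0 : (0:ℝ) < w := hw
    have hA0 : (0:ℝ) ≤ (c * w) ^ j * Real.exp (-(c ^ (n-1) / (n:ℝ)) * w ^ n) := by
      have : (0:ℝ) ≤ c * w := by positivity
      positivity
    calc ‖F j w‖ = ((c * w) ^ j * Real.exp (-(c ^ (n-1) / (n:ℝ)) * w ^ n)) *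
          ‖(-x) ^ j / ((Nat.factorial j : ℂ)) * ((Real.sin (((j : ℝ) + 1) * θ) : ℝ) : ℂ)‖ := by
          rw [hF_form j w, norm_mul, Complex.norm_real, Real.norm_eq_abs, abs_of_nonneg hA0]
      _ ≤ ((c * w) ^ j * Real.exp (-(c ^ (n-1) / (n:ℝ)) * w ^ n)) * (‖x‖ ^ j / (Nat.factorial j)) := by
          apply mul_le_mul_of_nonneg_left _ hA0
          rw [norm_mul, norm_div, norm_pow, norm_neg, Complex.norm_real, Complex.norm_natCast,
            Real.norm_eq_abs]
          calc ‖x‖ ^ j / (Nat.factorial j : ℝ) * |Real.sin (((j : ℝ) + 1) * θ)|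
              ≤ ‖x‖ ^ j / (Nat.factorial j : ℝ) * 1 := by
                apply mul_le_mul_of_nonneg_left (Real.abs_sin_le_one _) (by positivity)
            _ = ‖x‖ ^ j / (Nat.factorial j : ℝ) := mul_one _
      _ = ‖x‖ ^ j / (Nat.factorial j) * ((c * w) ^ j * Real.exp (-(c ^ (n-1) / (n:ℝ)) * w ^ n)) := by
          ring
  have hIntNorm : ∀ j : ℕ, (∫ w in Ioi (0:ℝ), ‖F j w‖) ≤
      ‖x‖ ^ j / (Nat.factorial j) *
        (Real.Gamma (((j:ℝ) + 1) / n) * ((n:ℝ) * c) ^ (((j:ℝ) + 1) / (n:ℝ) - 1)) := by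
    intro j
    have h := setIntegral_mono_on ((hInt j).norm)
      (((aux3 n j hn c hc)).const_mul (‖x‖ ^ j / (Nat.factorial j))) measurableSet_Ioi (hnorm j)
    rwa [integral_const_mul, aux2 n j hn c hc] at h
  have hnc : (0:ℝ) < (n:ℝ) * c := by positivity
  have hpow : ∀ j : ℕ, ((n:ℝ) * c) ^ (((j:ℝ) + 1) / (n:ℝ) - 1)
      = (((n:ℝ) * c) ^ ((1:ℝ)/(n:ℝ))) ^ j * ((n:ℝ) * c) ^ ((1:ℝ)/(n:ℝ) - 1) := by
    intro j
    rw [← Real.rpow_natCast (((n:ℝ) * c) ^ ((1:ℝ)/(n:ℝ))) j, ← Real.rpow_mul hnc.le,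
      ← Real.rpow_add hnc]
    congr 1
    field_simp
    ring
  have hbs : Summable (fun j : ℕ => ‖x‖ ^ j / (Nat.factorial j) *
      (Real.Gamma (((j:ℝ) + 1) / n) * ((n:ℝ) * c) ^ (((j:ℝ) + 1) / (n:ℝ) - 1))) := by
    have h := (aux4 n hn (‖x‖ * ((n:ℝ) * c) ^ ((1:ℝ)/(n:ℝ))) (by positivity)).mul_left
      (((n:ℝ) * c) ^ ((1:ℝ)/(n:ℝ) - 1))
    apply h.congr
    intro j
    rw [hpow j, mul_pow]
    ring
  have hSummable : Summable (fun j : ℕ => ∫ w in Ioi (0:ℝ), ‖F j w‖) :=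
    Summable.of_nonneg_of_le (fun j => integral_nonneg (fun w => norm_nonneg _)) hIntNorm hbs
  have key := hasSum_integral_of_summable_integral_norm hInt hSummable
  have hval : (∫ w in Ioi (0:ℝ), ∑' j, F j w) = -∫ w in Ioi (0 : ℝ),
      Complex.exp (-(c : ℂ) ^ (n - 1) * (w : ℂ) ^ n / n
          - (c : ℂ) * w * x * (Real.cos θ : ℝ)) *
        Complex.sin ((c : ℂ) * w * x * (Real.sin θ : ℝ) - (θ : ℝ)) := by
    rw [← integral_neg]
    exact integral_congr_ae (Filter.Eventually.of_forall fun w => (hsum_pt w).tsum_eq)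
  have hcoef : ∀ j : ℕ, (∫ w in Ioi (0:ℝ), F j w) =
      (-x) ^ j / (Nat.factorial j) *
        (Real.sin (((j : ℝ) + 1) * θ) : ℝ) *
        (Real.Gamma (((j : ℝ) + 1) / n) : ℝ) *
        ((((n : ℝ) * c) ^ (((j : ℝ) + 1) / n - 1) : ℝ) : ℂ) := by
    intro j
    calc (∫ w in Ioi (0:ℝ), F j w)
        = ∫ w in Ioi (0:ℝ),
            ((((c * w) ^ j * Real.exp (-(c ^ (n-1) / (n:ℝ)) * w ^ n)) : ℝ) : ℂ) *
            ((-x) ^ j / (Nat.factorial j) * ((Real.sin (((j : ℝ) + 1) * θ) : ℝ) : ℂ)) :=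
          integral_congr_ae (Filter.Eventually.of_forall fun w => hF_form j w)
      _ = (∫ w in Ioi (0:ℝ),
            ((((c * w) ^ j * Real.exp (-(c ^ (n-1) / (n:ℝ)) * w ^ n)) : ℝ) : ℂ)) *
            ((-x) ^ j / (Nat.factorial j) * ((Real.sin (((j : ℝ) + 1) * θ) : ℝ) : ℂ)) :=
          integral_mul_const _ _
      _ = (((∫ w in Ioi (0:ℝ), (c * w) ^ j * Real.exp (-(c ^ (n-1) / (n:ℝ)) * w ^ n)) : ℝ) : ℂ) *
            ((-x) ^ j / (Nat.factorial j) * ((Real.sin (((j : ℝ) + 1) * θ) : ℝ) : ℂ)) := by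
          have hcast : (∫ w in Ioi (0:ℝ),
              ((((c * w) ^ j * Real.exp (-(c ^ (n-1) / (n:ℝ)) * w ^ n)) : ℝ) : ℂ))
              = (((∫ w in Ioi (0:ℝ), (c * w) ^ j * Real.exp (-(c ^ (n-1) / (n:ℝ)) * w ^ n)) : ℝ) : ℂ) :=
            _root_.integral_ofReal
          rw [hcast]
      _ = _ := by
          rw [aux2 n j hn c hc]
          push_cast
          ring
  rw [funext hcoef, hval] at key
  exact key
end

section
/- Let n ≥ 2 be an integer and c a nonzero real number, with n odd or (n even and c < 0); let k be a natural number with 1 ≤ k < n/2, and set a_k⁺ = cos((4k+1)π/(2n)) and b_k⁺ = sin((4k+1)π/(2n)). Then for every real x with c·a_k⁺·x ≥ 0, -∫₀^∞ e^{-(-c)^{n-1} w^n/n - c w x a_k} sin(c w x b_k - 2kπ/n) dw = -∫₀^∞ e^{-c w x a_k⁺} sin( c w x b_k⁺ + (-c)^{n-1} w^n/n - (4k+1)π/(2n) ) dw. -/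
open MeasureTheory Real Set Filter Topology

noncomputable section AiryAux

def airyRe (A u α : ℝ) (n : ℕ) (w φ : ℝ) : ℝ :=
  -(A / n) * w ^ n * Real.cos (n * φ) - u * w * Real.cos (φ + α)

def airyIm (A u α : ℝ) (n : ℕ) (w φ : ℝ) : ℝ :=
  (A / n) * w ^ n * Real.sin (n * φ) + u * w * Real.sin (φ + α) - (α + φ)

def airyG (A u α : ℝ) (n : ℕ) (w φ : ℝ) : ℂ :=
  Complex.exp (↑(airyRe A u α n w φ) + ↑(airyIm A u α n w φ) * Complex.I)

def airyP (A u α : ℝ) (n : ℕ) (w φ : ℝ) : ℂ :=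
  airyG A u α n w φ *
    (↑(A * w ^ n * Real.sin (n * φ) + u * w * Real.sin (φ + α)) +
     ↑(A * w ^ n * Real.cos (n * φ) + u * w * Real.cos (φ + α) - 1) * Complex.I)

lemma hasDerivAt_airyG_phi (A u α : ℝ) {n : ℕ} (hn : n ≠ 0) (w φ : ℝ) :
    HasDerivAt (fun φ => airyG A u α n w φ) (airyP A u α n w φ) φ := by
  have hn' : (n : ℝ) ≠ 0 := Nat.cast_ne_zero.mpr hn
  have hRe : HasDerivAt (fun φ => airyRe A u α n w φ)
      (A * w ^ n * Real.sin (n * φ) + u * w * Real.sin (φ + α)) φ := by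
    have h1 : HasDerivAt (fun φ : ℝ => (n : ℝ) * φ) (n : ℝ) φ := by
      simpa using (hasDerivAt_id φ).const_mul (n : ℝ)
    have h2 : HasDerivAt (fun φ : ℝ => φ + α) 1 φ := by
      simpa using (hasDerivAt_id φ).add_const α
    have := ((h1.cos.const_mul (-(A / n) * w ^ n)).sub
      ((h2.cos.const_mul (u * w))))
    convert this using 1
    · rfl
    · rfl
    · rfl
    field_simp
    ring
  have hIm : HasDerivAt (fun φ => airyIm A u α n w φ)
      (A * w ^ n * Real.cos (n * φ) + u * w * Real.cos (φ + α) - 1) φ := by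
    have h1 : HasDerivAt (fun φ : ℝ => (n : ℝ) * φ) (n : ℝ) φ := by
      simpa using (hasDerivAt_id φ).const_mul (n : ℝ)
    have h2 : HasDerivAt (fun φ : ℝ => φ + α) 1 φ := by
      simpa using (hasDerivAt_id φ).add_const α
    have h3 : HasDerivAt (fun φ : ℝ => α + φ) 1 φ := by
      simpa using (hasDerivAt_id φ).const_add α
    have := ((h1.sin.const_mul ((A / n) * w ^ n)).add
      (h2.sin.const_mul (u * w))).sub h3
    convert this using 1
    · rfl
    · rfl
    · rfl
    field_simp
  have hz : HasDerivAt (fun φ => (↑(airyRe A u α n w φ) + ↑(airyIm A u α n w φ) * Complex.I : ℂ))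
      (↑(A * w ^ n * Real.sin (n * φ) + u * w * Real.sin (φ + α)) +
        ↑(A * w ^ n * Real.cos (n * φ) + u * w * Real.cos (φ + α) - 1) * Complex.I) φ :=
    hRe.ofReal_comp.add (hIm.ofReal_comp.mul_const Complex.I)
  exact hz.cexp

lemma hasDerivAt_mul_airyG_w (A u α : ℝ) {n : ℕ} (hn : n ≠ 0) (w φ : ℝ) :
    HasDerivAt (fun w : ℝ => (w : ℂ) * airyG A u α n w φ) (Complex.I * airyP A u α n w φ) w := by
  have hn' : (n : ℝ) ≠ 0 := Nat.cast_ne_zero.mpr hn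
  have hRe : HasDerivAt (fun w => airyRe A u α n w φ)
      (-(A * w ^ (n - 1) * Real.cos (n * φ)) - u * Real.cos (φ + α)) w := by
    have h1 : HasDerivAt (fun w : ℝ => w ^ n) (n * w ^ (n - 1)) w := by
      simpa using hasDerivAt_pow n w
    have := (((h1.const_mul (-(A / n) * Real.cos (n * φ)))).sub
      ((hasDerivAt_id w).const_mul (u * Real.cos (φ + α))))
    convert this using 1
    · rfl
    · rfl
    · funext w; simp [airyRe]; ring
    · field_simp
  have hIm : HasDerivAt (fun w => airyIm A u α n w φ)
      (A * w ^ (n - 1) * Real.sin (n * φ) + u * Real.sin (φ + α)) w := by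
    have h1 : HasDerivAt (fun w : ℝ => w ^ n) (n * w ^ (n - 1)) w := by
      simpa using hasDerivAt_pow n w
    have := ((h1.const_mul ((A / n) * Real.sin (n * φ))).add
      ((hasDerivAt_id w).const_mul (u * Real.sin (φ + α)))).sub_const (α + φ)
    convert this using 1
    · rfl
    · rfl
    · funext w; simp [airyIm]; ring
    · field_simp
  have hz : HasDerivAt (fun w => (↑(airyRe A u α n w φ) + ↑(airyIm A u α n w φ) * Complex.I : ℂ))
      (↑(-(A * w ^ (n - 1) * Real.cos (n * φ)) - u * Real.cos (φ + α)) +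
        ↑(A * w ^ (n - 1) * Real.sin (n * φ) + u * Real.sin (φ + α)) * Complex.I) w :=
    hRe.ofReal_comp.add (hIm.ofReal_comp.mul_const Complex.I)
  have hG : HasDerivAt (fun w => airyG A u α n w φ)
      (airyG A u α n w φ * (↑(-(A * w ^ (n - 1) * Real.cos (n * φ)) - u * Real.cos (φ + α)) +
        ↑(A * w ^ (n - 1) * Real.sin (n * φ) + u * Real.sin (φ + α)) * Complex.I)) w := hz.cexp
  have hw : HasDerivAt (fun w : ℝ => (w : ℂ)) 1 w := by
    simpa using (hasDerivAt_id w).ofReal_comp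
  have := hw.mul hG
  convert this using 1
  · rfl
  · rfl
  have hpow : w * w ^ (n - 1) = w ^ n := by
    rw [← pow_succ']
    congr 1
    omega
  have e1 : A * w ^ n * Real.sin (n * φ) + u * w * Real.sin (φ + α)
      = w * (A * w ^ (n - 1) * Real.sin (n * φ) + u * Real.sin (φ + α)) := by
    rw [← hpow]; ring
  have e2 : A * w ^ n * Real.cos (n * φ) + u * w * Real.cos (φ + α) - 1
      = -(1 + w * (-(A * w ^ (n - 1) * Real.cos (n * φ)) - u * Real.cos (φ + α))) := by
    rw [← hpow]; ring
  unfold airyP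
  rw [e1, e2]
  set s : ℝ := -(A * w ^ (n - 1) * Real.cos (n * φ)) - u * Real.cos (φ + α) with hs
  set t : ℝ := A * w ^ (n - 1) * Real.sin (n * φ) + u * Real.sin (φ + α) with ht
  set G : ℂ := airyG A u α n w φ with hG2
  push_cast
  linear_combination (-(G * (1 + (w : ℂ) * (s : ℂ)))) * Complex.I_sq

lemma airyG_im (A u α : ℝ) (n : ℕ) (w φ : ℝ) :
    (airyG A u α n w φ).im = Real.exp (airyRe A u α n w φ) * Real.sin (airyIm A u α n w φ) := by
  simp [airyG, Complex.exp_im]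

lemma norm_airyG (A u α : ℝ) (n : ℕ) (w φ : ℝ) :
    ‖airyG A u α n w φ‖ = Real.exp (airyRe A u α n w φ) := by
  simp [airyG, Complex.norm_exp]

lemma continuous_airyG_w (A u α : ℝ) (n : ℕ) (φ : ℝ) :
    Continuous fun w => airyG A u α n w φ := by
  unfold airyG airyRe airyIm; fun_prop

lemma continuous_airyG_phi (A u α : ℝ) (n : ℕ) (w : ℝ) :
    Continuous fun φ => airyG A u α n w φ := by
  unfold airyG airyRe airyIm; fun_prop

lemma continuous_airyP_w (A u α : ℝ) (n : ℕ) (φ : ℝ) :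
    Continuous fun w => airyP A u α n w φ := by
  unfold airyP airyG airyRe airyIm; fun_prop

lemma cos_le_cos_add_abs (a b : ℝ) : Real.cos a ≤ Real.cos b + |a - b| := by
  have h : Real.cos a - Real.cos b ≤ |a - b| := by
    rw [Real.cos_sub_cos]
    set s1 := Real.sin ((a + b) / 2)
    set s2 := Real.sin ((a - b) / 2)
    have h1 : |s1| ≤ 1 := Real.abs_sin_le_one _
    have h2 : |s2| ≤ |a - b| / 2 := by
      have := Real.abs_sin_le_abs (x := (a - b) / 2)
      rwa [abs_div, abs_two] at this
    have h3 : -(s1 * s2) ≤ |s1| * |s2| := by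
      rw [← abs_mul]; exact neg_le_abs _
    have h4 : |s1| * |s2| ≤ 1 * (|a - b| / 2) :=
      mul_le_mul h1 h2 (abs_nonneg _) zero_le_one
    nlinarith
  linarith

lemma norm_airyP_le (A u : ℝ) (hA : 0 ≤ A) (α : ℝ) (n : ℕ) {w R : ℝ}
    (hw0 : 0 ≤ w) (hwR : w ≤ R) (φ : ℝ) :
    ‖airyP A u α n w φ‖ ≤
      Real.exp (A / n * R ^ n + |u| * R) * (2 * A * R ^ n + 2 * |u| * R + 1) := by
  have hR0 : 0 ≤ R := le_trans hw0 hwR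
  have hwn : w ^ n ≤ R ^ n := pow_le_pow_left₀ hw0 hwR n
  have hwn0 : 0 ≤ w ^ n := pow_nonneg hw0 n
  have hAn : (0:ℝ) ≤ A / n := div_nonneg hA (Nat.cast_nonneg n)
  have habsu : 0 ≤ |u| := abs_nonneg u
  have huw1 : -(|u| * R) ≤ u * w := by nlinarith [neg_abs_le u]
  have huw2 : u * w ≤ |u| * R := by nlinarith [le_abs_self u]
  unfold airyP
  rw [norm_mul, norm_airyG]
  have key : ∀ t1 t2 : ℝ, |t1| ≤ 1 → |t2| ≤ 1 →
      |A / n * w ^ n * t1| ≤ A / n * R ^ n ∧ |u * w * t2| ≤ |u| * R := by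
    intro t1 t2 ht1 ht2
    constructor
    · rw [abs_mul, abs_mul, abs_of_nonneg hAn, abs_of_nonneg hwn0]
      calc A / n * w ^ n * |t1| ≤ A / n * w ^ n :=
            mul_le_of_le_one_right (mul_nonneg hAn hwn0) ht1
        _ ≤ A / n * R ^ n := mul_le_mul_of_nonneg_left hwn hAn
    · rw [abs_mul, abs_mul, abs_of_nonneg hw0]
      calc |u| * w * |t2| ≤ |u| * w :=
            mul_le_of_le_one_right (mul_nonneg habsu hw0) ht2
        _ ≤ |u| * R := mul_le_mul_of_nonneg_left hwR habsu
  have key2 : ∀ t1 t2 : ℝ, |t1| ≤ 1 → |t2| ≤ 1 →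
      |A * w ^ n * t1| ≤ A * R ^ n ∧ |u * w * t2| ≤ |u| * R := by
    intro t1 t2 ht1 ht2
    constructor
    · rw [abs_mul, abs_mul, abs_of_nonneg hA, abs_of_nonneg hwn0]
      calc A * w ^ n * |t1| ≤ A * w ^ n :=
            mul_le_of_le_one_right (mul_nonneg hA hwn0) ht1
        _ ≤ A * R ^ n := mul_le_mul_of_nonneg_left hwn hA
    · rw [abs_mul, abs_mul, abs_of_nonneg hw0]
      calc |u| * w * |t2| ≤ |u| * w :=
            mul_le_of_le_one_right (mul_nonneg habsu hw0) ht2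
        _ ≤ |u| * R := mul_le_mul_of_nonneg_left hwR habsu
  have hb1 : airyRe A u α n w φ ≤ A / n * R ^ n + |u| * R := by
    unfold airyRe
    obtain ⟨q1, q2⟩ := key (Real.cos ((n:ℝ) * φ)) (Real.cos (φ + α))
      (Real.abs_cos_le_one _) (Real.abs_cos_le_one _)
    have q5 : -(A / ↑n * w ^ n * Real.cos ((n:ℝ) * φ)) ≤ |A / ↑n * w ^ n * Real.cos ((n:ℝ) * φ)| :=
      neg_le_abs _
    have q6 : -(u * w * Real.cos (φ + α)) ≤ |u * w * Real.cos (φ + α)| := neg_le_abs _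
    have : -(A / ↑n) * w ^ n * Real.cos ((n:ℝ) * φ) - u * w * Real.cos (φ + α)
        = -(A / ↑n * w ^ n * Real.cos ((n:ℝ) * φ)) + -(u * w * Real.cos (φ + α)) := by ring
    rw [this]
    linarith
  have hb2 : ‖((A * w ^ n * Real.sin ((n:ℝ) * φ) + u * w * Real.sin (φ + α) : ℝ) : ℂ) +
      ((A * w ^ n * Real.cos ((n:ℝ) * φ) + u * w * Real.cos (φ + α) - 1 : ℝ) : ℂ) * Complex.I‖
      ≤ 2 * A * R ^ n + 2 * |u| * R + 1 := by
    refine (norm_add_le _ _).trans ?_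
    rw [norm_mul, Complex.norm_I, mul_one, Complex.norm_real, Complex.norm_real]
    have e1 : |A * w ^ n * Real.sin ((n:ℝ) * φ) + u * w * Real.sin (φ + α)|
        ≤ A * R ^ n + |u| * R := by
      obtain ⟨q1, q2⟩ := key2 (Real.sin ((n:ℝ) * φ)) (Real.sin (φ + α))
        (Real.abs_sin_le_one _) (Real.abs_sin_le_one _)
      refine (abs_add_le _ _).trans ?_
      linarith
    have e2 : |A * w ^ n * Real.cos ((n:ℝ) * φ) + u * w * Real.cos (φ + α) - 1|
        ≤ A * R ^ n + |u| * R + 1 := by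
      have h3 : |A * w ^ n * Real.cos ((n:ℝ) * φ) + u * w * Real.cos (φ + α)|
          ≤ A * R ^ n + |u| * R := by
        obtain ⟨q1, q2⟩ := key2 (Real.cos ((n:ℝ) * φ)) (Real.cos (φ + α))
          (Real.abs_cos_le_one _) (Real.abs_cos_le_one _)
        refine (abs_add_le _ _).trans ?_
        linarith
      calc |A * w ^ n * Real.cos ((n:ℝ) * φ) + u * w * Real.cos (φ + α) - 1|
          ≤ |A * w ^ n * Real.cos ((n:ℝ) * φ) + u * w * Real.cos (φ + α)| + |(1:ℝ)| :=
            abs_sub _ _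
        _ ≤ A * R ^ n + |u| * R + 1 := by rw [abs_one]; linarith
    simp only [Real.norm_eq_abs]
    linarith
  exact mul_le_mul (Real.exp_le_exp.2 hb1) hb2 (norm_nonneg _) (Real.exp_pos _).le

end AiryAux

set_option maxHeartbeats 2000000 in
theorem airy_type_alternative_integral_form
    (n : ℕ) (hn : 2 ≤ n) (c : ℝ) (hc : c ≠ 0)
    (hcase : Odd n ∨ (Even n ∧ c < 0))
    (k : ℕ) (hk1 : 1 ≤ k) (hk2 : 2 * k < n)
    (x : ℝ) (hx : 0 ≤ c * Real.cos ((4 * k + 1) * π / (2 * n)) * x) :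
    Tendsto
      (fun R : ℝ =>
        -∫ w in Ioc (0 : ℝ) R,
          Real.exp (-(c * w * x * Real.cos ((4 * k + 1) * π / (2 * n)))) *
            Real.sin (c * w * x * Real.sin ((4 * k + 1) * π / (2 * n))
              + (-c) ^ (n - 1) * w ^ n / n - (4 * k + 1) * π / (2 * n)))
      atTop
      (𝓝 (-∫ w in Ioi (0 : ℝ),
        Real.exp (-(-c) ^ (n - 1) * w ^ n / n - c * w * x * Real.cos (2 * k * π / n)) *
          Real.sin (c * w * x * Real.sin (2 * k * π / n) - 2 * k * π / n))) := by
  have hn0 : n ≠ 0 := by omega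
  have hn3 : 3 ≤ n := by omega
  have hnR : (0:ℝ) < n := by exact_mod_cast Nat.pos_of_ne_zero hn0
  have hnR' : (n:ℝ) ≠ 0 := ne_of_gt hnR
  have hA : 0 < (-c) ^ (n - 1) := by
    rcases hcase with h | ⟨h, hclt⟩
    · exact Even.pow_pos (Nat.Odd.sub_odd h odd_one) (neg_ne_zero.mpr hc)
    · exact pow_pos (by linarith) _
  set A := (-c) ^ (n - 1) with hAdef
  set u := c * x with hudef
  set α := 2 * (k:ℝ) * π / (n:ℝ) with hαdef
  set φ0 := π / (2 * (n:ℝ)) with hφ0def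
  have hθeq : (4 * (k:ℝ) + 1) * π / (2 * (n:ℝ)) = φ0 + α := by
    rw [hφ0def, hαdef]; field_simp; ring
  have hφ0pos : 0 < φ0 := by rw [hφ0def]; positivity
  have hαpos : 0 < α := by
    rw [hαdef]
    have : (0:ℝ) < (k:ℝ) := by exact_mod_cast hk1
    positivity
  have hθπ : φ0 + α ≤ π := by
    rw [hφ0def, hαdef]
    rw [div_add_div _ _ (by positivity) hnR']
    rw [div_le_iff₀ (by positivity)]
    have hkn : (2*(k:ℝ) + 1) ≤ (n:ℝ) := by exact_mod_cast (by omega : 2*k+1 ≤ n)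
    nlinarith [Real.pi_pos, mul_le_mul_of_nonneg_left hkn hnR.le]
  have hnφ0 : (n:ℝ) * φ0 = π / 2 := by rw [hφ0def]; field_simp
  have hu0 : 0 ≤ u * Real.cos (φ0 + α) := by
    rw [hθeq] at hx
    have h : u * Real.cos (φ0 + α) = c * Real.cos (φ0 + α) * x := by rw [hudef]; ring
    rw [h]; exact hx
  -- pointwise identification of the integrands
  have hEqRHS : (fun w => Real.exp (-A * w ^ n / n - c * w * x * Real.cos α) *
      Real.sin (c * w * x * Real.sin α - α)) = fun w => (airyG A u α n w 0).im := by
    funext w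
    rw [airyG_im]
    have h1 : airyRe A u α n w 0 = -A * w ^ n / n - c * w * x * Real.cos α := by
      rw [airyRe, hudef]
      rw [mul_zero, Real.cos_zero, zero_add]
      ring
    have h2 : airyIm A u α n w 0 = c * w * x * Real.sin α - α := by
      rw [airyIm, hudef]
      rw [mul_zero, Real.sin_zero, zero_add]
      ring
    rw [h1, h2]
  have hEqLHS : (fun w => Real.exp (-(c * w * x * Real.cos ((4 * (k:ℝ) + 1) * π / (2 * (n:ℝ))))) *
      Real.sin (c * w * x * Real.sin ((4 * (k:ℝ) + 1) * π / (2 * (n:ℝ)))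
        + A * w ^ n / n - (4 * (k:ℝ) + 1) * π / (2 * (n:ℝ))))
      = fun w => (airyG A u α n w φ0).im := by
    funext w
    rw [airyG_im, hθeq]
    have h1 : airyRe A u α n w φ0 = -(c * w * x * Real.cos (φ0 + α)) := by
      rw [airyRe, hnφ0, Real.cos_pi_div_two, hudef]; ring
    have h2 : airyIm A u α n w φ0 = c * w * x * Real.sin (φ0 + α) + A * w ^ n / n - (φ0 + α) := by
      rw [airyIm, hnφ0, Real.sin_pi_div_two, hudef]
      field_simp
      ring
    rw [h1, h2]
  -- integrability on (0, ∞)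
  have hIntOn : IntegrableOn (fun w => (airyG A u α n w 0).im) (Ioi (0:ℝ)) := by
    refine integrable_of_isBigO_exp_neg (f := fun w => (airyG A u α n w 0).im)
      (a := 0) (b := 1) one_pos ?_ ?_
    · exact (Complex.continuous_im.comp (continuous_airyG_w A u α n 0)).continuousOn
    · refine Asymptotics.IsBigO.of_bound 1 ?_
      filter_upwards [eventually_ge_atTop (max 1 ((n:ℝ) * (1 + |u|) / A))] with w hw
      have hw1 : (1:ℝ) ≤ w := le_trans (le_max_left _ _) hw
      have hwM : (n:ℝ) * (1 + |u|) / A ≤ w := le_trans (le_max_right _ _) hw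
      have hw0 : 0 ≤ w := by linarith
      have hwp : w ≤ w ^ (n - 1) := le_self_pow₀ hw1 (by omega)
      have hre : airyRe A u α n w 0 ≤ -w := by
        have hpow : w ^ n = w ^ (n - 1) * w := by
          rw [← pow_succ]; congr 1; omega
        have h1 : (n:ℝ) * (1 + |u|) / A ≤ w ^ (n - 1) := le_trans hwM hwp
        have c0 : 0 ≤ A / (n:ℝ) * w := by positivity
        have h2 : (A / (n:ℝ) * w) * ((n:ℝ) * (1 + |u|) / A) ≤ (A / (n:ℝ) * w) * w ^ (n - 1) :=
          mul_le_mul_of_nonneg_left h1 c0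
        have h3 : (A / (n:ℝ) * w) * ((n:ℝ) * (1 + |u|) / A) = (1 + |u|) * w := by
          field_simp
        have h4 : (A / (n:ℝ) * w) * w ^ (n - 1) = A / (n:ℝ) * w ^ n := by
          rw [hpow]; ring
        have h5 : -(u * w * Real.cos (0 + α)) ≤ |u| * w := by
          have habs : |u * w * Real.cos (0 + α)| ≤ |u| * w := by
            rw [abs_mul, abs_mul, abs_of_nonneg hw0]
            exact mul_le_of_le_one_right (mul_nonneg (abs_nonneg u) hw0)
              (Real.abs_cos_le_one _)
          linarith [neg_le_abs (u * w * Real.cos (0 + α))]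
        rw [airyRe, mul_zero, Real.cos_zero, mul_one]
        rw [h3, h4] at h2
        linarith
      have hnorm : ‖(airyG A u α n w 0).im‖ ≤ Real.exp (airyRe A u α n w 0) := by
        rw [Real.norm_eq_abs, ← norm_airyG A u α n w 0]
        exact Complex.abs_im_le_norm _
      have : ‖Real.exp (-1 * w)‖ = Real.exp (-w) := by
        rw [Real.norm_eq_abs, abs_of_pos (Real.exp_pos _)]; norm_num
      rw [this, one_mul]
      exact hnorm.trans (Real.exp_le_exp.2 hre)
  have hlim1 : Tendsto (fun R => ∫ w in Ioc (0:ℝ) R, (airyG A u α n w 0).im) atTop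
      (𝓝 (∫ w in Ioi (0:ℝ), (airyG A u α n w 0).im)) := by
    refine (intervalIntegral_tendsto_integral_Ioi 0 hIntOn tendsto_id).congr' ?_
    filter_upwards [eventually_ge_atTop (0:ℝ)] with R hR
    simp only [id_eq]
    rw [intervalIntegral.integral_of_le hR]
  -- derivative of the rotated integral in the angle
  have hDeriv : ∀ R : ℝ, 0 < R → ∀ φ : ℝ,
      HasDerivAt (fun φ => ∫ w in Ioc (0:ℝ) R, airyG A u α n w φ)
        (-Complex.I * (R:ℂ) * airyG A u α n R φ) φ := by
    intro R hR φ
    have hbd := fun (w : ℝ) (hw : w ∈ Ioc (0:ℝ) R) (φ' : ℝ) =>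
      norm_airyP_le A u hA.le α n hw.1.le hw.2 φ'
    have key := hasDerivAt_integral_of_dominated_loc_of_deriv_le
      (μ := volume.restrict (Ioc (0:ℝ) R)) (x₀ := φ)
      (F := fun φ w => airyG A u α n w φ) (F' := fun φ w => airyP A u α n w φ)
      (bound := fun _ => Real.exp (A / n * R ^ n + |u| * R) * (2 * A * R ^ n + 2 * |u| * R + 1))
      (s := Metric.ball φ 1) (Metric.ball_mem_nhds φ one_pos)
      (Eventually.of_forall fun φ' =>
        (continuous_airyG_w A u α n φ').aestronglyMeasurable)
      ((continuous_airyG_w A u α n φ).integrableOn_Ioc)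
      ((continuous_airyP_w A u α n φ).aestronglyMeasurable)
      ((ae_restrict_iff' measurableSet_Ioc).mpr
        (Eventually.of_forall fun w hw φ' _ => hbd w hw φ'))
      (integrableOn_const measure_Ioc_lt_top.ne)
      (Eventually.of_forall fun w φ' _ => hasDerivAt_airyG_phi A u α hn0 w φ')
    have hPint : (∫ w in Ioc (0:ℝ) R, airyP A u α n w φ)
        = -Complex.I * (R:ℂ) * airyG A u α n R φ := by
      rw [← intervalIntegral.integral_of_le hR.le]
      have hftc : (∫ w in (0:ℝ)..R, Complex.I * airyP A u α n w φ)
          = (R:ℂ) * airyG A u α n R φ - ((0:ℝ):ℂ) * airyG A u α n 0 φ :=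
        intervalIntegral.integral_eq_sub_of_hasDerivAt
          (fun w _ => hasDerivAt_mul_airyG_w A u α hn0 w φ)
          ((continuous_const.mul (continuous_airyP_w A u α n φ)).intervalIntegrable _ _)
      have h2 : (∫ w in (0:ℝ)..R, airyP A u α n w φ)
          = -Complex.I * ∫ w in (0:ℝ)..R, Complex.I * airyP A u α n w φ := by
        rw [intervalIntegral.integral_const_mul]
        rw [← mul_assoc]
        norm_num [Complex.I_mul_I]
      rw [h2, hftc]
      push_cast
      ring
    rw [← hPint]
    exact key.2
  have hJdiff : ∀ R : ℝ, 0 < R →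
      (∫ w in Ioc (0:ℝ) R, airyG A u α n w φ0) - (∫ w in Ioc (0:ℝ) R, airyG A u α n w 0)
        = ∫ ψ in (0:ℝ)..φ0, -Complex.I * (R:ℂ) * airyG A u α n R ψ := by
    intro R hR
    exact (intervalIntegral.integral_eq_sub_of_hasDerivAt
      (fun ψ _ => hDeriv R hR ψ)
      ((continuous_const.mul (continuous_airyG_phi A u α n R)).intervalIntegrable _ _)).symm
  -- the arc term goes to zero
  have harc : Tendsto (fun R : ℝ =>
      (∫ ψ in (0:ℝ)..φ0, -Complex.I * (R:ℂ) * airyG A u α n R ψ).im) atTop (𝓝 0) := by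
    have hmt : Tendsto (fun R : ℝ => 2 * A / π * R ^ (n - 1) - |u|) atTop atTop := by
      have h1 : Tendsto (fun R : ℝ => R ^ (n - 1)) atTop atTop :=
        tendsto_pow_atTop (by omega)
      have h2 := h1.const_mul_atTop (r := 2 * A / π) (by positivity)
      have h3 := tendsto_atTop_add_const_right atTop (-|u|) h2
      refine h3.congr fun R => by ring
    refine squeeze_zero_norm' ?_ hmt.inv_tendsto_atTop
    filter_upwards [eventually_ge_atTop (1:ℝ), hmt.eventually_ge_atTop 1] with R hR1 hm1
    simp only [Pi.inv_apply]
    set m := 2 * A / π * R ^ (n - 1) - |u| with hm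
    have hR0 : (0:ℝ) < R := lt_of_lt_of_le one_pos hR1
    have hm0 : (0:ℝ) < m := lt_of_lt_of_le one_pos hm1
    have hRm : (0:ℝ) < R * m := mul_pos hR0 hm0
    have hpt : ∀ ψ, 0 ≤ ψ → ψ ≤ φ0 → airyRe A u α n R ψ ≤ (ψ - φ0) * (R * m) := by
      intro ψ hψ0 hψφ
      have hs : 0 ≤ φ0 - ψ := by linarith
      have hcos : 2 / π * ((n:ℝ) * (φ0 - ψ)) ≤ Real.cos ((n:ℝ) * ψ) := by
        have he : (n:ℝ) * (φ0 - ψ) = π / 2 - (n:ℝ) * ψ := by rw [mul_sub, hnφ0]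
        have h1 : Real.sin ((n:ℝ) * (φ0 - ψ)) = Real.cos ((n:ℝ) * ψ) := by
          rw [he, Real.sin_pi_div_two_sub]
        rw [← h1]
        exact Real.mul_le_sin (mul_nonneg hnR.le hs)
          (by rw [he]; linarith [mul_nonneg hnR.le hψ0])
      have hlin : -(u * R * Real.cos (ψ + α)) ≤ |u| * R * (φ0 - ψ) := by
        rcases le_or_gt 0 u with hup | hun
        · have hcc : Real.cos (φ0 + α) ≤ Real.cos (ψ + α) :=
            Real.cos_le_cos_of_nonneg_of_le_pi (by linarith : 0 ≤ ψ + α) hθπ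
              (by linarith)
          have h0 : 0 ≤ u * Real.cos (φ0 + α) := hu0
          nlinarith [mul_nonneg (mul_nonneg (abs_nonneg u) hR0.le) hs,
            mul_le_mul_of_nonneg_left hcc (mul_nonneg hup hR0.le)]
        · have hcos0 : Real.cos (φ0 + α) ≤ 0 := by nlinarith
          have hlip := cos_le_cos_add_abs (ψ + α) (φ0 + α)
          have habs : |ψ + α - (φ0 + α)| = φ0 - ψ := by
            rw [abs_of_nonpos (by linarith)]; ring
          rw [habs] at hlip
          have hau : |u| = -u := abs_of_neg hun
          have hnn : (0:ℝ) ≤ -u := by linarith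
          have k1 : -u * R * Real.cos (ψ + α) ≤ -u * R * (Real.cos (φ0 + α) + (φ0 - ψ)) :=
            mul_le_mul_of_nonneg_left hlip (mul_nonneg hnn hR0.le)
          have k2 : -u * R * Real.cos (φ0 + α) ≤ -u * R * 0 :=
            mul_le_mul_of_nonneg_left hcos0 (mul_nonneg hnn hR0.le)
          rw [mul_zero] at k2
          rw [hau]
          nlinarith [k1, k2]
      have hterm1 : -(A / (n:ℝ)) * R ^ n * Real.cos ((n:ℝ) * ψ)
          ≤ -(2 * A / π * R ^ n * (φ0 - ψ)) := by
        have c0 : (0:ℝ) ≤ A / (n:ℝ) * R ^ n := by positivity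
        have h2 := mul_le_mul_of_nonneg_left hcos c0
        have heq : A / (n:ℝ) * R ^ n * (2 / π * ((n:ℝ) * (φ0 - ψ)))
            = 2 * A / π * R ^ n * (φ0 - ψ) := by
          field_simp
        rw [heq] at h2
        linarith
      have hRn : R ^ n = R ^ (n - 1) * R := by
        rw [← pow_succ]; congr 1; omega
      have expand : (ψ - φ0) * (R * m)
          = -(2 * A / π * R ^ n * (φ0 - ψ)) + |u| * R * (φ0 - ψ) := by
        rw [hm, hRn]; ring
      rw [airyRe, expand]
      linarith
    have hnormint : ‖∫ ψ in (0:ℝ)..φ0, -Complex.I * (R:ℂ) * airyG A u α n R ψ‖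
        ≤ |∫ ψ in (0:ℝ)..φ0, R * Real.exp ((ψ - φ0) * (R * m))| := by
      apply intervalIntegral.norm_integral_le_abs_of_norm_le
      · rw [uIoc_of_le hφ0pos.le]
        refine (ae_restrict_iff' measurableSet_Ioc).mpr (Eventually.of_forall fun ψ hψ => ?_)
        rw [norm_mul, norm_mul, norm_neg, Complex.norm_I, one_mul, Complex.norm_real,
          Real.norm_eq_abs, abs_of_pos hR0, norm_airyG]
        exact mul_le_mul_of_nonneg_left (Real.exp_le_exp.2 (hpt ψ hψ.1.le hψ.2)) hR0.le
      · exact Continuous.intervalIntegrable (by fun_prop) _ _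
    have hcomp : (∫ ψ in (0:ℝ)..φ0, R * Real.exp ((ψ - φ0) * (R * m)))
        = R * ((1 - Real.exp ((0 - φ0) * (R * m))) / (R * m)) := by
      rw [intervalIntegral.integral_const_mul]
      congr 1
      have hH : ∀ ψ : ℝ, HasDerivAt (fun ψ => Real.exp ((ψ - φ0) * (R * m)) / (R * m))
          (Real.exp ((ψ - φ0) * (R * m))) ψ := by
        intro ψ
        have h1 : HasDerivAt (fun ψ : ℝ => (ψ - φ0) * (R * m)) (R * m) ψ := by
          simpa using ((hasDerivAt_id ψ).sub_const φ0).mul_const (R * m)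
        have h2 := h1.exp.div_const (R * m)
        convert h2 using 1
        · rfl
        · rfl
        field_simp
      rw [intervalIntegral.integral_eq_sub_of_hasDerivAt (fun ψ _ => hH ψ)
        (Continuous.intervalIntegrable (by fun_prop) _ _)]
      rw [sub_self, zero_mul, Real.exp_zero, div_sub_div_same]
    calc ‖(∫ ψ in (0:ℝ)..φ0, -Complex.I * (R:ℂ) * airyG A u α n R ψ).im‖
        ≤ ‖∫ ψ in (0:ℝ)..φ0, -Complex.I * (R:ℂ) * airyG A u α n R ψ‖ := by
          rw [Real.norm_eq_abs]
          exact Complex.abs_im_le_norm _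
      _ ≤ |∫ ψ in (0:ℝ)..φ0, R * Real.exp ((ψ - φ0) * (R * m))| := hnormint
      _ = |R * ((1 - Real.exp ((0 - φ0) * (R * m))) / (R * m))| := by rw [hcomp]
      _ ≤ m⁻¹ := by
          have he1 : Real.exp ((0 - φ0) * (R * m)) ≤ 1 := by
            rw [← Real.exp_zero]
            exact Real.exp_le_exp.2 (by nlinarith)
          have he0 : (0:ℝ) ≤ Real.exp ((0 - φ0) * (R * m)) := (Real.exp_pos _).le
          have hval : R * ((1 - Real.exp ((0 - φ0) * (R * m))) / (R * m))
              = (1 - Real.exp ((0 - φ0) * (R * m))) / m := by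
            field_simp
          rw [hval, abs_of_nonneg (div_nonneg (by linarith) hm0.le), inv_eq_one_div]
          exact (div_le_div_iff_of_pos_right hm0).mpr (by linarith)
  -- assembly
  have hgoalRHS : (∫ w in Ioi (0:ℝ),
        Real.exp (-A * w ^ n / n - c * w * x * Real.cos α) *
          Real.sin (c * w * x * Real.sin α - α))
      = ∫ w in Ioi (0:ℝ), (airyG A u α n w 0).im := by rw [hEqRHS]
  rw [hgoalRHS]
  have combined := (hlim1.neg).add harc.neg
  rw [neg_zero, add_zero] at combined
  refine combined.congr' ?_
  filter_upwards [eventually_gt_atTop (0:ℝ)] with R hR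
  have int0 : IntegrableOn (fun w => airyG A u α n w 0) (Ioc (0:ℝ) R) :=
    (continuous_airyG_w A u α n 0).integrableOn_Ioc
  have intφ0 : IntegrableOn (fun w => airyG A u α n w φ0) (Ioc (0:ℝ) R) :=
    (continuous_airyG_w A u α n φ0).integrableOn_Ioc
  have e1 : (∫ w in Ioc (0:ℝ) R,
      Real.exp (-(c * w * x * Real.cos ((4 * (k:ℝ) + 1) * π / (2 * (n:ℝ))))) *
        Real.sin (c * w * x * Real.sin ((4 * (k:ℝ) + 1) * π / (2 * (n:ℝ)))
          + A * w ^ n / n - (4 * (k:ℝ) + 1) * π / (2 * (n:ℝ))))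
      = (∫ w in Ioc (0:ℝ) R, airyG A u α n w φ0).im := by
    rw [hEqLHS]
    exact integral_im intφ0
  have e2 : (∫ w in Ioc (0:ℝ) R, (airyG A u α n w 0).im)
      = (∫ w in Ioc (0:ℝ) R, airyG A u α n w 0).im := integral_im int0
  have e3 := hJdiff R hR
  rw [e2, e1]
  have e4 : (∫ w in Ioc (0:ℝ) R, airyG A u α n w φ0)
      = (∫ w in Ioc (0:ℝ) R, airyG A u α n w 0)
        + ∫ ψ in (0:ℝ)..φ0, -Complex.I * (R:ℂ) * airyG A u α n R ψ := by
    linear_combination e3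
  rw [e4, Complex.add_im]
  ring
end

section
/- Let n ≥ 2 be an integer and c a nonzero real number, with n odd or (n even and c < 0), and let θ ∈ [0, π] be such that c·cos θ ≥ 0. Then the iterated integral ∫₀^∞ ( -∫₀^∞ e^{-(-c)^{n-1} t^n/n - c t x cos θ} sin( c t x sin θ - θ ) dt ) dx exists (in the improper sense in x) and equals (π - θ)/(-c) when c < 0, and equals θ/c when c > 0. -/
open MeasureTheory Real Set Filter Topology

lemma my_integrableOn_pow_mul_exp_neg (k : ℕ) {b : ℝ} (hb : 0 < b) :
    IntegrableOn (fun t : ℝ => t ^ k * Real.exp (-b * t)) (Ioi 0) := by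
  have h := integrableOn_rpow_mul_exp_neg_mul_rpow (s := (k : ℝ)) (p := 1)
    (by exact lt_of_lt_of_le (by norm_num) (Nat.cast_nonneg k)) (by norm_num) hb
  refine h.congr_fun (fun x hx => ?_) measurableSet_Ioi
  beta_reduce
  rw [Real.rpow_natCast, Real.rpow_one]

lemma my_integrableOn_exp_neg_mul_pow {n : ℕ} (hn : 1 ≤ n) {b : ℝ} (hb : 0 < b) :
    IntegrableOn (fun t : ℝ => Real.exp (-b * t ^ n)) (Ioi 0) := by
  have h := integrableOn_rpow_mul_exp_neg_mul_rpow (s := (0 : ℝ)) (p := (n : ℝ))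
    (by norm_num) (by exact_mod_cast hn) hb
  refine h.congr_fun (fun x hx => ?_) measurableSet_Ioi
  beta_reduce
  rw [Real.rpow_natCast, Real.rpow_zero, one_mul]

lemma my_integral_exp_neg_mul_cos {p : ℝ} (hp : 0 < p) (y : ℝ) :
    ∫ t in Ioi (0:ℝ), Real.exp (-p * t) * Real.cos (y * t) = p / (p ^ 2 + y ^ 2) := by
  have hD : (0:ℝ) < p ^ 2 + y ^ 2 := by positivity
  set F : ℝ → ℝ := fun t =>
    Real.exp (-p * t) * (-p * Real.cos (y * t) + y * Real.sin (y * t)) / (p ^ 2 + y ^ 2)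
  have hderiv : ∀ t ∈ Ici (0:ℝ), HasDerivAt F (Real.exp (-p * t) * Real.cos (y * t)) t := by
    intro t _
    have hl1 : HasDerivAt (fun t : ℝ => -p * t) (-p) t := by
      simpa using (hasDerivAt_id t).const_mul (-p)
    have hl2 : HasDerivAt (fun t : ℝ => y * t) y t := by
      simpa using (hasDerivAt_id t).const_mul y
    have h1 : HasDerivAt (fun t : ℝ => Real.exp (-p * t)) (Real.exp (-p * t) * (-p)) t := hl1.exp
    have h2 : HasDerivAt (fun t : ℝ => Real.cos (y * t)) (-Real.sin (y * t) * y) t := hl2.cos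
    have h3 : HasDerivAt (fun t : ℝ => Real.sin (y * t)) (Real.cos (y * t) * y) t := hl2.sin
    have h4 := ((h1.mul (((h2.const_mul (-p))).add (h3.const_mul y))).div_const (p ^ 2 + y ^ 2))
    refine h4.congr_deriv ?_
    simp only [Pi.add_apply]
    field_simp
    ring
  have hint : IntegrableOn (fun t => Real.exp (-p * t) * Real.cos (y * t)) (Ioi 0) := by
    refine (exp_neg_integrableOn_Ioi 0 hp).mono' ?_ ?_
    · exact (Real.continuous_exp.comp (continuous_const.mul continuous_id)).aestronglyMeasurable.mul
        (Real.continuous_cos.comp (continuous_const.mul continuous_id)).aestronglyMeasurable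
    · filter_upwards with t
      rw [norm_mul, Real.norm_eq_abs, Real.norm_eq_abs, abs_of_pos (Real.exp_pos _)]
      nlinarith [Real.abs_cos_le_one (y * t), Real.exp_pos (-p * t), abs_nonneg (Real.cos (y*t))]
  have htend : Tendsto F atTop (𝓝 0) := by
    refine squeeze_zero_norm (a := fun t => (p + |y|) / (p ^ 2 + y ^ 2) * Real.exp (-p * t)) ?_ ?_
    · intro t
      have h1 : |(-p * Real.cos (y * t) + y * Real.sin (y * t))| ≤ p + |y| := by
        have := Real.abs_cos_le_one (y * t)
        have := Real.abs_sin_le_one (y * t)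
        calc |(-p * Real.cos (y * t) + y * Real.sin (y * t))|
            ≤ |(-p * Real.cos (y * t))| + |y * Real.sin (y * t)| := abs_add_le _ _
          _ ≤ p + |y| := by
              rw [abs_mul, abs_mul, abs_neg, abs_of_pos hp]
              have h2 : |Real.cos (y*t)| ≤ 1 := Real.abs_cos_le_one _
              have h3 : |Real.sin (y*t)| ≤ 1 := Real.abs_sin_le_one _
              nlinarith [abs_nonneg y]
      have : ‖F t‖ = Real.exp (-p*t) * |(-p * Real.cos (y * t) + y * Real.sin (y * t))| / (p^2+y^2) := by
        rw [Real.norm_eq_abs]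
        rw [abs_div, abs_mul, abs_of_pos (Real.exp_pos _), abs_of_pos hD]
      rw [this]
      have hE := Real.exp_pos (-p*t)
      rw [div_mul_eq_mul_div, mul_comm ((p + |y|))]
      gcongr
    · have this : Tendsto (fun t : ℝ => Real.exp (-p * t)) atTop (𝓝 0) := by
        have h0 : Tendsto (fun t : ℝ => -p * t) atTop atBot :=
          tendsto_id.const_mul_atTop_of_neg (neg_neg_iff_pos.mpr hp)
        exact Real.tendsto_exp_atBot.comp h0
      simpa using this.const_mul ((p + |y|) / (p ^ 2 + y ^ 2))
  have := integral_Ioi_of_hasDerivAt_of_tendsto' hderiv hint htend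
  rw [this]
  have : F 0 = -p / (p ^ 2 + y ^ 2) := by
    simp [F]
  rw [this]
  ring

lemma my_laplace_arctan {p m : ℝ} (hp : 0 < p) (hm : 0 < m) :
    ∫ t in Ioi (0:ℝ), Real.exp (-p * t) * Real.sin (m * t) / t = Real.arctan (m / p) := by
  have hcont : Continuous (Function.uncurry fun t y : ℝ => Real.exp (-p * t) * Real.cos (y * t)) := by
    fun_prop
  -- inner identity
  have hsin : ∀ t ∈ Ioi (0:ℝ),
      Real.exp (-p * t) * Real.sin (m * t) / t
        = ∫ y in Ioc (0:ℝ) m, Real.exp (-p * t) * Real.cos (y * t) := by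
    intro t ht
    have ht0 : (0:ℝ) < t := ht
    have hcos : ∫ y in Ioc (0:ℝ) m, Real.cos (y * t) = Real.sin (m * t) / t := by
      rw [← intervalIntegral.integral_of_le hm.le]
      have hder : ∀ y ∈ uIcc (0:ℝ) m,
          HasDerivAt (fun y : ℝ => Real.sin (y * t) / t) (Real.cos (y * t)) y := by
        intro y _
        have hl : HasDerivAt (fun y : ℝ => y * t) t y := by
          simpa using (hasDerivAt_id y).mul_const t
        have := (hl.sin).div_const t
        refine this.congr_deriv ?_
        field_simp
      rw [intervalIntegral.integral_eq_sub_of_hasDerivAt hder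
        ((Real.continuous_cos.comp (continuous_id.mul continuous_const)).intervalIntegrable 0 m)]
      simp
    rw [MeasureTheory.integral_const_mul, hcos]
    ring
  rw [setIntegral_congr_fun measurableSet_Ioi hsin]
  -- Fubini
  have hInt : Integrable (Function.uncurry fun t y : ℝ => Real.exp (-p * t) * Real.cos (y * t))
      ((volume.restrict (Ioi (0:ℝ))).prod (volume.restrict (Ioc (0:ℝ) m))) := by
    rw [MeasureTheory.integrable_prod_iff hcont.aestronglyMeasurable]
    constructor
    · filter_upwards with t
      have hc : IntegrableOn (fun _ : ℝ => Real.exp (-p * t)) (Ioc (0:ℝ) m) volume :=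
        MeasureTheory.integrableOn_const measure_Ioc_lt_top.ne
      refine hc.mono' ?_ ?_
      · exact (hcont.comp (Continuous.prodMk_right t)).aestronglyMeasurable
      · filter_upwards with y
        simp only [Function.uncurry_apply_pair]
        rw [norm_mul, Real.norm_eq_abs, Real.norm_eq_abs, abs_of_pos (Real.exp_pos _)]
        nlinarith [Real.abs_cos_le_one (y * t), Real.exp_pos (-p * t),
          abs_nonneg (Real.cos (y * t))]
    · refine (((exp_neg_integrableOn_Ioi 0 hp).const_mul m)).mono' ?_ ?_
      · exact (hcont.aestronglyMeasurable.norm.integral_prod_right')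
      · refine (ae_restrict_mem measurableSet_Ioi).mono fun t ht => ?_
        simp only [Function.uncurry_apply_pair]
        have hnn : 0 ≤ ∫ y in Ioc (0:ℝ) m, ‖Real.exp (-p * t) * Real.cos (y * t)‖ :=
          integral_nonneg fun y => norm_nonneg _
        rw [Real.norm_of_nonneg hnn]
        calc ∫ y in Ioc (0:ℝ) m, ‖Real.exp (-p * t) * Real.cos (y * t)‖
            ≤ ∫ _y in Ioc (0:ℝ) m, Real.exp (-p * t) := by
              refine integral_mono_of_nonneg (Eventually.of_forall fun y => norm_nonneg _)
                (MeasureTheory.integrableOn_const measure_Ioc_lt_top.ne) ?_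
              filter_upwards with y
              rw [norm_mul, Real.norm_eq_abs, Real.norm_eq_abs, abs_of_pos (Real.exp_pos _)]
              nlinarith [Real.abs_cos_le_one (y * t), Real.exp_pos (-p * t),
                abs_nonneg (Real.cos (y * t))]
          _ = m * Real.exp (-p * t) := by
              rw [setIntegral_const]
              simp [Real.volume_Ioc, ENNReal.toReal_ofReal hm.le, hm.le]
  rw [MeasureTheory.integral_integral_swap hInt]
  -- evaluate inner integrals
  have : ∀ y ∈ Ioc (0:ℝ) m,
      (∫ t in Ioi (0:ℝ), Real.exp (-p * t) * Real.cos (y * t)) = p / (p ^ 2 + y ^ 2) :=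
    fun y _ => my_integral_exp_neg_mul_cos hp y
  rw [setIntegral_congr_fun measurableSet_Ioc this]
  rw [← intervalIntegral.integral_of_le hm.le]
  have hder : ∀ y ∈ uIcc (0:ℝ) m,
      HasDerivAt (fun y : ℝ => Real.arctan (y / p)) (p / (p ^ 2 + y ^ 2)) y := by
    intro y _
    have := (Real.hasDerivAt_arctan (y / p)).comp y ((hasDerivAt_id y).div_const p)
    refine this.congr_deriv ?_
    field_simp
  rw [intervalIntegral.integral_eq_sub_of_hasDerivAt hder ?_]
  · simp
  · refine (Continuous.intervalIntegrable ?_ 0 m)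
    exact continuous_const.div (by fun_prop) fun y => ne_of_gt (by positivity)

lemma my_riemann_lebesgue_sin {g : ℝ → ℝ} (hg : Integrable g) :
    Tendsto (fun M : ℝ => ∫ t, g t * Real.sin (M * t)) atTop (𝓝 0) := by
  have hgc : Integrable (fun t => (g t : ℂ)) := hg.ofReal
  have H := Real.tendsto_integral_exp_smul_cocompact (fun t => (g t : ℂ))
  have hw : Tendsto (fun M : ℝ => -M / (2 * π)) atTop (cocompact ℝ) := by
    rw [cocompact_eq_atBot_atTop]
    refine Tendsto.mono_right ?_ le_sup_left
    have : Tendsto (fun M : ℝ => M / (2 * π)) atTop atTop :=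
      tendsto_id.atTop_div_const (by positivity)
    simpa [Function.comp_def, neg_div] using tendsto_neg_atTop_atBot.comp this
  have H2 := H.comp hw
  have key : ∀ M : ℝ, (∫ v : ℝ, Real.fourierChar (-(v * (-M / (2 * π)))) • ((g v : ℂ)))
      = ∫ v : ℝ, Complex.exp (M * v * Complex.I) * (g v : ℂ) := by
    intro M
    congr 1
    funext v
    rw [Circle.smul_def, Real.fourierChar_apply]
    congr 2
    push_cast
    have h2π : (2 * (π:ℂ)) ≠ 0 := by
      simp [Real.pi_ne_zero, Complex.ofReal_ne_zero]
    field_simp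
  have H3 : Tendsto (fun M : ℝ => ∫ v : ℝ, Complex.exp (M * v * Complex.I) * (g v : ℂ))
      atTop (𝓝 0) := by
    refine H2.congr fun M => ?_
    exact key M
  have H4 := (Complex.continuous_im.tendsto 0).comp H3
  simp only [Complex.zero_im, Function.comp] at H4
  refine H4.congr fun M => ?_
  have hint : Integrable (fun v : ℝ => Complex.exp (M * v * Complex.I) * (g v : ℂ)) := by
    refine hgc.bdd_mul (c := 1) ?_ (Eventually.of_forall fun v => ?_)
    · exact (Complex.continuous_exp.comp (by continuity)).aestronglyMeasurable
    · rw [Complex.norm_exp]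
      simp [Complex.mul_I_re]
  simp only [Function.comp_apply]
  rw [show ((∫ v : ℝ, Complex.exp (M * v * Complex.I) * (g v : ℂ)).im)
      = RCLike.im (∫ v : ℝ, Complex.exp (M * v * Complex.I) * (g v : ℂ)) from rfl,
    ← integral_im hint]
  congr 1
  funext v
  rw [show (RCLike.im (Complex.exp (M * v * Complex.I) * (g v : ℂ)))
      = (Complex.exp (M * v * Complex.I) * (g v : ℂ)).im from rfl, Complex.mul_im]
  have h1 : (Complex.exp (M * v * Complex.I)).im = Real.sin (M * v) := by
    have : (M : ℂ) * v * Complex.I = ((M * v : ℝ) : ℂ) * Complex.I := by push_cast; ring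
    rw [this, Complex.exp_ofReal_mul_I_im]
  have h2 : (Complex.exp (M * v * Complex.I)).re = Real.cos (M * v) := by
    have : (M : ℂ) * v * Complex.I = ((M * v : ℝ) : ℂ) * Complex.I := by push_cast; ring
    rw [this, Complex.exp_ofReal_mul_I_re]
  simp only [h1, h2, Complex.ofReal_re, Complex.ofReal_im, mul_zero, zero_add]
  exact mul_comm _ _


lemma my_exp_sub_exp_le {x y : ℝ} (hx : 0 ≤ x) (h : x ≤ y) :
    Real.exp (-x) - Real.exp (-y) ≤ y - x := by
  have key : Real.exp (-y) = Real.exp (-x) * Real.exp (x - y) := by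
    rw [← Real.exp_add]; congr 1; ring
  have h2 : Real.exp (-x) ≤ 1 := Real.exp_le_one_iff.mpr (by linarith)
  calc Real.exp (-x) - Real.exp (-y) = Real.exp (-x) * (1 - Real.exp (x - y)) := by
        rw [key]; ring
    _ ≤ Real.exp (-x) * (y - x) := by
        have := Real.add_one_le_exp (x - y)
        nlinarith [Real.exp_pos (-x)]
    _ ≤ 1 * (y - x) := mul_le_mul_of_nonneg_right h2 (by linarith)
    _ = y - x := one_mul _

lemma my_abs_exp_sub_exp {x y : ℝ} (hx : 0 ≤ x) (hy : 0 ≤ y) :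
    |Real.exp (-x) - Real.exp (-y)| ≤ |x - y| := by
  rcases le_total x y with h | h
  · rw [abs_of_nonneg (by simp [Real.exp_le_exp, h]), abs_of_nonpos (by linarith)]
    have := my_exp_sub_exp_le hx h
    linarith
  · rw [abs_of_nonpos (by simp [Real.exp_le_exp, h]), abs_of_nonneg (by linarith)]
    have := my_exp_sub_exp_le hy h
    linarith

lemma my_abs_one_sub_exp {x : ℝ} (hx : 0 ≤ x) : |Real.exp (-x) - 1| ≤ x := by
  have := my_abs_exp_sub_exp hx le_rfl
  simpa [abs_of_nonneg hx] using this

lemma my_key_limit {b : ℝ} (hb : 0 < b) {n : ℕ} (hn : 2 ≤ n) {φ : ℝ} (hφ0 : 0 < φ)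
    (hφ2 : φ ≤ π / 2) :
    Tendsto (fun M : ℝ => ∫ t in Ioi (0:ℝ),
        Real.exp (-b * t ^ n - M * Real.cos φ * t) * Real.sin (M * Real.sin φ * t) / t)
      atTop (𝓝 φ) := by
  have hπ : (0:ℝ) < π := Real.pi_pos
  have hsin : 0 < Real.sin φ := Real.sin_pos_of_pos_of_lt_pi hφ0 (by linarith)
  have hn1 : 1 ≤ n := le_trans (by norm_num) hn
  rcases lt_or_eq_of_le hφ2 with hφlt | hφeq
  · -- case cos φ > 0
    have hcos : 0 < Real.cos φ := Real.cos_pos_of_mem_Ioo ⟨by linarith, hφlt⟩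
    have hmeasE : ∀ M : ℝ, AEStronglyMeasurable
        (fun t => (Real.exp (-b * t ^ n) - 1) * Real.exp (-(M * Real.cos φ) * t)
          * Real.sin (M * Real.sin φ * t) / t) (volume.restrict (Ioi (0:ℝ))) := by
      intro M
      refine ContinuousOn.aestronglyMeasurable ?_ measurableSet_Ioi
      exact ContinuousOn.div (Continuous.continuousOn (by fun_prop)) continuousOn_id
        (fun t ht => ne_of_gt ht)
    have hboundE : ∀ M : ℝ, ∀ t ∈ Ioi (0:ℝ),
        ‖(Real.exp (-b * t ^ n) - 1) * Real.exp (-(M * Real.cos φ) * t)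
          * Real.sin (M * Real.sin φ * t) / t‖
        ≤ b * (t ^ (n - 1) * Real.exp (-(M * Real.cos φ) * t)) := by
      intro M t ht
      have ht0 : (0:ℝ) < t := ht
      rw [Real.norm_eq_abs, abs_div, abs_of_pos ht0, abs_mul, abs_mul,
        abs_of_pos (Real.exp_pos _), div_le_iff₀ ht0]
      have h1 : |Real.exp (-b * t ^ n) - 1| ≤ b * t ^ n := by
        have := my_abs_one_sub_exp (x := b * t ^ n)
          (mul_nonneg hb.le (pow_nonneg ht0.le n))
        rwa [show -(b * t ^ n) = -b * t ^ n by ring] at this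
      have h2 : |Real.sin (M * Real.sin φ * t)| ≤ 1 := Real.abs_sin_le_one _
      have h3 : b * t ^ n = b * t ^ (n - 1) * t := by
        rw [mul_assoc, ← pow_succ]
        congr 2
        omega
      calc |Real.exp (-b * t ^ n) - 1| * Real.exp (-(M * Real.cos φ) * t)
            * |Real.sin (M * Real.sin φ * t)|
          ≤ (b * t ^ n) * Real.exp (-(M * Real.cos φ) * t) * 1 := by gcongr
        _ = b * (t ^ (n - 1) * Real.exp (-(M * Real.cos φ) * t)) * t := by
            rw [h3]; ring
    have htendE0 : Tendsto (fun M : ℝ => ∫ t in Ioi (0:ℝ),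
        (Real.exp (-b * t ^ n) - 1) * Real.exp (-(M * Real.cos φ) * t)
          * Real.sin (M * Real.sin φ * t) / t) atTop
        (𝓝 (∫ (_ : ℝ) in Ioi (0:ℝ), (0:ℝ))) := by
      refine tendsto_integral_filter_of_dominated_convergence
        (fun t => b * (t ^ (n - 1) * Real.exp (-Real.cos φ * t))) ?_ ?_ ?_ ?_
      · exact Eventually.of_forall hmeasE
      · filter_upwards [eventually_ge_atTop (1:ℝ)] with M hM
        filter_upwards [ae_restrict_mem measurableSet_Ioi] with t ht
        refine (hboundE M t ht).trans ?_
        have ht0 : (0:ℝ) < t := ht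
        have : Real.exp (-(M * Real.cos φ) * t) ≤ Real.exp (-Real.cos φ * t) := by
          rw [Real.exp_le_exp]
          nlinarith [mul_nonneg (mul_nonneg (sub_nonneg.mpr hM) hcos.le) ht0.le]
        gcongr
      · exact (my_integrableOn_pow_mul_exp_neg (n - 1) hcos).const_mul b
      · filter_upwards [ae_restrict_mem measurableSet_Ioi] with t ht
        have ht0 : (0:ℝ) < t := ht
        refine squeeze_zero_norm (fun M => hboundE M t ht) ?_
        have h0 : Tendsto (fun M : ℝ => -(M * Real.cos φ) * t) atTop atBot := by
          have : Tendsto (fun M : ℝ => -(Real.cos φ * t) * M) atTop atBot :=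
            tendsto_id.const_mul_atTop_of_neg (by nlinarith)
          refine this.congr fun M => by ring
        have h1 : Tendsto (fun M : ℝ => Real.exp (-(M * Real.cos φ) * t)) atTop (𝓝 0) :=
          Real.tendsto_exp_atBot.comp h0
        have h2 := h1.const_mul (b * t ^ (n - 1))
        rw [mul_zero] at h2
        refine h2.congr fun M => by ring
    have htendE : Tendsto (fun M : ℝ => ∫ t in Ioi (0:ℝ),
        (Real.exp (-b * t ^ n) - 1) * Real.exp (-(M * Real.cos φ) * t)
          * Real.sin (M * Real.sin φ * t) / t) atTop (𝓝 0) := by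
      simpa using htendE0
    have heq : ∀ᶠ M in atTop, (∫ t in Ioi (0:ℝ),
        (Real.exp (-b * t ^ n) - 1) * Real.exp (-(M * Real.cos φ) * t)
          * Real.sin (M * Real.sin φ * t) / t) + φ
        = ∫ t in Ioi (0:ℝ),
            Real.exp (-b * t ^ n - M * Real.cos φ * t) * Real.sin (M * Real.sin φ * t) / t := by
      filter_upwards [eventually_gt_atTop (0:ℝ)] with M hM
      have hint1 : IntegrableOn (fun t => (Real.exp (-b * t ^ n) - 1)
          * Real.exp (-(M * Real.cos φ) * t) * Real.sin (M * Real.sin φ * t) / t)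
          (Ioi (0:ℝ)) := by
        refine Integrable.mono'
          ((my_integrableOn_pow_mul_exp_neg (n - 1) (mul_pos hM hcos)).const_mul b)
          (hmeasE M) ?_
        filter_upwards [ae_restrict_mem measurableSet_Ioi] with t ht
        exact hboundE M t ht
      have hint2 : IntegrableOn (fun t => Real.exp (-(M * Real.cos φ) * t)
          * Real.sin (M * Real.sin φ * t) / t) (Ioi (0:ℝ)) := by
        refine Integrable.mono'
          ((exp_neg_integrableOn_Ioi 0 (mul_pos hM hcos)).const_mul (M * Real.sin φ)) ?_ ?_
        · refine ContinuousOn.aestronglyMeasurable ?_ measurableSet_Ioi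
          exact ContinuousOn.div (Continuous.continuousOn (by fun_prop)) continuousOn_id
            (fun t ht => ne_of_gt ht)
        · filter_upwards [ae_restrict_mem measurableSet_Ioi] with t ht
          have ht0 : (0:ℝ) < t := ht
          rw [Real.norm_eq_abs, abs_div, abs_of_pos ht0, abs_mul,
            abs_of_pos (Real.exp_pos _), div_le_iff₀ ht0]
          have h2 : |Real.sin (M * Real.sin φ * t)| ≤ M * Real.sin φ * t := by
            calc |Real.sin (M * Real.sin φ * t)| ≤ |M * Real.sin φ * t| :=
                Real.abs_sin_le_abs
              _ = M * Real.sin φ * t :=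
                abs_of_nonneg (mul_nonneg (mul_nonneg hM.le hsin.le) ht0.le)
          calc Real.exp (-(M * Real.cos φ) * t) * |Real.sin (M * Real.sin φ * t)|
              ≤ Real.exp (-(M * Real.cos φ) * t) * (M * Real.sin φ * t) := by
                gcongr
            _ = M * Real.sin φ * Real.exp (-(M * Real.cos φ) * t) * t := by ring
      have harc : ∫ t in Ioi (0:ℝ), Real.exp (-(M * Real.cos φ) * t)
          * Real.sin (M * Real.sin φ * t) / t = φ := by
        have hl := my_laplace_arctan (mul_pos hM hcos) (mul_pos hM hsin)
        have hl2 : (∫ t in Ioi (0:ℝ), Real.exp (-(M * Real.cos φ) * t)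
            * Real.sin (M * Real.sin φ * t) / t)
            = Real.arctan (M * Real.sin φ / (M * Real.cos φ)) := by
          exact hl
        rw [hl2, show M * Real.sin φ / (M * Real.cos φ) = Real.sin φ / Real.cos φ by
          rw [mul_div_mul_left _ _ (ne_of_gt hM)]]
        rw [← Real.tan_eq_sin_div_cos, Real.arctan_tan (by linarith) hφlt]
      calc (∫ t in Ioi (0:ℝ), (Real.exp (-b * t ^ n) - 1)
            * Real.exp (-(M * Real.cos φ) * t) * Real.sin (M * Real.sin φ * t) / t) + φ
          = (∫ t in Ioi (0:ℝ), (Real.exp (-b * t ^ n) - 1)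
              * Real.exp (-(M * Real.cos φ) * t) * Real.sin (M * Real.sin φ * t) / t)
            + ∫ t in Ioi (0:ℝ), Real.exp (-(M * Real.cos φ) * t)
              * Real.sin (M * Real.sin φ * t) / t := by rw [harc]
        _ = ∫ t in Ioi (0:ℝ),
              ((Real.exp (-b * t ^ n) - 1) * Real.exp (-(M * Real.cos φ) * t)
                  * Real.sin (M * Real.sin φ * t) / t
                + Real.exp (-(M * Real.cos φ) * t) * Real.sin (M * Real.sin φ * t) / t) := by
            rw [← MeasureTheory.integral_add hint1 hint2]
        _ = ∫ t in Ioi (0:ℝ),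
              Real.exp (-b * t ^ n - M * Real.cos φ * t) * Real.sin (M * Real.sin φ * t) / t := by
            refine setIntegral_congr_fun measurableSet_Ioi fun t _ => ?_
            have hexp : Real.exp (-b * t ^ n - M * Real.cos φ * t)
                = Real.exp (-b * t ^ n) * Real.exp (-(M * Real.cos φ) * t) := by
              rw [← Real.exp_add]; congr 1; ring
            rw [hexp]
            ring
    have := htendE.add_const φ
    rw [zero_add] at this
    exact Tendsto.congr' heq this
  · -- case φ = π / 2
    subst hφeq
    simp only [Real.cos_pi_div_two, Real.sin_pi_div_two, mul_zero, zero_mul, mul_one, sub_zero]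
    set g0 : ℝ → ℝ := fun t => (Real.exp (-b * t ^ n) - Real.exp (-t)) / t with hg0
    have hg0meas : AEStronglyMeasurable g0 (volume.restrict (Ioi (0:ℝ))) := by
      refine ContinuousOn.aestronglyMeasurable ?_ measurableSet_Ioi
      exact ContinuousOn.div (Continuous.continuousOn (by fun_prop)) continuousOn_id
        (fun t ht => ne_of_gt ht)
    have hg0int : IntegrableOn g0 (Ioi (0:ℝ)) := by
      rw [← Ioc_union_Ioi_eq_Ioi (zero_le_one (α := ℝ))]
      refine IntegrableOn.union ?_ ?_
      · have hc : IntegrableOn (fun _ : ℝ => b + 1) (Ioc (0:ℝ) 1) volume :=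
          MeasureTheory.integrableOn_const measure_Ioc_lt_top.ne
        refine Integrable.mono' hc
          (hg0meas.mono_measure (Measure.restrict_mono Ioc_subset_Ioi_self le_rfl)) ?_
        filter_upwards [ae_restrict_mem measurableSet_Ioc] with t ht
        have ht0 : (0:ℝ) < t := ht.1
        have ht1 : t ≤ 1 := ht.2
        rw [Real.norm_eq_abs, hg0]
        simp only []
        rw [abs_div, abs_of_pos ht0, div_le_iff₀ ht0]
        have h1 : |Real.exp (-b * t ^ n) - Real.exp (-t)| ≤ |b * t ^ n - t| := by
          have := my_abs_exp_sub_exp (x := b * t ^ n) (y := t)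
            (mul_nonneg hb.le (pow_nonneg ht0.le n)) ht0.le
          rwa [show -(b * t ^ n) = -b * t ^ n by ring] at this
        have h2 : |b * t ^ n - t| ≤ b * t ^ n + t := by
          refine (abs_sub _ _).trans ?_
          rw [abs_of_nonneg (mul_nonneg hb.le (pow_nonneg ht0.le n)), abs_of_pos ht0]
        have h3 : t ^ n ≤ t := by
          have := pow_le_pow_of_le_one ht0.le ht1 hn1
          simpa using this
        nlinarith
      · have hintsum : Integrable (fun t : ℝ => Real.exp (-b * t ^ n) + Real.exp (-t))
            (volume.restrict (Ioi (1:ℝ))) := by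
          have h1 : IntegrableOn (fun t : ℝ => Real.exp (-b * t ^ n)) (Ioi 1) :=
            (my_integrableOn_exp_neg_mul_pow hn1 hb).mono_set (Ioi_subset_Ioi zero_le_one)
          have h2 : IntegrableOn (fun t : ℝ => Real.exp (-t)) (Ioi 1) := by
            have h3 := exp_neg_integrableOn_Ioi (1:ℝ) one_pos
            exact h3.congr_fun (fun t _ => by beta_reduce; rw [neg_one_mul]) measurableSet_Ioi
          exact h1.add h2
        refine Integrable.mono' hintsum
          (hg0meas.mono_measure (Measure.restrict_mono (Ioi_subset_Ioi zero_le_one) le_rfl)) ?_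
        filter_upwards [ae_restrict_mem measurableSet_Ioi] with t ht
        have ht1 : (1:ℝ) < t := ht
        have ht0 : (0:ℝ) < t := by linarith
        rw [Real.norm_eq_abs, hg0]
        simp only []
        rw [abs_div, abs_of_pos ht0, div_le_iff₀ ht0]
        have h2 : |Real.exp (-b * t ^ n) - Real.exp (-t)|
            ≤ Real.exp (-b * t ^ n) + Real.exp (-t) := by
          refine (abs_sub _ _).trans ?_
          rw [abs_of_pos (Real.exp_pos _), abs_of_pos (Real.exp_pos _)]
        nlinarith [Real.exp_pos (-b * t ^ n), Real.exp_pos (-t)]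
    have hgint : Integrable ((Ioi (0:ℝ)).indicator g0) := by
      rw [MeasureTheory.integrable_indicator_iff measurableSet_Ioi]
      exact hg0int
    have hRL := my_riemann_lebesgue_sin hgint
    have harct : Tendsto (fun M : ℝ => Real.arctan M) atTop (𝓝 (π / 2)) :=
      Real.tendsto_arctan_atTop.mono_right nhdsWithin_le_nhds
    have hsum := hRL.add harct
    rw [zero_add] at hsum
    refine Tendsto.congr' ?_ hsum
    filter_upwards [eventually_gt_atTop (0:ℝ)] with M hM
    have hgsin : (∫ t, (Ioi (0:ℝ)).indicator g0 t * Real.sin (M * t))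
        = ∫ t in Ioi (0:ℝ), g0 t * Real.sin (M * t) := by
      rw [← MeasureTheory.integral_indicator measurableSet_Ioi]
      congr 1
      funext t
      by_cases h : t ∈ Ioi (0:ℝ)
      · simp [Set.indicator_of_mem h]
      · simp [Set.indicator_of_notMem h]
    have hint1 : IntegrableOn (fun t => g0 t * Real.sin (M * t)) (Ioi (0:ℝ)) := by
      refine Integrable.mono' hg0int.abs (hg0meas.mul ?_) ?_
      · exact (Real.continuous_sin.comp (by fun_prop)).aestronglyMeasurable
      · filter_upwards with t
        rw [Real.norm_eq_abs, abs_mul]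
        calc |g0 t| * |Real.sin (M * t)| ≤ |g0 t| * 1 :=
            mul_le_mul_of_nonneg_left (Real.abs_sin_le_one _) (abs_nonneg _)
          _ = |g0 t| := mul_one _
    have hint2 : IntegrableOn (fun t => Real.exp (-t) * Real.sin (M * t) / t) (Ioi (0:ℝ)) := by
      refine Integrable.mono' ((exp_neg_integrableOn_Ioi 0 one_pos).const_mul M) ?_ ?_
      · refine ContinuousOn.aestronglyMeasurable ?_ measurableSet_Ioi
        exact ContinuousOn.div (Continuous.continuousOn (by fun_prop)) continuousOn_id
          (fun t ht => ne_of_gt ht)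
      · filter_upwards [ae_restrict_mem measurableSet_Ioi] with t ht
        have ht0 : (0:ℝ) < t := ht
        rw [Real.norm_eq_abs, abs_div, abs_of_pos ht0, abs_mul,
          abs_of_pos (Real.exp_pos _), div_le_iff₀ ht0]
        have h2 : |Real.sin (M * t)| ≤ M * t := by
          calc |Real.sin (M * t)| ≤ |M * t| := Real.abs_sin_le_abs
            _ = M * t := abs_of_nonneg (mul_nonneg hM.le ht0.le)
        calc Real.exp (-t) * |Real.sin (M * t)| ≤ Real.exp (-t) * (M * t) := by
              gcongr
          _ = M * (-1 * t).exp * t := by rw [neg_one_mul]; ring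
    have harc2 : ∫ t in Ioi (0:ℝ), Real.exp (-t) * Real.sin (M * t) / t = Real.arctan M := by
      have hl := my_laplace_arctan (p := 1) (m := M) one_pos hM
      rw [div_one] at hl
      rw [← hl]
      refine setIntegral_congr_fun measurableSet_Ioi fun t _ => by rw [neg_one_mul]
    calc (∫ t, (Ioi (0:ℝ)).indicator g0 t * Real.sin (M * t)) + Real.arctan M
        = (∫ t in Ioi (0:ℝ), g0 t * Real.sin (M * t))
          + ∫ t in Ioi (0:ℝ), Real.exp (-t) * Real.sin (M * t) / t := by rw [hgsin, harc2]
      _ = ∫ t in Ioi (0:ℝ),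
            (g0 t * Real.sin (M * t) + Real.exp (-t) * Real.sin (M * t) / t) := by
          rw [← MeasureTheory.integral_add hint1 hint2]
      _ = ∫ t in Ioi (0:ℝ), Real.exp (-b * t ^ n) * Real.sin (M * t) / t := by
          refine setIntegral_congr_fun measurableSet_Ioi fun t _ => ?_
          rw [hg0]
          ring

lemma my_stepA {b c θ : ℝ} (hb : 0 < b) {n : ℕ} (hn : 2 ≤ n) (hc : c ≠ 0)
    (hθc : 0 ≤ c * Real.cos θ) {R : ℝ} (hR : 0 < R) :
    (∫ x in Ioc (0:ℝ) R, -∫ t in Ioi (0:ℝ),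
        Real.exp (-b * t ^ n - c * t * x * Real.cos θ) * Real.sin (c * t * x * Real.sin θ - θ))
    = ∫ t in Ioi (0:ℝ),
        Real.exp (-b * t ^ n - (c * Real.cos θ) * R * t)
          * (Real.sin ((c * Real.sin θ) * R * t) / (c * t)) := by
  set f : ℝ → ℝ → ℝ := fun x t =>
    Real.exp (-b * t ^ n - c * t * x * Real.cos θ) * Real.sin (c * t * x * Real.sin θ - θ)
    with hf
  have hcont : Continuous (Function.uncurry f) := by
    rw [hf]; fun_prop
  have hexpint : IntegrableOn (fun t : ℝ => Real.exp (-b * t ^ n)) (Ioi 0) :=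
    my_integrableOn_exp_neg_mul_pow (le_trans (by norm_num) hn) hb
  have hbound : ∀ x ∈ Ioc (0:ℝ) R, ∀ t ∈ Ioi (0:ℝ), ‖f x t‖ ≤ Real.exp (-b * t ^ n) := by
    intro x hx t ht
    have hx0 : 0 < x := hx.1
    have ht0 : (0:ℝ) < t := ht
    rw [hf]
    simp only []
    rw [norm_mul, Real.norm_eq_abs, Real.norm_eq_abs, abs_of_pos (Real.exp_pos _)]
    have h1 : |Real.sin (c * t * x * Real.sin θ - θ)| ≤ 1 := Real.abs_sin_le_one _
    have h2 : Real.exp (-b * t ^ n - c * t * x * Real.cos θ) ≤ Real.exp (-b * t ^ n) := by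
      rw [Real.exp_le_exp]
      have : 0 ≤ c * Real.cos θ * (t * x) := mul_nonneg hθc (mul_nonneg ht0.le hx0.le)
      nlinarith
    calc Real.exp (-b * t ^ n - c * t * x * Real.cos θ) * |Real.sin (c * t * x * Real.sin θ - θ)|
        ≤ Real.exp (-b * t ^ n - c * t * x * Real.cos θ) * 1 := by gcongr
      _ ≤ Real.exp (-b * t ^ n) := by rw [mul_one]; exact h2
  have hintProd : Integrable (Function.uncurry f)
      ((volume.restrict (Ioc (0:ℝ) R)).prod (volume.restrict (Ioi (0:ℝ)))) := by
    rw [MeasureTheory.integrable_prod_iff hcont.aestronglyMeasurable]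
    constructor
    · filter_upwards [ae_restrict_mem measurableSet_Ioc] with x hx
      refine Integrable.mono' hexpint
        (hcont.comp (Continuous.prodMk_right x)).aestronglyMeasurable ?_
      filter_upwards [ae_restrict_mem measurableSet_Ioi] with t ht
      exact hbound x hx t ht
    · have hC : IntegrableOn (fun _ : ℝ => ∫ t in Ioi (0:ℝ), Real.exp (-b * t ^ n))
          (Ioc (0:ℝ) R) volume :=
        MeasureTheory.integrableOn_const measure_Ioc_lt_top.ne
      refine Integrable.mono' hC (hcont.aestronglyMeasurable.norm.integral_prod_right') ?_
      filter_upwards [ae_restrict_mem measurableSet_Ioc] with x hx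
      simp only [Function.uncurry_apply_pair]
      have hnn : 0 ≤ ∫ t in Ioi (0:ℝ), ‖f x t‖ := integral_nonneg fun t => norm_nonneg _
      rw [Real.norm_of_nonneg hnn]
      refine integral_mono_of_nonneg (Eventually.of_forall fun t => norm_nonneg _) hexpint ?_
      filter_upwards [ae_restrict_mem measurableSet_Ioi] with t ht
      exact hbound x hx t ht
  rw [MeasureTheory.integral_neg, MeasureTheory.integral_integral_swap hintProd,
    ← MeasureTheory.integral_neg]
  refine setIntegral_congr_fun measurableSet_Ioi fun t ht => ?_
  have ht0 : (0:ℝ) < t := ht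
  have hct : c * t ≠ 0 := mul_ne_zero hc (ne_of_gt ht0)
  set p : ℝ := c * t * Real.cos θ with hp
  set q : ℝ := c * t * Real.sin θ with hq
  have hpq : p ^ 2 + q ^ 2 = c ^ 2 * t ^ 2 := by
    rw [hp, hq]
    have h := Real.sin_sq_add_cos_sq θ
    nlinarith
  have hc2t2 : (0:ℝ) < c ^ 2 * t ^ 2 :=
    mul_pos (pow_two_pos_of_ne_zero hc) (pow_two_pos_of_ne_zero (ne_of_gt ht0))
  set F : ℝ → ℝ := fun x => Real.exp (-b * t ^ n - p * x)
      * (-p * Real.sin (q * x - θ) - q * Real.cos (q * x - θ)) / (c ^ 2 * t ^ 2) with hF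
  have hder : ∀ x ∈ uIcc (0:ℝ) R, HasDerivAt F (f x t) x := by
    intro x _
    have hpx : HasDerivAt (fun x : ℝ => p * x) p x := by
      simpa using (hasDerivAt_id x).const_mul p
    have h1 : HasDerivAt (fun x : ℝ => -b * t ^ n - p * x) (-p) x := hpx.const_sub _
    have hqx : HasDerivAt (fun x : ℝ => q * x - θ) q x := by
      simpa using ((hasDerivAt_id x).const_mul q).sub_const θ
    have hsind : HasDerivAt (fun x : ℝ => Real.sin (q * x - θ))
        (Real.cos (q * x - θ) * q) x := hqx.sin
    have hcosd : HasDerivAt (fun x : ℝ => Real.cos (q * x - θ))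
        (-Real.sin (q * x - θ) * q) x := hqx.cos
    have hnum : HasDerivAt (fun x : ℝ => -p * Real.sin (q * x - θ) - q * Real.cos (q * x - θ))
        (-p * (Real.cos (q * x - θ) * q) - q * (-Real.sin (q * x - θ) * q)) x :=
      (hsind.const_mul (-p)).sub (hcosd.const_mul q)
    have htot := ((h1.exp.mul hnum).div_const (c ^ 2 * t ^ 2))
    have harg1 : -b * t ^ n - p * x = -b * t ^ n - c * t * x * Real.cos θ := by
      rw [hp]; ring
    have harg2 : q * x - θ = c * t * x * Real.sin θ - θ := by
      rw [hq]; ring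
    have hfxt : f x t = Real.exp (-b * t ^ n - p * x) * Real.sin (q * x - θ) := by
      rw [harg1, harg2]
    rw [hfxt]
    refine htot.congr_deriv ?_
    rw [eq_comm, eq_div_iff (ne_of_gt hc2t2)]
    linear_combination (-(Real.exp (-b * t ^ n - p * x) * Real.sin (q * x - θ)) * c ^ 2 * t ^ 2)
      * (Real.sin_sq_add_cos_sq θ)
  have hx : ∫ x in Ioc (0:ℝ) R, f x t
      = -(Real.exp (-b * t ^ n - (c * Real.cos θ) * R * t)
          * (Real.sin ((c * Real.sin θ) * R * t) / (c * t))) := by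
    rw [← intervalIntegral.integral_of_le hR.le,
      intervalIntegral.integral_eq_sub_of_hasDerivAt hder
        (Continuous.intervalIntegrable (by rw [hf]; fun_prop) 0 R)]
    have hF0 : F 0 = 0 := by
      rw [hF]
      simp only []
      have hz : -p * Real.sin (q * 0 - θ) - q * Real.cos (q * 0 - θ) = 0 := by
        have h00 : q * 0 - θ = -θ := by ring
        rw [h00, Real.sin_neg, Real.cos_neg, hp, hq]
        ring
      rw [hz, mul_zero, zero_div]
    have hFR : F R = -(Real.exp (-b * t ^ n - (c * Real.cos θ) * R * t)
        * (Real.sin ((c * Real.sin θ) * R * t) / (c * t))) := by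
      have hsplit : (c * Real.sin θ) * R * t = (q * R - θ) + θ := by rw [hq]; ring
      have hee : -b * t ^ n - (c * Real.cos θ) * R * t = -b * t ^ n - p * R := by
        rw [hp]; ring
      rw [hF, hsplit, Real.sin_add, hee]
      simp only []
      rw [hp, hq]
      field_simp
      ring
    rw [hF0, hFR]
    ring
  rw [hx, neg_neg]

theorem airy_type_integral_on_positive_halfline
    (n : ℕ) (hn : 2 ≤ n) (c : ℝ) (hc : c ≠ 0)
    (hcase : Odd n ∨ (Even n ∧ c < 0))
    (θ : ℝ) (hθ : θ ∈ Icc 0 π) (hθc : 0 ≤ c * Real.cos θ) :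
    Tendsto
      (fun R : ℝ =>
        ∫ x in Ioc (0 : ℝ) R,
          -∫ t in Ioi (0 : ℝ),
            Real.exp (-(-c) ^ (n - 1) * t ^ n / n - c * t * x * Real.cos θ) *
              Real.sin (c * t * x * Real.sin θ - θ))
      atTop
      (𝓝 (if c < 0 then (π - θ) / (-c) else θ / c)) := by
  have hπ : (0:ℝ) < π := Real.pi_pos
  have hθ0 : 0 ≤ θ := hθ.1
  have hθπ : θ ≤ π := hθ.2
  have ha : 0 < (-c) ^ (n - 1) := by
    rcases hcase with hodd | ⟨heven, hneg⟩
    · obtain ⟨k, hk⟩ := hodd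
      have : Even (n - 1) := ⟨k, by omega⟩
      exact this.pow_pos (neg_ne_zero.mpr hc)
    · exact pow_pos (neg_pos.mpr hneg) _
  set b : ℝ := (-c) ^ (n - 1) / n with hbdef
  have hnpos : (0:ℝ) < n := by exact_mod_cast (by omega : 0 < n)
  have hb : 0 < b := div_pos ha hnpos
  have hE : ∀ x t : ℝ, -(-c) ^ (n - 1) * t ^ n / (n:ℝ) - c * t * x * Real.cos θ
      = -b * t ^ n - c * t * x * Real.cos θ := by
    intro x t
    rw [hbdef]
    ring
  by_cases hsθ : Real.sin θ = 0
  · -- degenerate case: θ = 0 or θ = π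
    have hθcases : θ = 0 ∨ θ = π := by
      rcases eq_or_lt_of_le hθ0 with h0 | h0pos
      · exact Or.inl h0.symm
      rcases eq_or_lt_of_le hθπ with hπe | hπlt
      · exact Or.inr hπe
      exact absurd hsθ (ne_of_gt (Real.sin_pos_of_pos_of_lt_pi h0pos hπlt))
    have hzero : ∀ x t : ℝ, Real.sin (c * t * x * Real.sin θ - θ) = 0 := by
      intro x t
      rcases hθcases with rfl | rfl
      · simp
      · simp [Real.sin_pi]
    have hval : (if c < 0 then (π - θ) / (-c) else θ / c) = 0 := by
      rcases hθcases with rfl | rfl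
      · have hcpos : 0 < c := by
          rcases hc.lt_or_gt with h | h
          · exfalso
            rw [Real.cos_zero, mul_one] at hθc
            linarith
          · exact h
        rw [if_neg (not_lt.mpr hcpos.le), zero_div]
      · have hcneg : c < 0 := by
          rcases hc.lt_or_gt with h | h
          · exact h
          · exfalso
            rw [Real.cos_pi] at hθc
            nlinarith
        rw [if_pos hcneg, sub_self, zero_div]
    rw [hval]
    refine Tendsto.congr' ?_ (tendsto_const_nhds (x := (0:ℝ)) (f := atTop))
    filter_upwards with R
    simp [hzero]
  · -- main case: sin θ > 0
    have hsθpos : 0 < Real.sin θ :=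
      lt_of_le_of_ne (Real.sin_nonneg_of_nonneg_of_le_pi hθ0 hθπ) (Ne.symm hsθ)
    have hθπlt : θ < π := by
      rcases eq_or_lt_of_le hθπ with hπe | h
      · exfalso; rw [hπe] at hsθ; exact hsθ Real.sin_pi
      · exact h
    have hθ0lt : 0 < θ := by
      rcases eq_or_lt_of_le hθ0 with h0 | h
      · exfalso; rw [← h0] at hsθ; exact hsθ Real.sin_zero
      · exact h
    rcases hc.lt_or_gt with hcneg | hcpos
    · -- c < 0, φ = π - θ
      have hcosθ : Real.cos θ ≤ 0 := by nlinarith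
      have hφ0 : 0 < π - θ := by linarith
      have hφ2 : π - θ ≤ π / 2 := by
        by_contra hcon
        push_neg at hcon
        have hθlt : θ < π / 2 := by linarith
        have : 0 < Real.cos θ := Real.cos_pos_of_mem_Ioo ⟨by linarith, hθlt⟩
        linarith
      have hMtend : Tendsto (fun R : ℝ => -c * R) atTop atTop :=
        Tendsto.const_mul_atTop (neg_pos.mpr hcneg) tendsto_id
      have h1 := (my_key_limit hb hn hφ0 hφ2).comp hMtend
      have h2 := h1.const_mul (1 / (-c))
      rw [if_pos hcneg]
      have hvv : 1 / (-c) * (π - θ) = (π - θ) / (-c) := by ring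
      rw [← hvv]
      refine Tendsto.congr' ?_ h2
      filter_upwards [eventually_gt_atTop (0:ℝ)] with R hR
      show 1 / (-c) * (∫ t in Ioi (0:ℝ),
          Real.exp (-b * t ^ n - (-c * R) * Real.cos (π - θ) * t)
            * Real.sin ((-c * R) * Real.sin (π - θ) * t) / t)
        = ∫ x in Ioc (0:ℝ) R, -∫ t in Ioi (0:ℝ),
            Real.exp (-(-c) ^ (n - 1) * t ^ n / n - c * t * x * Real.cos θ) *
              Real.sin (c * t * x * Real.sin θ - θ)
      simp only [hE]
      rw [my_stepA hb hn hc hθc hR]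
      rw [← MeasureTheory.integral_const_mul]
      refine (setIntegral_congr_fun measurableSet_Ioi fun t ht => ?_).symm
      have ht0 : (0:ℝ) < t := ht
      rw [Real.cos_pi_sub, Real.sin_pi_sub]
      rw [show -b * t ^ n - -c * R * -Real.cos θ * t = -b * t ^ n - c * Real.cos θ * R * t by ring]
      rw [show -c * R * Real.sin θ * t = -(c * Real.sin θ * R * t) by ring, Real.sin_neg]
      field_simp
    · -- c > 0, φ = θ
      have hcosθ : 0 ≤ Real.cos θ := by nlinarith
      have hφ2 : θ ≤ π / 2 := by
        by_contra hcon
        push_neg at hcon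
        have : Real.cos θ < 0 :=
          Real.cos_neg_of_pi_div_two_lt_of_lt hcon (by linarith)
        linarith
      have hMtend : Tendsto (fun R : ℝ => c * R) atTop atTop :=
        Tendsto.const_mul_atTop hcpos tendsto_id
      have h1 := (my_key_limit hb hn hθ0lt hφ2).comp hMtend
      have h2 := h1.const_mul (1 / c)
      rw [if_neg (not_lt.mpr hcpos.le)]
      have hvv : 1 / c * θ = θ / c := by ring
      rw [← hvv]
      refine Tendsto.congr' ?_ h2
      filter_upwards [eventually_gt_atTop (0:ℝ)] with R hR
      show 1 / c * (∫ t in Ioi (0:ℝ),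
          Real.exp (-b * t ^ n - (c * R) * Real.cos θ * t)
            * Real.sin ((c * R) * Real.sin θ * t) / t)
        = ∫ x in Ioc (0:ℝ) R, -∫ t in Ioi (0:ℝ),
            Real.exp (-(-c) ^ (n - 1) * t ^ n / n - c * t * x * Real.cos θ) *
              Real.sin (c * t * x * Real.sin θ - θ)
      simp only [hE]
      rw [my_stepA hb hn hc hθc hR]
      rw [← MeasureTheory.integral_const_mul]
      refine (setIntegral_congr_fun measurableSet_Ioi fun t ht => ?_).symm
      have ht0 : (0:ℝ) < t := ht
      rw [show -b * t ^ n - c * R * Real.cos θ * t = -b * t ^ n - c * Real.cos θ * R * t by ring]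
      rw [show c * R * Real.sin θ * t = c * Real.sin θ * R * t by ring]
      field_simp
end

section
/- Let n ≥ 2 be an integer and c a nonzero real number, with n odd or (n even and c < 0), and let k be a natural number with 1 ≤ k ≤ ⌊n/2⌋ such that c·cos(2kπ/n) ≥ 0. Define y(x) = -∫₀^∞ e^{-(-c)^{n-1} w^n/n - c w x a_k} sin(c w x b_k - 2kπ/n) dw for real x. Then ∫₀^∞ y(x) dx equals (n - 2k)π/(-nc) when c < 0, and equals 2kπ/(nc) when c > 0. -/
open MeasureTheory Real Set Filter Topology
open scoped FourierTransform

private lemma aux_exp_cos (p t : ℝ) (hp : 0 < p) :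
    ∫ w in Ioi (0:ℝ), Real.exp (-p * w) * Real.cos (t * w) = p / (p ^ 2 + t ^ 2) := by
  have hpt : (0:ℝ) < p ^ 2 + t ^ 2 := by positivity
  have hderiv : ∀ w ∈ Ici (0:ℝ), HasDerivAt
      (fun w => Real.exp (-p * w) * (-p * Real.cos (t * w) + t * Real.sin (t * w)) /
        (p ^ 2 + t ^ 2))
      (Real.exp (-p * w) * Real.cos (t * w)) w := by
    intro w _
    have h1 : HasDerivAt (fun w : ℝ => -p * w) (-p) w := by
      simpa using (hasDerivAt_id w).const_mul (-p)
    have hexp : HasDerivAt (fun w : ℝ => Real.exp (-p * w)) (Real.exp (-p * w) * -p) w := h1.exp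
    have h2 : HasDerivAt (fun w : ℝ => t * w) t w := by
      simpa using (hasDerivAt_id w).const_mul t
    have hcos : HasDerivAt (fun w : ℝ => Real.cos (t * w)) (-Real.sin (t * w) * t) w := h2.cos
    have hsin : HasDerivAt (fun w : ℝ => Real.sin (t * w)) (Real.cos (t * w) * t) w := h2.sin
    have h := (hexp.mul ((hcos.const_mul (-p)).add (hsin.const_mul t))).div_const (p ^ 2 + t ^ 2)
    refine HasDerivAt.congr_deriv h ?_
    simp only [Pi.add_apply]
    field_simp
    ring
  have hint : IntegrableOn (fun w => Real.exp (-p * w) * Real.cos (t * w)) (Ioi (0:ℝ)) := by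
    apply Integrable.mono' (exp_neg_integrableOn_Ioi 0 hp)
    · exact (Continuous.mul (by continuity) (by continuity)).aestronglyMeasurable
    · filter_upwards with w
      rw [norm_mul, Real.norm_eq_abs, Real.norm_eq_abs, Real.abs_exp]
      calc Real.exp (-p*w) * |Real.cos (t*w)| ≤ Real.exp (-p*w) * 1 := by
            gcongr; exact Real.abs_cos_le_one _
        _ = Real.exp (-p*w) := mul_one _
  have htend : Tendsto (fun w => Real.exp (-p * w) * (-p * Real.cos (t * w) +
      t * Real.sin (t * w)) / (p ^ 2 + t ^ 2)) atTop (𝓝 0) := by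
    apply squeeze_zero_norm (a := fun w => Real.exp (-p * w) * (p + |t|) / (p ^ 2 + t ^ 2))
    · intro w
      rw [norm_div, norm_mul, Real.norm_eq_abs, Real.norm_eq_abs, Real.norm_eq_abs,
        Real.abs_exp, abs_of_pos hpt]
      gcongr
      calc |(-p * Real.cos (t*w) + t * Real.sin (t*w))|
          ≤ |(-p) * Real.cos (t*w)| + |t * Real.sin (t*w)| := abs_add_le _ _
        _ ≤ p + |t| := by
            rw [abs_mul, abs_mul, abs_neg, abs_of_pos hp]
            have := Real.abs_cos_le_one (t*w)
            have := Real.abs_sin_le_one (t*w)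
            nlinarith [abs_nonneg t, abs_nonneg (Real.sin (t*w)), abs_nonneg (Real.cos (t*w))]
    · have h1 : Tendsto (fun w : ℝ => -p * w) atTop atBot :=
        (tendsto_const_mul_atBot_of_neg (by linarith)).2 tendsto_id
      have h2 : Tendsto (fun w : ℝ => Real.exp (-p * w)) atTop (𝓝 0) :=
        Real.tendsto_exp_atBot.comp h1
      have := (h2.mul_const (p + |t|)).div_const (p ^ 2 + t ^ 2)
      simpa using this
  have h := integral_Ioi_of_hasDerivAt_of_tendsto' hderiv hint htend
  rw [h]
  simp [Real.exp_zero]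
  field_simp

private lemma aux_arctan (p q : ℝ) (hp : 0 < p) :
    ∫ t in (0:ℝ)..q, p / (p ^ 2 + t ^ 2) = Real.arctan (q / p) := by
  have hder : ∀ t ∈ uIcc (0:ℝ) q, HasDerivAt (fun t => Real.arctan (t / p))
      (p / (p ^ 2 + t ^ 2)) t := by
    intro t _
    have h := (Real.hasDerivAt_arctan (t / p)).comp t ((hasDerivAt_id t).div_const p)
    refine HasDerivAt.congr_deriv h ?_
    have h1 : (0:ℝ) < p ^ 2 + t ^ 2 := by positivity
    field_simp
  rw [intervalIntegral.integral_eq_sub_of_hasDerivAt hder ?_]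
  · simp
  · apply Continuous.intervalIntegrable
    have h1 : ∀ t : ℝ, p ^ 2 + t ^ 2 ≠ 0 := fun t => by positivity
    exact continuous_const.div (by continuity) h1


private lemma aux_exp_sin_div_pos (p q : ℝ) (hp : 0 < p) (hq : 0 < q) :
    ∫ w in Ioi (0:ℝ), Real.exp (-p * w) * Real.sin (q * w) / w = Real.arctan (q / p) := by
  -- step 1 : pointwise identity on Ioi 0
  have hpt : ∀ w ∈ Ioi (0:ℝ),
      Real.exp (-p * w) * Real.sin (q * w) / w
        = ∫ t in Ioc (0:ℝ) q, Real.exp (-p * w) * Real.cos (t * w) := by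
    intro w hw
    have hw0 : (w:ℝ) ≠ 0 := ne_of_gt hw
    have hcos : ∫ t in (0:ℝ)..q, Real.cos (t * w) = Real.sin (q * w) / w := by
      have hder : ∀ t ∈ uIcc (0:ℝ) q, HasDerivAt (fun t => Real.sin (t * w) / w)
          (Real.cos (t * w)) t := by
        intro t _
        have h := ((hasDerivAt_mul_const (c := w) (x := t)).sin).div_const w
        refine HasDerivAt.congr_deriv h ?_
        field_simp
      rw [intervalIntegral.integral_eq_sub_of_hasDerivAt hder
        (Continuous.intervalIntegrable (by continuity) _ _)]
      simp
    rw [← intervalIntegral.integral_of_le hq.le, intervalIntegral.integral_const_mul, hcos]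
    ring
  rw [setIntegral_congr_fun measurableSet_Ioi hpt]
  -- step 2 : Fubini
  have hswap : ∫ w in Ioi (0:ℝ), ∫ t in Ioc (0:ℝ) q, Real.exp (-p * w) * Real.cos (t * w)
      = ∫ t in Ioc (0:ℝ) q, ∫ w in Ioi (0:ℝ), Real.exp (-p * w) * Real.cos (t * w) := by
    apply integral_integral_swap
    apply Integrable.mono'
      (g := fun z : ℝ × ℝ => Real.exp (-p * z.1) * (1:ℝ))
    · exact Integrable.mul_prod (exp_neg_integrableOn_Ioi 0 hp)
        ((integrableOn_const_iff).2 (Or.inr measure_Ioc_lt_top))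
    · exact (Continuous.mul (by continuity) (by continuity)).aestronglyMeasurable
    · filter_upwards with z
      rw [Function.uncurry]
      simp only [norm_mul, Real.norm_eq_abs, Real.abs_exp, mul_one]
      calc Real.exp (-p * z.1) * |Real.cos (z.2 * z.1)| ≤ Real.exp (-p * z.1) * 1 := by
            gcongr; exact Real.abs_cos_le_one _
        _ = Real.exp (-p * z.1) := mul_one _
  rw [hswap]
  have : ∀ t ∈ Ioc (0:ℝ) q,
      (∫ w in Ioi (0:ℝ), Real.exp (-p * w) * Real.cos (t * w)) = p / (p ^ 2 + t ^ 2) :=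
    fun t _ => aux_exp_cos p t hp
  rw [setIntegral_congr_fun measurableSet_Ioc this, ← intervalIntegral.integral_of_le hq.le,
    aux_arctan p q hp]


private lemma aux_exp_sin_div (p q : ℝ) (hp : 0 < p) :
    ∫ w in Ioi (0:ℝ), Real.exp (-p * w) * Real.sin (q * w) / w = Real.arctan (q / p) := by
  rcases lt_trichotomy q 0 with hq | rfl | hq
  · have h := aux_exp_sin_div_pos p (-q) hp (by linarith)
    have heq : ∀ w : ℝ, Real.exp (-p * w) * Real.sin (q * w) / w
        = -(Real.exp (-p * w) * Real.sin (-q * w) / w) := by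
      intro w
      have : Real.sin (q * w) = -Real.sin (-q * w) := by
        rw [show (-q) * w = -(q * w) by ring, Real.sin_neg, neg_neg]
      rw [this]; ring
    simp_rw [heq]
    rw [integral_neg, h, neg_div, Real.arctan_neg, neg_neg]
  · simp
  · exact aux_exp_sin_div_pos p q hp hq

private lemma aux_RL (φ : ℝ → ℝ) (hφ : Integrable φ) :
    Tendsto (fun s : ℝ => ∫ v : ℝ, φ v * Real.sin (s * v)) (cocompact ℝ) (𝓝 0) := by
  set F : ℝ → ℂ := fun v => (φ v : ℂ) with hF
  have hFi : Integrable F := hφ.ofReal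
  have h0 : Tendsto (fun w : ℝ => (𝓕 F w).im) (cocompact ℝ) (𝓝 0) := by
    have h := Real.zero_at_infty_fourier F
    have := (Complex.continuous_im.tendsto 0).comp h
    simpa [Function.comp_def] using this
  have hcomp : Tendsto (fun s : ℝ => s / (2 * π)) (cocompact ℝ) (cocompact ℝ) := by
    rw [cocompact_eq_atBot_atTop]
    refine Tendsto.sup_sup ?_ ?_
    · exact Tendsto.atBot_div_const (by positivity) tendsto_id
    · exact Tendsto.atTop_div_const (by positivity) tendsto_id
  have key : ∀ s : ℝ, (∫ v : ℝ, φ v * Real.sin (s * v)) = -((𝓕 F (s / (2 * π))).im) := by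
    intro s
    rw [Real.fourier_real_eq_integral_exp_smul]
    have hint : Integrable (fun v : ℝ =>
        Complex.exp (↑(-2 * π * v * (s / (2 * π))) * Complex.I) • F v) := by
      apply Integrable.mono' hφ.norm
      · apply AEStronglyMeasurable.smul (f := fun v : ℝ => Complex.exp (↑(-2 * π * v * (s / (2 * π))) * Complex.I)) ?_ hFi.aestronglyMeasurable
        apply Continuous.aestronglyMeasurable
        continuity
      · filter_upwards with v
        rw [norm_smul, Complex.norm_exp_ofReal_mul_I]
        simp [hF]
    have h2 := integral_im (𝕜 := ℂ) hint
    simp only [RCLike.im_to_complex] at h2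
    rw [← h2, ← integral_neg]
    congr 1
    ext v
    have harg : -2 * π * v * (s / (2 * π)) = -(s * v) := by
      field_simp
    rw [harg, smul_eq_mul, Complex.mul_im]
    simp only [hF, Complex.ofReal_im, Complex.ofReal_re, mul_zero,
      Complex.exp_ofReal_mul_I_im, Real.sin_neg]
    ring
  simp_rw [key]
  simpa using (h0.comp hcomp).neg


private lemma aux_inner (d θ R : ℝ) (hd : d ≠ 0) (hR : 0 ≤ R) :
    ∫ x in Ioc (0:ℝ) R,
        Real.exp (-(d * Real.cos θ) * x) * Real.sin (d * Real.sin θ * x - θ)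
      = -(Real.exp (-(d * Real.cos θ) * R) * Real.sin (d * Real.sin θ * R)) / d := by
  rw [← intervalIntegral.integral_of_le hR]
  have hder : ∀ x ∈ uIcc (0:ℝ) R, HasDerivAt
      (fun x => -(Real.exp (-(d * Real.cos θ) * x) * Real.sin (d * Real.sin θ * x)) / d)
      (Real.exp (-(d * Real.cos θ) * x) * Real.sin (d * Real.sin θ * x - θ)) x := by
    intro x _
    have h1 : HasDerivAt (fun x : ℝ => -(d * Real.cos θ) * x) (-(d * Real.cos θ)) x := by
      simpa using (hasDerivAt_id x).const_mul (-(d * Real.cos θ))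
    have hexp := h1.exp
    have h2 : HasDerivAt (fun x : ℝ => d * Real.sin θ * x) (d * Real.sin θ) x := by
      simpa using (hasDerivAt_id x).const_mul (d * Real.sin θ)
    have hsin := h2.sin
    have h := ((hexp.mul hsin).neg).div_const d
    refine HasDerivAt.congr_deriv h ?_
    rw [Real.sin_sub]
    field_simp
    ring
  rw [intervalIntegral.integral_eq_sub_of_hasDerivAt hder
    (Continuous.intervalIntegrable (by continuity) _ _)]
  simp

set_option maxHeartbeats 2000000 in
theorem airy_type_integral_of_y_minus
    (n : ℕ) (hn : 2 ≤ n) (c : ℝ) (hc : c ≠ 0)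
    (hcase : Odd n ∨ (Even n ∧ c < 0))
    (k : ℕ) (hk1 : 1 ≤ k) (hk2 : k ≤ n / 2)
    (hkc : 0 ≤ c * Real.cos (2 * k * π / n))
    (y : ℝ → ℝ)
    (hy : ∀ x : ℝ, y x =
      -∫ w in Ioi (0 : ℝ),
        Real.exp (-(-c) ^ (n - 1) * w ^ n / n - c * w * x * Real.cos (2 * k * π / n)) *
          Real.sin (c * w * x * Real.sin (2 * k * π / n) - 2 * k * π / n)) :
    Tendsto (fun R : ℝ => ∫ x in Ioc (0 : ℝ) R, y x) atTop
      (𝓝 (if c < 0 then ((n : ℝ) - 2 * k) * π / (-(n : ℝ) * c)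
        else 2 * k * π / ((n : ℝ) * c))) := by
  have hπ := Real.pi_pos
  have hn0 : (0:ℝ) < n := by positivity
  have hk0 : (0:ℝ) < k := by exact_mod_cast hk1
  set θ : ℝ := 2 * k * π / n with hθ_def
  set α : ℝ := (-c) ^ (n - 1) with hα_def
  have hα : 0 < α := by
    rcases hcase with hodd | ⟨heven, hneg⟩
    · have he : Even (n - 1) := Nat.Odd.sub_odd hodd odd_one
      exact he.pow_pos (by simpa using hc)
    · exact pow_pos (by linarith) _
  have hθpos : 0 < θ := by rw [hθ_def]; positivity
  have h2k : (2 * k : ℝ) ≤ n := by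
    have := (Nat.le_div_iff_mul_le two_pos).1 hk2
    exact_mod_cast by linarith [this]
  have hθle : θ ≤ π := by
    rw [hθ_def, div_le_iff₀ hn0]
    nlinarith
  have hsinθ : 0 ≤ Real.sin θ := Real.sin_nonneg_of_nonneg_of_le_pi hθpos.le hθle
  set a : ℝ := c * Real.cos θ with ha_def
  set b : ℝ := c * Real.sin θ with hb_def
  have ha : 0 ≤ a := hkc
  -- integrability of g
  set g : ℝ → ℝ := fun w => Real.exp (-α * w ^ n / n) with hg_def
  have hg_cont : Continuous g := by
    apply Real.continuous_exp.comp
    continuity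
  have hg_pos : ∀ w, 0 < g w := fun w => Real.exp_pos _
  have hg_le_one : ∀ w, 0 ≤ w → g w ≤ 1 := by
    intro w hw
    rw [hg_def]
    rw [Real.exp_le_one_iff]
    rw [div_nonpos_iff]
    right
    constructor
    · nlinarith [pow_nonneg hw n]
    · exact hn0.le
  have hg_int : IntegrableOn g (Ioi (0:ℝ)) := by
    have h := integrableOn_rpow_mul_exp_neg_mul_rpow (p := (n:ℝ)) (s := 0) (b := α / n)
      (by norm_num) (by exact_mod_cast (by omega : 1 ≤ n)) (by positivity)
    apply h.congr_fun ?_ measurableSet_Ioi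
    intro x hx
    simp only [Real.rpow_zero, one_mul, Real.rpow_natCast, hg_def]
    congr 1
    ring
  -- integrability of φ
  set φ : ℝ → ℝ := fun w => (g w - Real.exp (-w)) / w with hφ_def
  have hφ_contOn : ∀ s : Set ℝ, (∀ x ∈ s, x ≠ 0) → ContinuousOn φ s := by
    intro s hs
    exact ContinuousOn.div ((hg_cont.sub (by continuity)).continuousOn) continuousOn_id hs
  have hφ_int : IntegrableOn φ (Ioi (0:ℝ)) := by
    have h1 : IntegrableOn φ (Ioc (0:ℝ) 1) := by
      apply Integrable.mono' (g := fun _ : ℝ => α / n + 1)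
        ((integrableOn_const_iff).2 (Or.inr measure_Ioc_lt_top))
        ((hφ_contOn _ (fun x hx => ne_of_gt hx.1)).aestronglyMeasurable measurableSet_Ioc)
      rw [ae_restrict_iff' measurableSet_Ioc]
      filter_upwards with w hw
      have hw0 : 0 < w := hw.1
      have hw1 : w ≤ 1 := hw.2
      have e1 : 1 - α * w ^ n / n ≤ g w := by
        have h := Real.add_one_le_exp (-α * w ^ n / n)
        simp only [hg_def]
        ring_nf at h ⊢
        linarith
      have e2 : g w ≤ 1 := hg_le_one w hw0.le
      have e3 : 1 - w ≤ Real.exp (-w) := by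
        have := Real.add_one_le_exp (-w); linarith
      have e4 : Real.exp (-w) ≤ 1 := by rw [Real.exp_le_one_iff]; linarith
      have e5 : w ^ n ≤ w := by
        calc w ^ n ≤ w ^ 1 := pow_le_pow_of_le_one hw0.le hw1 (by omega)
          _ = w := pow_one w
      have e6 : α * w ^ n / n ≤ α * w / n := by gcongr
      rw [Real.norm_eq_abs, hφ_def]
      simp only []
      rw [abs_div, abs_of_pos hw0, div_le_iff₀ hw0, abs_le]
      have e7 : (α / ↑n + 1) * w = α * w / ↑n + w := by ring
      have e8 : 0 ≤ α * w / ↑n := by positivity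
      constructor
      · linarith
      · linarith
    have h2 : IntegrableOn φ (Ioi (1:ℝ)) := by
      have hsum : IntegrableOn (fun w => g w + Real.exp (-w)) (Ioi (1:ℝ)) := by
        apply Integrable.add (hg_int.mono_set (Ioi_subset_Ioi zero_le_one))
        exact ((exp_neg_integrableOn_Ioi 1 one_pos).congr_fun
          (fun x _ => by simp only [neg_one_mul]) measurableSet_Ioi)
      apply Integrable.mono' hsum
        ((hφ_contOn _ (fun x hx => ne_of_gt (lt_trans one_pos hx))).aestronglyMeasurable
          measurableSet_Ioi)
      rw [ae_restrict_iff' measurableSet_Ioi]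
      filter_upwards with w hw
      have hw0 : 0 < w := lt_trans one_pos hw
      rw [Real.norm_eq_abs, hφ_def]
      simp only []
      rw [abs_div, abs_of_pos hw0]
      have h6 : |g w - Real.exp (-w)| ≤ g w + Real.exp (-w) := by
        rw [abs_le]
        constructor <;> linarith [(hg_pos w).le, (Real.exp_pos (-w)).le]
      calc |g w - Real.exp (-w)| / w ≤ (g w + Real.exp (-w)) / w := by gcongr
        _ ≤ g w + Real.exp (-w) := div_le_self (by positivity) (le_of_lt hw)
    rw [show Ioi (0:ℝ) = Ioc 0 1 ∪ Ioi 1 from (Ioc_union_Ioi_eq_Ioi zero_le_one).symm,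
      integrableOn_union]
    exact ⟨h1, h2⟩
  -- key identity
  have key : ∀ R : ℝ, 0 < R → (∫ x in Ioc (0:ℝ) R, y x)
      = ∫ w in Ioi (0:ℝ), g w * (Real.exp (-(a*R)*w) * Real.sin ((b*R)*w)) / (c*w) := by
    intro R hR
    set f : ℝ → ℝ → ℝ := fun x w =>
      Real.exp (-α * w ^ n / n - c * w * x * Real.cos θ) *
        Real.sin (c * w * x * Real.sin θ - θ) with hf_def
    have hfc : Continuous (Function.uncurry f) := by
      simp only [hf_def, Function.uncurry]
      fun_prop
    have hf_int : Integrable (Function.uncurry f)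
        ((volume.restrict (Ioc (0:ℝ) R)).prod (volume.restrict (Ioi (0:ℝ)))) := by
      apply Integrable.mono' (g := fun z : ℝ × ℝ => (1:ℝ) * g z.2)
      · exact Integrable.mul_prod ((integrableOn_const_iff (C := (1:ℝ))).2 (Or.inr measure_Ioc_lt_top)) hg_int
      · exact hfc.aestronglyMeasurable
      · have hmem : ∀ᵐ z : ℝ × ℝ ∂((volume.restrict (Ioc (0:ℝ) R)).prod
            (volume.restrict (Ioi (0:ℝ)))), z ∈ Ioc (0:ℝ) R ×ˢ Ioi (0:ℝ) := by
          rw [Measure.prod_restrict]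
          exact ae_restrict_mem (measurableSet_Ioc.prod measurableSet_Ioi)
        filter_upwards [hmem] with z hz
        obtain ⟨hx, hw⟩ := hz
        rw [one_mul, hf_def]
        simp only [Function.uncurry]
        rw [norm_mul, Real.norm_eq_abs, Real.norm_eq_abs, Real.abs_exp]
        have h1 : c * z.2 * z.1 * Real.cos θ = a * (z.2 * z.1) := by rw [ha_def]; ring
        have h2 : 0 ≤ c * z.2 * z.1 * Real.cos θ := by
          rw [h1]
          exact mul_nonneg ha (mul_nonneg (le_of_lt hw) (le_of_lt hx.1))
        have h3 : Real.exp (-α * z.2 ^ n / ↑n - c * z.2 * z.1 * Real.cos θ) ≤ g z.2 := by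
          rw [hg_def]
          simp only []
          apply Real.exp_le_exp.2
          linarith
        calc Real.exp (-α * z.2 ^ n / ↑n - c * z.2 * z.1 * Real.cos θ) *
              |Real.sin (c * z.2 * z.1 * Real.sin θ - θ)|
            ≤ Real.exp (-α * z.2 ^ n / ↑n - c * z.2 * z.1 * Real.cos θ) * 1 := by
              gcongr
              exact Real.abs_sin_le_one _
          _ = Real.exp (-α * z.2 ^ n / ↑n - c * z.2 * z.1 * Real.cos θ) := mul_one _
          _ ≤ g z.2 := h3
    have hswap := integral_integral_swap hf_int
    calc (∫ x in Ioc (0:ℝ) R, y x)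
        = ∫ x in Ioc (0:ℝ) R, -∫ w in Ioi (0:ℝ), f x w :=
          setIntegral_congr_fun measurableSet_Ioc (fun x _ => hy x)
      _ = -∫ x in Ioc (0:ℝ) R, ∫ w in Ioi (0:ℝ), f x w := by rw [integral_neg]
      _ = -∫ w in Ioi (0:ℝ), ∫ x in Ioc (0:ℝ) R, f x w := by rw [hswap]
      _ = ∫ w in Ioi (0:ℝ), g w * (Real.exp (-(a*R)*w) * Real.sin ((b*R)*w)) / (c*w) := ?_
    rw [← integral_neg]
    apply setIntegral_congr_fun measurableSet_Ioi
    intro w hw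
    have hw0 : (0:ℝ) < w := hw
    have hcw : c * w ≠ 0 := mul_ne_zero hc (ne_of_gt hw0)
    show -(∫ x in Ioc (0:ℝ) R, f x w)
        = g w * (Real.exp (-(a*R)*w) * Real.sin ((b*R)*w)) / (c*w)
    have hx_eq : ∀ x : ℝ, f x w = g w *
        (Real.exp (-((c*w) * Real.cos θ) * x) * Real.sin ((c*w) * Real.sin θ * x - θ)) := by
      intro x
      rw [hf_def]
      simp only [hg_def]
      rw [show -α * w ^ n / ↑n - c * w * x * Real.cos θ
          = (-α * w ^ n / ↑n) + (-((c*w) * Real.cos θ) * x) by ring, Real.exp_add]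
      rw [show c * w * x * Real.sin θ = (c*w) * Real.sin θ * x by ring]
      ring
    have hin : (∫ x in Ioc (0:ℝ) R, f x w)
        = g w * ∫ x in Ioc (0:ℝ) R,
            Real.exp (-((c*w) * Real.cos θ) * x) * Real.sin ((c*w) * Real.sin θ * x - θ) := by
      rw [← integral_const_mul]
      exact setIntegral_congr_fun measurableSet_Ioc (fun x _ => hx_eq x)
    rw [hin, aux_inner (c*w) θ R hcw hR.le]
    rw [show -(c * w * Real.cos θ) * R = -(a*R)*w by rw [ha_def]; ring,
        show c * w * Real.sin θ * R = (b*R)*w by rw [hb_def]; ring]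
    ring
  -- decomposition
  have hdec : ∀ R : ℝ, 0 < R →
      (∫ w in Ioi (0:ℝ), g w * (Real.exp (-(a*R)*w) * Real.sin ((b*R)*w)) / (c*w))
      = (1/c) * Real.arctan ((b*R)/(1+a*R))
        + (1/c) * ∫ w in Ioi (0:ℝ), φ w * (Real.exp (-(a*R)*w) * Real.sin ((b*R)*w)) := by
    intro R hR
    have hp : (0:ℝ) < 1 + a * R := by nlinarith
    have h1 : IntegrableOn (fun w => Real.exp (-(1+a*R) * w) * Real.sin ((b*R) * w) / w)
        (Ioi (0:ℝ)) := by
      apply Integrable.mono' (g := fun w => |b*R| * Real.exp (-w))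
      · exact ((exp_neg_integrableOn_Ioi 0 one_pos).congr_fun
          (fun x _ => by simp only [neg_one_mul]) measurableSet_Ioi).const_mul _
      · apply ContinuousOn.aestronglyMeasurable ?_ measurableSet_Ioi
        exact ContinuousOn.div (Continuous.continuousOn (by fun_prop)) continuousOn_id
          (fun x hx => ne_of_gt hx)
      · rw [ae_restrict_iff' measurableSet_Ioi]
        filter_upwards with w hw
        have hw0 : (0:ℝ) < w := hw
        rw [Real.norm_eq_abs, abs_div, abs_of_pos hw0, abs_mul, Real.abs_exp, div_le_iff₀ hw0]
        have hs : |Real.sin ((b*R)*w)| ≤ |b*R| * w := by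
          calc |Real.sin ((b*R)*w)| ≤ |(b*R)*w| := Real.abs_sin_le_abs
            _ = |b*R| * w := by rw [abs_mul, abs_of_pos hw0]
        have he : Real.exp (-(1+a*R)*w) ≤ Real.exp (-w) := by
          apply Real.exp_le_exp.2
          nlinarith [mul_nonneg (mul_nonneg ha hR.le) hw0.le]
        calc Real.exp (-(1+a*R)*w) * |Real.sin ((b*R)*w)|
            ≤ Real.exp (-w) * (|b*R| * w) :=
              mul_le_mul he hs (abs_nonneg _) (Real.exp_pos _).le
          _ = |b*R| * Real.exp (-w) * w := by ring
    have h2 : IntegrableOn (fun w => φ w * (Real.exp (-(a*R)*w) * Real.sin ((b*R)*w)))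
        (Ioi (0:ℝ)) := by
      apply Integrable.mono' hφ_int.norm
      · exact hφ_int.aestronglyMeasurable.mul
          ((Continuous.aestronglyMeasurable (by fun_prop)).restrict)
      · rw [ae_restrict_iff' measurableSet_Ioi]
        filter_upwards with w hw
        have hw0 : (0:ℝ) < w := hw
        rw [norm_mul, Real.norm_eq_abs (φ w), Real.norm_eq_abs, abs_mul, Real.abs_exp]
        have he : Real.exp (-(a*R)*w) ≤ 1 := by
          rw [Real.exp_le_one_iff]
          have : 0 ≤ a * R := mul_nonneg ha hR.le
          nlinarith
        calc |φ w| * (Real.exp (-(a*R)*w) * |Real.sin ((b*R)*w)|)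
            ≤ |φ w| * (1 * 1) := by
              gcongr <;> first
              | exact he
              | exact Real.abs_sin_le_one _
          _ = |φ w| := by ring
    have hsplit : ∀ w ∈ Ioi (0:ℝ),
        g w * (Real.exp (-(a*R)*w) * Real.sin ((b*R)*w)) / (c*w)
          = (1/c) * (Real.exp (-(1+a*R) * w) * Real.sin ((b*R) * w) / w)
            + (1/c) * (φ w * (Real.exp (-(a*R)*w) * Real.sin ((b*R)*w))) := by
      intro w hw
      have hw0 : (0:ℝ) < w := hw
      have hexp : Real.exp (-(1+a*R)*w) = Real.exp (-w) * Real.exp (-(a*R)*w) := by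
        rw [← Real.exp_add]
        congr 1
        ring
      rw [hφ_def]
      simp only []
      rw [hexp]
      field_simp
      ring
    rw [setIntegral_congr_fun measurableSet_Ioi hsplit,
      integral_add (h1.const_mul _) (h2.const_mul _), integral_const_mul, integral_const_mul,
      aux_exp_sin_div (1+a*R) (b*R) hp]
  -- limit of the remainder term
  have hT2 : Tendsto (fun R : ℝ =>
      ∫ w in Ioi (0:ℝ), φ w * (Real.exp (-(a*R)*w) * Real.sin ((b*R)*w))) atTop (𝓝 0) := by
    rcases eq_or_lt_of_le ha with ha0 | hapos
    · -- a = 0 : Riemann-Lebesgue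
      have haz : a = 0 := ha0.symm
      have hcos0 : Real.cos θ = 0 := by
        rcases mul_eq_zero.1 (ha_def.symm.trans haz) with h | h
        · exact absurd h hc
        · exact h
      have hsin1 : Real.sin θ = 1 := by
        have hpyt := Real.sin_sq_add_cos_sq θ
        rw [hcos0] at hpyt
        nlinarith
      have hbc : b = c := by rw [hb_def, hsin1, mul_one]
      have hb0 : b ≠ 0 := hbc ▸ hc
      have hΦ : Integrable (Set.indicator (Ioi (0:ℝ)) φ) :=
        (integrable_indicator_iff measurableSet_Ioi).2 hφ_int
      have hco : Tendsto (fun R : ℝ => b * R) atTop (cocompact ℝ) := by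
        rcases hb0.lt_or_gt with hbneg | hbpos
        · exact (((tendsto_const_mul_atBot_of_neg hbneg).2 tendsto_id).mono_right
            _root_.atBot_le_cocompact)
        · exact (((tendsto_const_mul_atTop_of_pos hbpos).2 tendsto_id).mono_right
            _root_.atTop_le_cocompact)
      have hRL := (aux_RL _ hΦ).comp hco
      have heq : ∀ R : ℝ, (∫ w in Ioi (0:ℝ), φ w * (Real.exp (-(a*R)*w) * Real.sin ((b*R)*w)))
          = ∫ v : ℝ, Set.indicator (Ioi (0:ℝ)) φ v * Real.sin (b * R * v) := by
        intro R
        simp only [haz, zero_mul, neg_zero, Real.exp_zero, one_mul]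
        rw [← integral_indicator measurableSet_Ioi]
        congr 1
        funext v
        by_cases hv : v ∈ Ioi (0:ℝ)
        · rw [Set.indicator_of_mem hv, Set.indicator_of_mem hv]
        · rw [Set.indicator_of_notMem hv, Set.indicator_of_notMem hv, zero_mul]
      exact Tendsto.congr (fun R => (heq R).symm) hRL
    · -- 0 < a : dominated convergence
      have h := tendsto_integral_filter_of_dominated_convergence (μ := volume.restrict (Ioi 0))
        (F := fun R (w : ℝ) => φ w * (Real.exp (-(a*R)*w) * Real.sin ((b*R)*w)))
        (f := fun _ => (0:ℝ)) (l := atTop) (bound := fun w => |φ w|)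
        ?_ ?_ ?_ ?_
      · simpa using h
      · filter_upwards with R
        exact hφ_int.aestronglyMeasurable.mul
          ((Continuous.aestronglyMeasurable (by fun_prop)).restrict)
      · filter_upwards [eventually_ge_atTop (0:ℝ)] with R hR
        rw [ae_restrict_iff' measurableSet_Ioi]
        filter_upwards with w hw
        have hw0 : (0:ℝ) < w := hw
        rw [norm_mul, Real.norm_eq_abs (φ w), Real.norm_eq_abs, abs_mul, Real.abs_exp]
        have he : Real.exp (-(a*R)*w) ≤ 1 := by
          rw [Real.exp_le_one_iff]
          have : 0 ≤ a * R := mul_nonneg ha hR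
          nlinarith
        calc |φ w| * (Real.exp (-(a*R)*w) * |Real.sin ((b*R)*w)|)
            ≤ |φ w| * (1 * 1) := by
              gcongr <;> first
              | exact he
              | exact Real.abs_sin_le_one _
          _ = |φ w| := by ring
      · exact hφ_int.abs
      · rw [ae_restrict_iff' measurableSet_Ioi]
        filter_upwards with w hw
        have hw0 : (0:ℝ) < w := hw
        apply squeeze_zero_norm (a := fun R : ℝ => |φ w| * Real.exp (-(a*w)*R))
        · intro R
          rw [norm_mul, Real.norm_eq_abs (φ w), Real.norm_eq_abs, abs_mul, Real.abs_exp]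
          calc |φ w| * (Real.exp (-(a*R)*w) * |Real.sin ((b*R)*w)|)
              ≤ |φ w| * (Real.exp (-(a*R)*w) * 1) := by
                gcongr
                exact Real.abs_sin_le_one _
            _ = |φ w| * Real.exp (-(a*w)*R) := by
                rw [mul_one]
                congr 1
                congr 1
                ring
        · have h1 : Tendsto (fun R : ℝ => -(a*w)*R) atTop atBot :=
            (tendsto_const_mul_atBot_of_neg (by nlinarith)).2 tendsto_id
          have h2 := (Real.tendsto_exp_atBot.comp h1).const_mul (|φ w|)
          simpa using h2
  -- limit of the arctan term
  have hT1 : Tendsto (fun R : ℝ => (1/c) * Real.arctan ((b*R)/(1+a*R))) atTop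
      (𝓝 (if c < 0 then ((n : ℝ) - 2 * k) * π / (-(n : ℝ) * c)
        else 2 * k * π / ((n : ℝ) * c))) := by
    have hkne : (k:ℝ) ≠ 0 := ne_of_gt hk0
    have hnne : (n:ℝ) ≠ 0 := ne_of_gt hn0
    rcases eq_or_lt_of_le ha with ha0 | hapos
    · -- a = 0, so θ = π/2 and b = c
      have haz : a = 0 := ha0.symm
      have hcos0 : Real.cos θ = 0 := by
        rcases mul_eq_zero.1 (ha_def.symm.trans haz) with h | h
        · exact absurd h hc
        · exact h
      have hθπ2 : θ = π / 2 := by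
        obtain ⟨m, hm⟩ := Real.cos_eq_zero_iff.1 hcos0
        have h1 : (0:ℝ) < 2*(m:ℝ)+1 := by nlinarith [hθpos, hπ, hm]
        have h2 : 2*(m:ℝ)+1 ≤ 2 := by nlinarith [hθle, hπ, hm]
        have h1' : (0:ℤ) < 2*m+1 := by exact_mod_cast h1
        have h2' : (2*m+1 : ℤ) ≤ 2 := by exact_mod_cast h2
        have hm0 : m = 0 := by omega
        rw [hm, hm0]
        push_cast
        ring
      have hsin1 : Real.sin θ = 1 := by rw [hθπ2, Real.sin_pi_div_two]
      have hbc : b = c := by rw [hb_def, hsin1, mul_one]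
      have hkn : 2*(k:ℝ)*π/(n:ℝ) = π/2 := by rw [← hθ_def]; exact hθπ2
      have h4 : (n:ℝ) = 4*k := by
        field_simp at hkn
        nlinarith [hπ]
      have hsimp : ∀ R : ℝ, (b*R)/(1+a*R) = c * R := by
        intro R
        rw [haz, hbc]
        simp
      simp only [hsimp]
      rcases hc.lt_or_gt with hcneg | hcpos
      · rw [if_pos hcneg]
        have hcR : Tendsto (fun R : ℝ => c * R) atTop atBot :=
          (tendsto_const_mul_atBot_of_neg hcneg).2 tendsto_id
        have h2 := ((tendsto_nhds_of_tendsto_nhdsWithin Real.tendsto_arctan_atBot).comp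
          hcR).const_mul (1/c)
        have hval : ((n:ℝ) - 2*k)*π/(-(n:ℝ)*c) = (1/c) * -(π/2) := by
          rw [h4]
          field_simp
          ring
        rw [hval]
        exact h2
      · rw [if_neg (not_lt.2 hcpos.le)]
        have hcR : Tendsto (fun R : ℝ => c * R) atTop atTop :=
          (tendsto_const_mul_atTop_of_pos hcpos).2 tendsto_id
        have h2 := ((tendsto_nhds_of_tendsto_nhdsWithin Real.tendsto_arctan_atTop).comp
          hcR).const_mul (1/c)
        have hval : 2*(k:ℝ)*π/((n:ℝ)*c) = (1/c) * (π/2) := by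
          rw [h4]
          field_simp
          ring
        rw [hval]
        exact h2
    · -- 0 < a
      have hcos_ne : Real.cos θ ≠ 0 := by
        intro h
        rw [ha_def, h, mul_zero] at hapos
        exact lt_irrefl 0 hapos
      have hba : b / a = Real.tan θ := by
        rw [ha_def, hb_def, Real.tan_eq_sin_div_cos, mul_div_mul_left _ _ hc]
      have harg : Tendsto (fun R : ℝ => (b*R)/(1+a*R)) atTop (𝓝 (b/a)) := by
        have h1 : ∀ᶠ R in atTop, b/(1/R+a) = (b*R)/(1+a*R) := by
          filter_upwards [eventually_gt_atTop (0:ℝ)] with R hR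
          have hd1 : (0:ℝ) < 1 + a * R := by nlinarith
          have hd2 : (0:ℝ) < 1/R + a := by
            have := one_div_pos.2 hR
            linarith
          rw [div_eq_div_iff (ne_of_gt hd2) (ne_of_gt hd1)]
          field_simp
        have h2 : Tendsto (fun R : ℝ => b/(1/R+a)) atTop (𝓝 (b/(0+a))) := by
          apply tendsto_const_nhds.div
          · simp_rw [one_div]
            exact tendsto_inv_atTop_zero.add tendsto_const_nhds
          · rw [zero_add]
            exact ne_of_gt hapos
        rw [zero_add] at h2
        exact h2.congr' h1
      have harctan := (Real.continuous_arctan.tendsto _).comp harg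
      have h2 := harctan.const_mul (1/c)
      rcases hc.lt_or_gt with hcneg | hcpos
      · rw [if_pos hcneg]
        have hcosneg : Real.cos θ < 0 := by
          rcases hcos_ne.lt_or_gt with h | h
          · exact h
          · exfalso
            rw [ha_def] at hapos
            nlinarith
        have hθgt : π/2 < θ := by
          by_contra h
          push_neg at h
          have := Real.cos_nonneg_of_mem_Icc ⟨by linarith, h⟩
          linarith
        have hval : Real.arctan (b/a) = θ - π := by
          rw [hba, ← Real.tan_sub_pi, Real.arctan_tan]
          · linarith
          · linarith
        have hval2 : (1/c) * Real.arctan (b/a) = ((n:ℝ)-2*k)*π/(-(n:ℝ)*c) := by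
          rw [hval, hθ_def]
          field_simp
          ring
        rw [← hval2]
        exact h2
      · rw [if_neg (not_lt.2 hcpos.le)]
        have hcospos : 0 < Real.cos θ := by
          rcases hcos_ne.lt_or_gt with h | h
          · exfalso
            rw [ha_def] at hapos
            nlinarith
          · exact h
        have hθlt : θ < π/2 := by
          by_contra h
          push_neg at h
          have := Real.cos_nonpos_of_pi_div_two_le_of_le h (by linarith)
          linarith
        have hval : Real.arctan (b/a) = θ := by
          rw [hba]
          exact Real.arctan_tan (by linarith) hθlt
        have hval2 : (1/c) * Real.arctan (b/a) = 2*(k:ℝ)*π/((n:ℝ)*c) := by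
          rw [hval, hθ_def]
          field_simp
        rw [← hval2]
        exact h2
  have hsum := hT1.add (hT2.const_mul (1/c))
  rw [mul_zero, add_zero] at hsum
  apply hsum.congr'
  filter_upwards [eventually_gt_atTop (0:ℝ)] with R hR
  rw [key R hR, hdec R hR]
end

section
/- Let n ≥ 2 be an integer and c a nonzero real number, with n odd or (n even and c < 0), and let k be a natural number with 1 ≤ k ≤ ⌊n/2⌋. Then the function g : ℂ → ℂ defined by g(x) = ∫₀^∞ e^{-(-c)^{n-1} w^n/n - c w x a_k} cos(c w x b_k - 2kπ/n) dw satisfies the Scorer-type equation g^{(n-1)}(x) + c·x·g(x) = 1 for every x ∈ ℂ. -/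
open MeasureTheory Real Set Filter

lemma scorer_key_bound {n : ℕ} (hn : 2 ≤ n) {A : ℝ} (hA : 0 < A) (m : ℕ) (B : ℝ) :
    ∀ᶠ w in atTop, w ^ m * Real.exp (-A * w ^ n / n + B * w) ≤ Real.exp (-w) := by
  filter_upwards [eventually_ge_atTop (1 : ℝ),
    eventually_ge_atTop (n * (B + m + 1) / A)] with w hw1 hw2
  have hw0 : (0 : ℝ) ≤ w := le_trans zero_le_one hw1
  have hn0 : (0 : ℝ) < n := by positivity
  have h1 : w ^ m ≤ Real.exp (m * w) := by
    calc w ^ m ≤ (Real.exp w) ^ m :=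
          pow_le_pow_left₀ hw0 (le_trans (by linarith) (Real.add_one_le_exp w)) m
      _ = Real.exp (m * w) := by rw [← Real.exp_nat_mul]
  have h2 : w ^ 2 ≤ w ^ n := pow_le_pow_right₀ hw1 hn
  have h3 : (B + m + 1) * w ≤ A * w ^ n / n := by
    have : (B + m + 1) ≤ A * w / n := by
      rw [div_le_iff₀ hA] at hw2
      rw [le_div_iff₀ hn0]
      nlinarith
    calc (B + m + 1) * w ≤ (A * w / n) * w := by
          apply mul_le_mul_of_nonneg_right this hw0
      _ = A * w ^ 2 / n := by ring
      _ ≤ A * w ^ n / n := by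
          gcongr
  calc w ^ m * Real.exp (-A * w ^ n / n + B * w)
      ≤ Real.exp (m * w) * Real.exp (-A * w ^ n / n + B * w) := by
        apply mul_le_mul_of_nonneg_right h1 (Real.exp_pos _).le
    _ = Real.exp (m * w + (-A * w ^ n / n + B * w)) := by rw [← Real.exp_add]
    _ ≤ Real.exp (-w) := by
        apply Real.exp_le_exp.mpr
        have h4 : -A * w ^ n / n = -(A * w ^ n / n) := by ring
        rw [h4]
        linarith [h3]

lemma scorer_aux_integrable {n : ℕ} (hn : 2 ≤ n) {A : ℝ} (hA : 0 < A) (m : ℕ) (B : ℝ) :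
    IntegrableOn (fun w : ℝ => w ^ m * Real.exp (-A * w ^ n / n + B * w)) (Ioi 0) := by
  apply integrable_of_isBigO_exp_neg (one_pos) (by fun_prop)
  apply Asymptotics.IsBigO.of_bound 1
  filter_upwards [scorer_key_bound hn hA m B, eventually_ge_atTop (0 : ℝ)] with w h hw0
  rw [one_mul, Real.norm_eq_abs, Real.norm_eq_abs, abs_of_nonneg (by positivity),
    abs_of_nonneg (Real.exp_pos _).le]
  simpa using h


noncomputable def scorerF (n : ℕ) (A c : ℝ) (m : ℕ) (y : ℂ) : ℂ :=
  ∫ w in Ioi (0 : ℝ),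
    ((-c : ℂ) * w) ^ m * Complex.exp (-(A : ℂ) * (w : ℂ) ^ n / n - (c : ℂ) * w * y)

lemma scorer_norm_eq (n : ℕ) (A c : ℝ) (m : ℕ) (y : ℂ) {w : ℝ} (hw : 0 < w) :
    ‖((-c : ℂ) * w) ^ m * Complex.exp (-(A : ℂ) * (w : ℂ) ^ n / n - (c : ℂ) * w * y)‖
      = |c| ^ m * (w ^ m * Real.exp (-A * w ^ n / n + (-c * y.re) * w)) := by
  have hre : (-(A : ℂ) * (w : ℂ) ^ n / n - (c : ℂ) * w * y).re
      = -A * w ^ n / n + (-c * y.re) * w := by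
    have : -(A : ℂ) * (w : ℂ) ^ n / n - (c : ℂ) * w * y
        = ((-A * w ^ n / n : ℝ) : ℂ) - ((c * w : ℝ) : ℂ) * y := by push_cast; ring
    rw [this, Complex.sub_re, Complex.ofReal_re, Complex.re_ofReal_mul]
    ring
  rw [norm_mul, norm_pow, norm_mul, Complex.norm_exp, hre, norm_neg, Complex.norm_real,
    Complex.norm_real, Real.norm_eq_abs, Real.norm_eq_abs, abs_of_pos hw, mul_pow, mul_assoc]

lemma scorer_integrand_integrable {n : ℕ} (hn : 2 ≤ n) {A : ℝ} (hA : 0 < A) (c : ℝ)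
    (m : ℕ) (y : ℂ) :
    IntegrableOn (fun w : ℝ =>
      ((-c : ℂ) * w) ^ m * Complex.exp (-(A : ℂ) * (w : ℂ) ^ n / n - (c : ℂ) * w * y))
      (Ioi 0) := by
  apply Integrable.mono' (g := fun w : ℝ =>
      |c| ^ m * (w ^ m * Real.exp (-A * w ^ n / n + (-c * y.re) * w)))
  · exact (scorer_aux_integrable hn hA m _).const_mul _
  · apply Continuous.aestronglyMeasurable; fun_prop
  · rw [ae_restrict_iff' measurableSet_Ioi]
    filter_upwards with w hw
    rw [scorer_norm_eq n A c m y hw]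
lemma scorer_ptwise_hasDerivAt (n : ℕ) (A c : ℝ) (m : ℕ) (w : ℝ) (y : ℂ) :
    HasDerivAt (fun y : ℂ =>
        ((-c : ℂ) * w) ^ m * Complex.exp (-(A : ℂ) * (w : ℂ) ^ n / n - (c : ℂ) * w * y))
      (((-c : ℂ) * w) ^ (m + 1) *
        Complex.exp (-(A : ℂ) * (w : ℂ) ^ n / n - (c : ℂ) * w * y)) y := by
  have h0 : HasDerivAt (fun y : ℂ => -(A : ℂ) * (w : ℂ) ^ n / n - (c : ℂ) * w * y)
      (-((c : ℂ) * w)) y := by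
    have := ((hasDerivAt_id y).const_mul ((c : ℂ) * w)).const_sub
      (-(A : ℂ) * (w : ℂ) ^ n / n)
    simpa [mul_one, mul_assoc] using this
  have h1 := (h0.cexp).const_mul (((-c : ℂ) * w) ^ m)
  exact h1.congr_deriv (by ring)

lemma scorer_hasDerivAt {n : ℕ} (hn : 2 ≤ n) {A : ℝ} (hA : 0 < A) (c : ℝ)
    (m : ℕ) (y₀ : ℂ) :
    HasDerivAt (scorerF n A c m) (scorerF n A c (m + 1) y₀) y₀ := by
  set B : ℝ := |c| * (|y₀.re| + 1) with hB
  have key := hasDerivAt_integral_of_dominated_loc_of_deriv_le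
    (μ := volume.restrict (Ioi (0 : ℝ)))
    (F := fun (y : ℂ) (w : ℝ) =>
      ((-c : ℂ) * w) ^ m * Complex.exp (-(A : ℂ) * (w : ℂ) ^ n / n - (c : ℂ) * w * y))
    (F' := fun (y : ℂ) (w : ℝ) =>
      ((-c : ℂ) * w) ^ (m + 1) * Complex.exp (-(A : ℂ) * (w : ℂ) ^ n / n - (c : ℂ) * w * y))
    (bound := fun w : ℝ => |c| ^ (m + 1) * (w ^ (m + 1) * Real.exp (-A * w ^ n / n + B * w)))
    (x₀ := y₀) (Metric.ball_mem_nhds y₀ one_pos) ?_ ?_ ?_ ?_ ?_ ?_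
  · exact key.2
  · filter_upwards with y
    exact (Continuous.aestronglyMeasurable (by fun_prop))
  · exact scorer_integrand_integrable hn hA c m y₀
  · exact (Continuous.aestronglyMeasurable (by fun_prop))
  · rw [ae_restrict_iff' measurableSet_Ioi]
    filter_upwards with w hw
    intro y hy
    rw [scorer_norm_eq n A c (m + 1) y hw]
    have hre : -c * y.re ≤ B := by
      have h1 : |y.re - y₀.re| ≤ ‖y - y₀‖ := by
        simpa using Complex.abs_re_le_norm (y - y₀)
      have h2 : ‖y - y₀‖ < 1 := by
        rwa [Metric.mem_ball, Complex.dist_eq] at hy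
      have h3 : |y.re| ≤ |y₀.re| + 1 := by
        have := abs_sub_abs_le_abs_sub y.re y₀.re
        linarith
      calc -c * y.re ≤ |(-c) * y.re| := le_abs_self _
        _ = |c| * |y.re| := by rw [abs_mul, abs_neg]
        _ ≤ |c| * (|y₀.re| + 1) := by
            apply mul_le_mul_of_nonneg_left h3 (abs_nonneg c)
    gcongr
    all_goals first
      | exact pow_nonneg hw.le _
      | exact hw.le
      | linarith [mul_le_mul_of_nonneg_right hre hw.le]
  · exact (scorer_aux_integrable hn hA (m + 1) B).const_mul _
  · rw [ae_restrict_iff' measurableSet_Ioi]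
    filter_upwards with w _
    intro y _
    exact scorer_ptwise_hasDerivAt n A c m w y

lemma scorer_iteratedDeriv {n : ℕ} (hn : 2 ≤ n) {A : ℝ} (hA : 0 < A) (c : ℝ) (j : ℕ) :
    iteratedDeriv j (scorerF n A c 0) = scorerF n A c j := by
  induction j with
  | zero => simp [iteratedDeriv_zero]
  | succ j ih =>
    rw [iteratedDeriv_succ, ih]
    funext y
    exact (scorer_hasDerivAt hn hA c j y).deriv

lemma scorer_contDiff {n : ℕ} (hn : 2 ≤ n) {A : ℝ} (hA : 0 < A) (c : ℝ) (m : ℕ)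
    (j : ℕ) : ContDiff ℂ j (scorerF n A c m) := by
  have : Differentiable ℂ (scorerF n A c m) :=
    fun y => (scorer_hasDerivAt hn hA c m y).differentiableAt
  exact this.contDiff
lemma scorer_re_eq (n : ℕ) (A c : ℝ) (w : ℝ) (y : ℂ) :
    (-(A : ℂ) * (w : ℂ) ^ n / n - (c : ℂ) * w * y).re
      = -A * w ^ n / n + (-c * y.re) * w := by
  have : -(A : ℂ) * (w : ℂ) ^ n / n - (c : ℂ) * w * y
      = ((-A * w ^ n / n : ℝ) : ℂ) - ((c * w : ℝ) : ℂ) * y := by push_cast; ring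
  rw [this, Complex.sub_re, Complex.ofReal_re, Complex.re_ofReal_mul]
  ring

lemma scorer_tendsto {n : ℕ} (hn : 2 ≤ n) {A : ℝ} (hA : 0 < A) (c : ℝ) (y : ℂ) :
    Tendsto (fun w : ℝ => Complex.exp (-(A : ℂ) * (w : ℂ) ^ n / n - (c : ℂ) * w * y))
      atTop (nhds 0) := by
  rw [tendsto_zero_iff_norm_tendsto_zero]
  have hnorm : ∀ w : ℝ, ‖Complex.exp (-(A : ℂ) * (w : ℂ) ^ n / n - (c : ℂ) * w * y)‖
      = Real.exp (-A * w ^ n / n + (-c * y.re) * w) := by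
    intro w
    rw [Complex.norm_exp, scorer_re_eq]
  simp_rw [hnorm]
  apply squeeze_zero' (Eventually.of_forall fun w => (Real.exp_pos _).le)
  · filter_upwards [scorer_key_bound hn hA 0 (-c * y.re)] with w h
    simpa only [pow_zero, one_mul] using h
  · exact Real.tendsto_exp_atBot.comp tendsto_neg_atTop_atBot

lemma scorer_ode {n : ℕ} (hn : 2 ≤ n) {A : ℝ} (hA : 0 < A) (c : ℝ)
    (hAc : ((-c : ℂ)) ^ (n - 1) = (A : ℂ)) (y : ℂ) :
    scorerF n A c (n - 1) y + (c : ℂ) * y * scorerF n A c 0 y = 1 := by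
  have hn0 : (n : ℂ) ≠ 0 := Nat.cast_ne_zero.mpr (by omega)
  set f : ℝ → ℂ := fun w =>
    Complex.exp (-(A : ℂ) * (w : ℂ) ^ n / n - (c : ℂ) * w * y) with hf
  set f' : ℝ → ℂ := fun w =>
    -(((-c : ℂ) * w) ^ (n - 1) *
      Complex.exp (-(A : ℂ) * (w : ℂ) ^ n / n - (c : ℂ) * w * y)) -
    ((c : ℂ) * y) * Complex.exp (-(A : ℂ) * (w : ℂ) ^ n / n - (c : ℂ) * w * y) with hf'
  have hderiv : ∀ w : ℝ, w ∈ Ici (0 : ℝ) → HasDerivAt f (f' w) w := by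
    intro w _
    have h1 : HasDerivAt (fun z : ℂ => -(A : ℂ) * z ^ n / n - (c : ℂ) * z * y)
        (-(A : ℂ) * (w : ℂ) ^ (n - 1) - (c : ℂ) * y) (w : ℂ) := by
      have hp := ((hasDerivAt_pow n (w : ℂ)).const_mul (-(A : ℂ) / n)).sub
        (((hasDerivAt_id (w : ℂ)).const_mul ((c : ℂ))).mul_const y)
      have hfun : (fun x : ℂ => -(A : ℂ) / n * x ^ n - (c : ℂ) * id x * y)
          = (fun z : ℂ => -(A : ℂ) * z ^ n / n - (c : ℂ) * z * y) := by
        funext z; simp only [id_eq]; ring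
      simp only [Pi.sub_def] at hp
      rw [hfun] at hp
      exact hp.congr_deriv (by field_simp)
    have h2 := h1.cexp
    have h3 := h2.comp_ofReal
    convert h3 using 1
    have hpow : ((-c : ℂ) * w) ^ (n - 1) = (A : ℂ) * (w : ℂ) ^ (n - 1) := by
      rw [mul_pow, hAc]
    simp only [hf', hpow]
    ring
  have hint0 : IntegrableOn f (Ioi 0) := by
    have := scorer_integrand_integrable hn hA c 0 y
    simpa [hf] using this
  have hintm : IntegrableOn (fun w : ℝ => ((-c : ℂ) * w) ^ (n - 1) *
      Complex.exp (-(A : ℂ) * (w : ℂ) ^ n / n - (c : ℂ) * w * y)) (Ioi 0) :=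
    scorer_integrand_integrable hn hA c (n - 1) y
  have hint' : IntegrableOn f' (Ioi 0) := hintm.neg.sub (hint0.const_mul _)
  have hFTC := integral_Ioi_of_hasDerivAt_of_tendsto' hderiv hint'
    (scorer_tendsto hn hA c y)
  have hf0 : f 0 = 1 := by
    simp [hf, zero_pow (by omega : n ≠ 0)]
  rw [hf0] at hFTC
  have hsplit : ∫ w in Ioi (0 : ℝ), f' w
      = -(scorerF n A c (n - 1) y) - ((c : ℂ) * y) * scorerF n A c 0 y := by
    have hintNeg : IntegrableOn (fun w : ℝ => -(((-c : ℂ) * w) ^ (n - 1) *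
        Complex.exp (-(A : ℂ) * (w : ℂ) ^ n / n - (c : ℂ) * w * y))) (Ioi 0) := hintm.neg
    have hintc : IntegrableOn (fun w : ℝ => ((c : ℂ) * y) *
        Complex.exp (-(A : ℂ) * (w : ℂ) ^ n / n - (c : ℂ) * w * y)) (Ioi 0) :=
      hint0.const_mul _
    rw [hf']
    beta_reduce
    rw [integral_sub hintNeg hintc, integral_neg, integral_const_mul]
    have h0 : scorerF n A c 0 y = ∫ w in Ioi (0 : ℝ),
        Complex.exp (-(A : ℂ) * (w : ℂ) ^ n / n - (c : ℂ) * w * y) := by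
      unfold scorerF; simp
    rw [h0]
    rfl
  rw [hsplit] at hFTC
  have : -(scorerF n A c (n - 1) y) - ((c : ℂ) * y) * scorerF n A c 0 y = -1 := by
    rw [hFTC]; ring
  linear_combination -this
lemma my_iteratedDeriv_add {m : ℕ} {f g : ℂ → ℂ} (hf : ContDiff ℂ m f)
    (hg : ContDiff ℂ m g) (x : ℂ) :
    iteratedDeriv m (fun y => f y + g y) x = iteratedDeriv m f x + iteratedDeriv m g x := by
  simp only [← iteratedDerivWithin_univ]
  exact iteratedDerivWithin_add (mem_univ x) uniqueDiffOn_univ hf.contDiffWithinAt hg.contDiffWithinAt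

lemma my_iteratedDeriv_const_mul {m : ℕ} (a : ℂ) {f : ℂ → ℂ} (hf : ContDiff ℂ m f) (x : ℂ) :
    iteratedDeriv m (fun y => a * f y) x = a * iteratedDeriv m f x := by
  simp only [← iteratedDerivWithin_univ]
  exact iteratedDerivWithin_const_mul (mem_univ x) uniqueDiffOn_univ a hf.contDiffWithinAt

lemma scorer_euler (A c : ℝ) (n : ℕ) (θ : ℝ) (w : ℝ) (x : ℂ) :
    Complex.exp (-(A : ℂ) * (w : ℂ) ^ n / n - (c : ℂ) * w * x * (Real.cos θ : ℝ)) *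
      Complex.cos ((c : ℂ) * w * x * (Real.sin θ : ℝ) - (θ : ℝ)) =
    2⁻¹ * (Complex.exp (-(θ : ℂ) * Complex.I) *
        Complex.exp (-(A : ℂ) * (w : ℂ) ^ n / n
          - (c : ℂ) * w * (Complex.exp (-(θ : ℂ) * Complex.I) * x)))
      + 2⁻¹ * (Complex.exp ((θ : ℂ) * Complex.I) *
        Complex.exp (-(A : ℂ) * (w : ℂ) ^ n / n
          - (c : ℂ) * w * (Complex.exp ((θ : ℂ) * Complex.I) * x))) := by
  have e1 : Complex.exp ((θ : ℂ) * Complex.I)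
      = (Real.cos θ : ℂ) + (Real.sin θ : ℂ) * Complex.I := by
    rw [Complex.exp_mul_I, Complex.ofReal_cos, Complex.ofReal_sin]
  have e2 : Complex.exp (-(θ : ℂ) * Complex.I)
      = (Real.cos θ : ℂ) - (Real.sin θ : ℂ) * Complex.I := by
    rw [Complex.exp_mul_I, Complex.cos_neg, Complex.sin_neg, Complex.ofReal_cos,
      Complex.ofReal_sin]
    ring
  have t1 : Complex.exp (-(A : ℂ) * (w : ℂ) ^ n / n - (c : ℂ) * w * x * (Real.cos θ : ℝ)) *
      Complex.exp (((c : ℂ) * w * x * (Real.sin θ : ℝ) - (θ : ℝ)) * Complex.I)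
      = Complex.exp (-(θ : ℂ) * Complex.I) *
        Complex.exp (-(A : ℂ) * (w : ℂ) ^ n / n
          - (c : ℂ) * w * (Complex.exp (-(θ : ℂ) * Complex.I) * x)) := by
    rw [← Complex.exp_add, ← Complex.exp_add, e2]
    congr 1
    ring
  have t2 : Complex.exp (-(A : ℂ) * (w : ℂ) ^ n / n - (c : ℂ) * w * x * (Real.cos θ : ℝ)) *
      Complex.exp (-((c : ℂ) * w * x * (Real.sin θ : ℝ) - (θ : ℝ)) * Complex.I)
      = Complex.exp ((θ : ℂ) * Complex.I) *
        Complex.exp (-(A : ℂ) * (w : ℂ) ^ n / n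
          - (c : ℂ) * w * (Complex.exp ((θ : ℂ) * Complex.I) * x)) := by
    rw [← Complex.exp_add, ← Complex.exp_add, e1]
    congr 1
    ring
  rw [Complex.cos]
  linear_combination 2⁻¹ * t1 + 2⁻¹ * t2
theorem scorer_type_equation_g
    (n : ℕ) (hn : 2 ≤ n) (c : ℝ) (hc : c ≠ 0)
    (hcase : Odd n ∨ (Even n ∧ c < 0))
    (k : ℕ) (hk1 : 1 ≤ k) (hk2 : k ≤ n / 2)
    (g : ℂ → ℂ)
    (hg : ∀ x : ℂ, g x =
      ∫ w in Ioi (0 : ℝ),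
        Complex.exp (-(-(c : ℂ)) ^ (n - 1) * (w : ℂ) ^ n / n
            - (c : ℂ) * w * x * (Real.cos (2 * k * π / n) : ℝ)) *
          Complex.cos ((c : ℂ) * w * x * (Real.sin (2 * k * π / n) : ℝ)
            - (2 * k * π / n : ℝ))) :
    ∀ x : ℂ, iteratedDeriv (n - 1) g x + (c : ℂ) * x * g x = 1 := by
  intro x
  set A : ℝ := (-c) ^ (n - 1) with hAdef
  have hA : 0 < A := by
    rcases hcase with hodd | ⟨heven, hclt⟩
    · have he : Even (n - 1) := Nat.Odd.sub_odd hodd odd_one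
      exact he.pow_pos (neg_ne_zero.mpr hc)
    · have ho : Odd (n - 1) := Nat.Even.sub_odd (by omega) heven odd_one
      exact pow_pos (by linarith) _
  have hAc : ((-c : ℂ)) ^ (n - 1) = ((A : ℝ) : ℂ) := by
    rw [hAdef]; push_cast; ring
  set ω : ℂ := Complex.exp (((2 * k * π / n : ℝ) : ℂ) * Complex.I) with hω
  set ω' : ℂ := Complex.exp (-((2 * k * π / n : ℝ) : ℂ) * Complex.I) with hω'
  have hnθ : (n : ℝ) * (2 * k * π / n) = 2 * k * π := by
    field_simp
  have hωn : ω ^ n = 1 := by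
    rw [hω, ← Complex.exp_nat_mul]
    have h2 : (n : ℂ) * (((2 * k * π / n : ℝ) : ℂ) * Complex.I)
        = (k : ℂ) * (2 * (π : ℂ) * Complex.I) := by
      calc (n : ℂ) * (((2 * k * π / n : ℝ) : ℂ) * Complex.I)
          = (((n : ℝ) * (2 * k * π / n) : ℝ) : ℂ) * Complex.I := by push_cast; ring
        _ = (k : ℂ) * (2 * (π : ℂ) * Complex.I) := by rw [hnθ]; push_cast; ring
    rw [h2]
    exact_mod_cast Complex.exp_int_mul_two_pi_mul_I (k : ℤ)
  have hω'n : ω' ^ n = 1 := by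
    rw [hω', ← Complex.exp_nat_mul]
    have h2 : (n : ℂ) * (-((2 * k * π / n : ℝ) : ℂ) * Complex.I)
        = ((-(k : ℤ) : ℤ) : ℂ) * (2 * (π : ℂ) * Complex.I) := by
      calc (n : ℂ) * (-((2 * k * π / n : ℝ) : ℂ) * Complex.I)
          = -((((n : ℝ) * (2 * k * π / n) : ℝ) : ℂ)) * Complex.I := by push_cast; ring
        _ = ((-(k : ℤ) : ℤ) : ℂ) * (2 * (π : ℂ) * Complex.I) := by rw [hnθ]; push_cast; ring
    rw [h2]
    exact Complex.exp_int_mul_two_pi_mul_I (-(k : ℤ))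
  have hs : ∀ y : ℂ, scorerF n A c 0 y = ∫ w in Ioi (0 : ℝ),
      Complex.exp (-(A : ℂ) * (w : ℂ) ^ n / n - (c : ℂ) * w * y) := by
    intro y; unfold scorerF; simp
  have hGeq : g = fun z : ℂ => 2⁻¹ * (ω' * scorerF n A c 0 (ω' * z))
      + 2⁻¹ * (ω * scorerF n A c 0 (ω * z)) := by
    funext z
    rw [hg z]
    have key : (fun w : ℝ =>
        Complex.exp (-(-(c : ℂ)) ^ (n - 1) * (w : ℂ) ^ n / n
            - (c : ℂ) * w * z * (Real.cos (2 * k * π / n) : ℝ)) *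
          Complex.cos ((c : ℂ) * w * z * (Real.sin (2 * k * π / n) : ℝ)
            - (2 * k * π / n : ℝ)))
        = fun w : ℝ =>
          2⁻¹ * (ω' * Complex.exp (-(A : ℂ) * (w : ℂ) ^ n / n - (c : ℂ) * w * (ω' * z)))
          + 2⁻¹ * (ω * Complex.exp (-(A : ℂ) * (w : ℂ) ^ n / n - (c : ℂ) * w * (ω * z))) := by
      funext w
      rw [hAc]
      exact scorer_euler A c n (2 * k * π / n) w z
    rw [key]
    have hi1 : IntegrableOn (fun w : ℝ =>
        Complex.exp (-(A : ℂ) * (w : ℂ) ^ n / n - (c : ℂ) * w * (ω' * z))) (Ioi 0) := by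
      simpa using scorer_integrand_integrable hn hA c 0 (ω' * z)
    have hi2 : IntegrableOn (fun w : ℝ =>
        Complex.exp (-(A : ℂ) * (w : ℂ) ^ n / n - (c : ℂ) * w * (ω * z))) (Ioi 0) := by
      simpa using scorer_integrand_integrable hn hA c 0 (ω * z)
    rw [integral_add ((hi1.const_mul ω').const_mul (2⁻¹ : ℂ))
      ((hi2.const_mul ω).const_mul (2⁻¹ : ℂ)), integral_const_mul, integral_const_mul,
      integral_const_mul, integral_const_mul, hs, hs]
  have hFc : ContDiff ℂ ((n - 1 : ℕ) : ℕ∞) (scorerF n A c 0) := scorer_contDiff hn hA c 0 (n - 1)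
  have hc1 : ContDiff ℂ ((n - 1 : ℕ) : ℕ∞) (fun z : ℂ => scorerF n A c 0 (ω' * z)) :=
    hFc.comp (contDiff_const.mul contDiff_id)
  have hc2 : ContDiff ℂ ((n - 1 : ℕ) : ℕ∞) (fun z : ℂ => scorerF n A c 0 (ω * z)) :=
    hFc.comp (contDiff_const.mul contDiff_id)
  have hd1 : iteratedDeriv (n - 1) (fun z : ℂ => scorerF n A c 0 (ω' * z)) x
      = ω' ^ (n - 1) * scorerF n A c (n - 1) (ω' * x) := by
    have := congrFun (iteratedDeriv_comp_const_mul hFc ω') x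
    rw [this, scorer_iteratedDeriv hn hA c (n - 1)]
  have hd2 : iteratedDeriv (n - 1) (fun z : ℂ => scorerF n A c 0 (ω * z)) x
      = ω ^ (n - 1) * scorerF n A c (n - 1) (ω * x) := by
    have := congrFun (iteratedDeriv_comp_const_mul hFc ω) x
    rw [this, scorer_iteratedDeriv hn hA c (n - 1)]
  rw [hGeq]
  rw [my_iteratedDeriv_add (contDiff_const.mul (contDiff_const.mul hc1))
    (contDiff_const.mul (contDiff_const.mul hc2)) x,
    my_iteratedDeriv_const_mul (2⁻¹ : ℂ) (contDiff_const.mul hc1) x,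
    my_iteratedDeriv_const_mul (2⁻¹ : ℂ) (contDiff_const.mul hc2) x,
    my_iteratedDeriv_const_mul ω' hc1 x, my_iteratedDeriv_const_mul ω hc2 x,
    hd1, hd2]
  have ode1 := scorer_ode hn hA c hAc (ω' * x)
  have ode2 := scorer_ode hn hA c hAc (ω * x)
  have e1 : ω' * ω' ^ (n - 1) = 1 := by
    rw [← pow_succ']
    have : n - 1 + 1 = n := by omega
    rw [this, hω'n]
  have e2 : ω * ω ^ (n - 1) = 1 := by
    rw [← pow_succ']
    have : n - 1 + 1 = n := by omega
    rw [this, hωn]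
  linear_combination 2⁻¹ * ode1 + 2⁻¹ * ode2
    + (2⁻¹ * scorerF n A c (n - 1) (ω' * x)) * e1
    + (2⁻¹ * scorerF n A c (n - 1) (ω * x)) * e2
end

section
/- Let n, m ≥ 2 be integers and c_n, c_m nonzero real numbers. Let f, g : ℝ → ℝ be Schwartz functions satisfying f^{(n-1)}(x) + c_n·x·f(x) = 0 and g^{(m-1)}(x) + c_m·x·g(x) = 0 for every x ∈ ℝ. Then their convolution h(x) = ∫_ℝ f(x - w) g(w) dw satisfies c_m·h^{(n-1)}(x) + c_n·h^{(m-1)}(x) + c_n·c_m·x·h(x) = 0 for every x ∈ ℝ. -/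
open MeasureTheory Metric

namespace AiryConv

/-- Iterated Schwartz derivative. -/
noncomputable def D (k : ℕ) (φ : SchwartzMap ℝ ℝ) : SchwartzMap ℝ ℝ :=
  (SchwartzMap.derivCLM ℝ ℝ)^[k] φ

lemma D_zero (φ : SchwartzMap ℝ ℝ) : D 0 φ = φ := rfl

lemma D_succ (k : ℕ) (φ : SchwartzMap ℝ ℝ) :
    D (k + 1) φ = SchwartzMap.derivCLM ℝ ℝ (D k φ) := Function.iterate_succ_apply' _ _ _

lemma D_coe (k : ℕ) (φ : SchwartzMap ℝ ℝ) : ⇑(D k φ) = iteratedDeriv k ⇑φ := by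
  induction k with
  | zero => simp [D_zero, iteratedDeriv_zero]
  | succ k ih =>
    funext x
    rw [iteratedDeriv_succ, D_succ]
    show SchwartzMap.derivCLM ℝ ℝ (D k φ) x = _
    rw [SchwartzMap.derivCLM_apply, ih]

lemma schwartz_bound (φ : SchwartzMap ℝ ℝ) : ∃ C, ∀ y : ℝ, ‖φ y‖ ≤ C := by
  obtain ⟨C, hC⟩ := φ.decay 0 0
  exact ⟨C, fun y => by simpa using hC.2 y⟩

lemma conv_integrable (φ ψ : SchwartzMap ℝ ℝ) (x : ℝ) :
    Integrable (fun w : ℝ => φ (x - w) * ψ w) := by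
  refine (ψ.integrable (μ := volume)).bdd_mul (c := (schwartz_bound φ).choose) ?_ ?_
  · exact (φ.continuous.comp (continuous_const.sub continuous_id)).aestronglyMeasurable
  · obtain ⟨C, hC⟩ := schwartz_bound φ
    exact Filter.Eventually.of_forall fun w => (schwartz_bound φ).choose_spec _

lemma conv_hasDerivAt (φ ψ : SchwartzMap ℝ ℝ) (x : ℝ) :
    HasDerivAt (fun x : ℝ => ∫ w : ℝ, φ (x - w) * ψ w)
      (∫ w : ℝ, (SchwartzMap.derivCLM ℝ ℝ φ) (x - w) * ψ w) x := by
  obtain ⟨C, hC⟩ := schwartz_bound (SchwartzMap.derivCLM ℝ ℝ φ)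
  have hCnn : 0 ≤ C := le_trans (norm_nonneg _) (hC 0)
  have key := hasDerivAt_integral_of_dominated_loc_of_deriv_le
    (F := fun x w => φ (x - w) * ψ w)
    (F' := fun x w => (SchwartzMap.derivCLM ℝ ℝ φ) (x - w) * ψ w)
    (bound := fun w => C * ‖ψ w‖) (x₀ := x) (s := Set.univ) Filter.univ_mem
    (Filter.Eventually.of_forall fun y => ((conv_integrable φ ψ y)).aestronglyMeasurable)
    (conv_integrable φ ψ x)
    ((conv_integrable (SchwartzMap.derivCLM ℝ ℝ φ) ψ x)).aestronglyMeasurable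
    ?_ ((ψ.integrable (μ := volume)).norm.const_mul C) ?_
  · exact key.2
  · refine Filter.Eventually.of_forall fun w y _ => ?_
    rw [norm_mul]
    exact mul_le_mul_of_nonneg_right (hC _) (norm_nonneg _)
  · refine Filter.Eventually.of_forall fun w y _ => ?_
    have h1 : HasDerivAt (fun y : ℝ => φ (y - w)) (deriv φ (y - w)) y := by
      have := (φ.differentiableAt.hasDerivAt (x := y - w)).comp y
        ((hasDerivAt_id y).sub_const w)
      rw [mul_one] at this
      exact this
    show HasDerivAt (fun x : ℝ => φ (x - w) * ψ w) ((SchwartzMap.derivCLM ℝ ℝ φ) (y - w) * ψ w) y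
    rw [SchwartzMap.derivCLM_apply]
    exact h1.mul_const (ψ w)

lemma conv_iteratedDeriv (φ ψ : SchwartzMap ℝ ℝ) (k : ℕ) (x : ℝ) :
    iteratedDeriv k (fun x : ℝ => ∫ w : ℝ, φ (x - w) * ψ w) x
      = ∫ w : ℝ, (D k φ) (x - w) * ψ w := by
  induction k generalizing x with
  | zero => simp [D_zero]
  | succ k ih =>
    rw [iteratedDeriv_succ, D_succ]
    have : iteratedDeriv k (fun x : ℝ => ∫ w : ℝ, φ (x - w) * ψ w)
        = fun x => ∫ w : ℝ, (D k φ) (x - w) * ψ w := funext ih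
    rw [this]
    exact (conv_hasDerivAt (D k φ) ψ x).deriv

end AiryConv

open AiryConv

theorem airy_type_convolution_ode
    (n m : ℕ) (hn : 2 ≤ n) (hm : 2 ≤ m)
    (cn cm : ℝ) (hcn : cn ≠ 0) (hcm : cm ≠ 0)
    (f g : SchwartzMap ℝ ℝ)
    (hf : ∀ x : ℝ, iteratedDeriv (n - 1) (f : ℝ → ℝ) x + cn * x * f x = 0)
    (hg : ∀ x : ℝ, iteratedDeriv (m - 1) (g : ℝ → ℝ) x + cm * x * g x = 0)
    (h : ℝ → ℝ) (hh : ∀ x : ℝ, h x = ∫ w : ℝ, f (x - w) * g w) :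
    ∀ x : ℝ,
      cm * iteratedDeriv (n - 1) h x + cn * iteratedDeriv (m - 1) h x
        + cn * cm * x * h x = 0 := by
  intro x
  -- two representations of h
  have hcomm : ∀ y : ℝ, (∫ w : ℝ, f (y - w) * g w) = ∫ w : ℝ, g (y - w) * f w := by
    intro y
    have := integral_sub_left_eq_self (fun w : ℝ => g (y - w) * f w) volume y
    simp only [sub_sub_cancel] at this
    rw [← this]
    congr 1; funext w; ring
  have h1 : h = fun y : ℝ => ∫ w : ℝ, f (y - w) * g w := funext hh
  have h2 : h = fun y : ℝ => ∫ w : ℝ, g (y - w) * f w := by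
    rw [h1]; funext y; exact hcomm y
  -- iterated derivatives
  have hA : iteratedDeriv (n - 1) h x = ∫ w : ℝ, (D (n - 1) f) (x - w) * g w := by
    rw [h1]; exact conv_iteratedDeriv f g (n - 1) x
  have hB : iteratedDeriv (m - 1) h x = ∫ w : ℝ, (D (m - 1) g) (x - w) * f w := by
    rw [h2]; exact conv_iteratedDeriv g f (m - 1) x
  -- substitution in the second integral
  have hBsub : (∫ w : ℝ, (D (m - 1) g) (x - w) * f w)
      = ∫ w : ℝ, (D (m - 1) g) w * f (x - w) := by
    have := integral_sub_left_eq_self (fun w : ℝ => (D (m - 1) g) w * f (x - w)) volume x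
    simp only [sub_sub_cancel] at this
    exact this
  -- rewrite using the ODEs
  have hfe : ∀ y : ℝ, (D (n - 1) f) y = -(cn * y * f y) := by
    intro y; rw [D_coe]; linarith [hf y]
  have hge : ∀ y : ℝ, (D (m - 1) g) y = -(cm * y * g y) := by
    intro y; rw [D_coe]; linarith [hg y]
  -- integrability of the pieces
  have int1 : Integrable (fun w : ℝ => (D (n - 1) f) (x - w) * g w) :=
    conv_integrable (D (n - 1) f) g x
  have int2 : Integrable (fun w : ℝ => (D (m - 1) g) w * f (x - w)) := by
    have := (conv_integrable f (D (m - 1) g) x)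
    exact this.congr (Filter.Eventually.of_forall fun w => by ring)
  have hx : h x = ∫ w : ℝ, f (x - w) * g w := hh x
  rw [hA, hB, hBsub]
  rw [← integral_const_mul cm, ← integral_const_mul cn,
    ← integral_add ((int1.const_mul cm)) ((int2.const_mul cn))]
  have keyint : (∫ w : ℝ, cm * ((D (n - 1) f) (x - w) * g w)
      + cn * ((D (m - 1) g) w * f (x - w)))
      = ∫ w : ℝ, -(cn * cm * x) * (f (x - w) * g w) := by
    congr 1; funext w
    rw [hfe (x - w), hge w]; ring
  rw [keyint, integral_const_mul, ← hx]
  ring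
end
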